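/- arXiv:2305.11563 — 10 statements merged into one kernel-verified Lean document; each statement's English description precedes it below -/
import Mathlib

section
/- Let R be a ceer with infinitely many equivalence classes. Then R is hyperdark (every infinite transversal of R is hyperimmune) if and only if the principal transversal T_R of R is hyperimmune. -/
/-- A relation on ℕ is c.e. -/
def CeRel (R : ℕ → ℕ → Prop) : Prop := REPred fun p : ℕ × ℕ => R p.1 p.2

/-- A ceer: a c.e. equivalence relation on ℕ. -/
def Ceer (R : ℕ → ℕ → Prop) : Prop := Equivalence R ∧ CeRel R

/-- Computable reducibility of equivalence relations on ℕ. -/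
def Reduces (R S : ℕ → ℕ → Prop) : Prop :=
  ∃ f : ℕ → ℕ, Computable f ∧ ∀ x y, R x y ↔ S (f x) (f y)

/-- A transversal: a set of pairwise inequivalent numbers. -/
def IsTransversal (R : ℕ → ℕ → Prop) (T : Set ℕ) : Prop :=
  ∀ x ∈ T, ∀ y ∈ T, x ≠ y → ¬ R x y

/-- The principal transversal: least elements of equivalence classes. -/
def principalTransversal (R : ℕ → ℕ → Prop) : Set ℕ := {x | ∀ y < x, ¬ R y x}

/-- R has infinitely many equivalence classes. -/
def InfiniteClasses (R : ℕ → ℕ → Prop) : Prop :=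
  {s : Set ℕ | ∃ x, s = {y | R x y}}.Infinite

/-- A set is hyperimmune iff it is infinite and no computable function majorizes
its principal function (Kuznecov–Medvedev–Uspenskii characterization). -/
def Hyperimmune (A : Set ℕ) : Prop :=
  A.Infinite ∧ ¬ ∃ g : ℕ → ℕ, Computable g ∧ ∀ n, Nat.nth (· ∈ A) n ≤ g n

/-- A ceer is hyperdark if it has infinitely many classes and
all its infinite transversals are hyperimmune. -/
def Hyperdark (R : ℕ → ℕ → Prop) : Prop :=
  Ceer R ∧ InfiniteClasses R ∧
    ∀ T : Set ℕ, IsTransversal R T → T.Infinite → Hyperimmune T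

section Aux

variable {R : ℕ → ℕ → Prop}

/-- The least representative of the class of `a`. -/
noncomputable def minRep (R : ℕ → ℕ → Prop) (a : ℕ) : ℕ := sInf {y | R y a}

lemma minRep_rel (hR : Equivalence R) (a : ℕ) : R (minRep R a) a :=
  Nat.sInf_mem (⟨a, hR.refl a⟩ : {y | R y a}.Nonempty)

lemma minRep_le (hR : Equivalence R) (a : ℕ) : minRep R a ≤ a :=
  Nat.sInf_le (hR.refl a)

lemma minRep_mem_principal (hR : Equivalence R) (a : ℕ) :
    minRep R a ∈ principalTransversal R := by
  intro y hy hRy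
  have : y ∈ {y | R y a} := hR.trans hRy (minRep_rel hR a)
  exact absurd (Nat.sInf_le this) (not_le.2 hy)

lemma principal_transversal (hR : Equivalence R) :
    IsTransversal R (principalTransversal R) := by
  intro x hx y hy hne hRxy
  rcases lt_or_gt_of_ne hne with h | h
  · exact hy x h hRxy
  · exact hx y h (hR.symm hRxy)

lemma principal_infinite (hR : Equivalence R) (hinf : InfiniteClasses R) :
    (principalTransversal R).Infinite := by
  have hmaps : Set.MapsTo sInf {s : Set ℕ | ∃ x, s = {y | R x y}}
      (principalTransversal R) := by
    rintro s ⟨x, rfl⟩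
    have hne : {y | R x y}.Nonempty := ⟨x, hR.refl x⟩
    have hmem : R x (sInf {y | R x y}) := Nat.sInf_mem hne
    intro y hy hRy
    have : y ∈ {y | R x y} := hR.trans hmem (hR.symm hRy)
    exact absurd (Nat.sInf_le this) (not_le.2 hy)
  have hinj : Set.InjOn sInf {s : Set ℕ | ∃ x, s = {y | R x y}} := by
    rintro s ⟨x, rfl⟩ t ⟨x', rfl⟩ h
    have h1 : R x (sInf {y | R x y}) := Nat.sInf_mem (⟨x, hR.refl x⟩ : _)
    have h2 : R x' (sInf {y | R x' y}) := Nat.sInf_mem (⟨x', hR.refl x'⟩ : _)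
    rw [h] at h1
    ext y
    exact ⟨fun hy => hR.trans h2 (hR.trans (hR.symm h1) hy),
      fun hy => hR.trans h1 (hR.trans (hR.symm h2) hy)⟩
  exact (hinf.image hinj).mono hmaps.image_subset

open Finset in
lemma count_le_count (hR : Equivalence R) {T : Set ℕ} (hT : IsTransversal R T)
    [DecidablePred (· ∈ T)] [DecidablePred (· ∈ principalTransversal R)] (x : ℕ) :
    Nat.count (· ∈ T) x ≤ Nat.count (· ∈ principalTransversal R) x := by
  rw [Nat.count_eq_card_filter_range, Nat.count_eq_card_filter_range]
  apply Finset.card_le_card_of_injOn (minRep R)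
  · intro a ha
    simp only [mem_coe, mem_filter, mem_range] at ha ⊢
    exact ⟨lt_of_le_of_lt (minRep_le hR a) ha.1, minRep_mem_principal hR a⟩
  · intro a ha b hb hab
    simp only [coe_filter, Set.mem_setOf_eq, mem_range] at ha hb
    by_contra hne
    have h1 : R (minRep R a) a := minRep_rel hR a
    have h2 : R (minRep R b) b := minRep_rel hR b
    rw [hab] at h1
    exact hT a ha.2 b hb.2 hne (hR.trans (hR.symm h1) h2)

lemma count_irrel (p : ℕ → Prop) (i1 i2 : DecidablePred p) (x : ℕ) :
    @Nat.count p i1 x = @Nat.count p i2 x := by congr!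

lemma nth_principal_le (hR : Equivalence R) {T : Set ℕ} (hT : IsTransversal R T)
    (hTinf : T.Infinite) (hPinf : (principalTransversal R).Infinite) (n : ℕ) :
    Nat.nth (· ∈ principalTransversal R) n ≤ Nat.nth (· ∈ T) n := by
  classical
  have h1 : Nat.count (· ∈ T) (Nat.nth (· ∈ T) n + 1) = n + 1 :=
    Nat.count_nth_succ_of_infinite (p := (· ∈ T)) hTinf n
  have h2 : n < Nat.count (· ∈ principalTransversal R) (Nat.nth (· ∈ T) n + 1) :=
    lt_of_lt_of_le (h1 ▸ Nat.lt_succ_self n) (count_le_count hR hT _)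
  have := (Nat.lt_nth_iff_count_lt hPinf).1
    (lt_of_lt_of_eq h2 (count_irrel _ _ _ _))
  exact Nat.lt_succ_iff.mp this

end Aux

/-- a ceer with infinitely many classes is hyperdark iff its
principal transversal is hyperimmune. -/
theorem hyperdark_iff_principal_hyperimmune (R : ℕ → ℕ → Prop)
    (hR : Ceer R) (hinf : InfiniteClasses R) :
    (∀ T : Set ℕ, IsTransversal R T → T.Infinite → Hyperimmune T) ↔
      Hyperimmune (principalTransversal R) := by
  constructor
  · intro h
    exact h _ (principal_transversal hR.1) (principal_infinite hR.1 hinf)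
  · rintro ⟨hPinf, hP⟩ T hT hTinf
    refine ⟨hTinf, ?_⟩
    rintro ⟨g, hg, hmaj⟩
    exact hP ⟨g, hg, fun n =>
      le_trans (nth_principal_le hR.1 hT hTinf hPinf n) (hmaj n)⟩
end

section
/- Hyperdarkness is downward closed under computable reducibility among infinite ceers: if R is a hyperdark ceer, E is a ceer with infinitely many equivalence classes, and E ≤_c R, then E is hyperdark. In particular, hyperdarkness is invariant under computable bi-reducibility of infinite ceers. -/
/-- The running maximum of `f` over `[0, n]`. -/
private def maxUpTo (f : ℕ → ℕ) : ℕ → ℕ :=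
  fun n => Nat.rec (motive := fun _ => ℕ) (f 0) (fun k ih => max ih (f (k + 1))) n

private lemma maxUpTo_computable {f : ℕ → ℕ} (hf : Computable f) :
    Computable (maxUpTo f) :=
  Computable.nat_rec Computable.id (Computable.const (f 0))
    (Primrec.nat_max.to_comp.comp
      (Computable.snd.comp Computable.snd)
      (hf.comp (Computable.succ.comp (Computable.fst.comp Computable.snd)))).to₂

private lemma le_maxUpTo (f : ℕ → ℕ) {m n : ℕ} (h : m ≤ n) : f m ≤ maxUpTo f n := by
  induction n with
  | zero => simp_all [maxUpTo]
  | succ k ih =>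
    rcases Nat.le_succ_iff.mp h with h' | h'
    · exact le_trans (ih h') (le_max_left _ _)
    · subst h'; exact le_max_right _ _

/-- hyperdarkness is downward closed under ≤_c among infinite
ceers. -/
theorem hyperdark_downward (R E : ℕ → ℕ → Prop)
    (hR : Hyperdark R) (hE : Ceer E) (hEinf : InfiniteClasses E)
    (hred : Reduces E R) : Hyperdark E := by
  classical
  obtain ⟨f, hfc, hf⟩ := hred
  refine ⟨hE, hEinf, ?_⟩
  intro T hT hTinf
  have hRrefl : ∀ x, R x x := hR.1.1.refl
  -- f is injective on T
  have hinj : Set.InjOn f T := by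
    intro x hx y hy hxy
    by_contra hne
    exact hT x hx y hy hne ((hf x y).mpr (hxy ▸ hRrefl (f x)))
  -- the image is an infinite transversal of R
  have hBtr : IsTransversal R (f '' T) := by
    rintro _ ⟨x, hx, rfl⟩ _ ⟨y, hy, rfl⟩ hne hRxy
    exact hT x hx y hy (fun h => hne (h ▸ rfl)) ((hf x y).mpr hRxy)
  have hBinf : (f '' T).Infinite := hTinf.image hinj
  have hBhyp := hR.2.2 (f '' T) hBtr hBinf
  refine ⟨hTinf, ?_⟩
  rintro ⟨g, hg, hmaj⟩
  -- build a computable majorant for the image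
  refine hBhyp.2 ⟨maxUpTo (fun k => maxUpTo f (g k)),
    maxUpTo_computable ((maxUpTo_computable hfc).comp hg), ?_⟩
  intro n
  set h : ℕ → ℕ := maxUpTo (fun k => maxUpTo f (g k)) with hh
  have hTset : (setOf (· ∈ T)).Infinite := hTinf
  have hBset : (setOf (· ∈ f '' T)).Infinite := hBinf
  -- the n+1 values f (nth T k), k ≤ n, are distinct members of f '' T below h n
  have key : n < Nat.count (· ∈ f '' T) (h n + 1) := by
    have hcount : Nat.count (· ∈ f '' T) (h n + 1) =
        ((Finset.range (h n + 1)).filter (· ∈ f '' T)).card :=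
      Nat.count_eq_card_filter_range _ _
    set s : Finset ℕ :=
      (Finset.range (n + 1)).image (fun k => f (Nat.nth (· ∈ T) k)) with hs
    have hnthmem : ∀ k, Nat.nth (· ∈ T) k ∈ T := fun k =>
      Nat.nth_mem_of_infinite hTset k
    have hcard : s.card = n + 1 := by
      rw [hs, Finset.card_image_of_injOn, Finset.card_range]
      intro a _ b _ hab
      have := hinj (hnthmem a) (hnthmem b) hab
      exact (Nat.nth_injective hTset) this
    have hsub : s ⊆ (Finset.range (h n + 1)).filter (· ∈ f '' T) := by
      intro x hx
      rw [hs, Finset.mem_image] at hx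
      obtain ⟨k, hk, rfl⟩ := hx
      rw [Finset.mem_range] at hk
      refine Finset.mem_filter.mpr ⟨Finset.mem_range.mpr ?_, ⟨_, hnthmem k, rfl⟩⟩
      have h1 : f (Nat.nth (· ∈ T) k) ≤ maxUpTo f (g k) :=
        le_maxUpTo f (hmaj k)
      have h2 : maxUpTo f (g k) ≤ h n :=
        le_maxUpTo (fun k => maxUpTo f (g k)) (Nat.lt_succ_iff.mp hk)
      exact Nat.lt_succ_of_le (le_trans h1 h2)
    have := Finset.card_le_card hsub
    omega
  have := Nat.nth_lt_of_lt_count key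
  omega
end

section
/- Let A be an infinite c.e. algebra of finite type (finitely many uniformly computable operations on ℕ modulo a ceer congruence =_A). If some finite nonempty subset X of the universe generates an infinite subalgebra, then =_A has an infinite transversal that is not hyperimmune; consequently =_A is not hyperdark. -/
/-- A c.e. algebra of finite type: universe ℕ, finitely many uniformly
computable operations (given on lists, with prescribed arities), and a ceer
congruence `R` (the word problem). -/
structure CEAlg where
  k : ℕ
  arity : Fin k → ℕ
  op : Fin k → List ℕ → ℕ
  R : ℕ → ℕ → Prop
  op_computable : ∀ i, Computable (op i)
  ceer : Ceer R
  congr : ∀ i (l l' : List ℕ), l.length = arity i →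
    List.Forall₂ R l l' → R (op i l) (op i l')

/-- One step of closing a set under the operations of the algebra. -/
def CEAlg.step (A : CEAlg) (S : Set ℕ) : Set ℕ :=
  S ∪ {y | ∃ i l, l.length = A.arity i ∧ (∀ x ∈ l, x ∈ S) ∧ y = A.op i l}

/-- The stages X_n of the subalgebra generated by X. -/
def CEAlg.gen (A : CEAlg) (X : Set ℕ) : ℕ → Set ℕ
  | 0 => X
  | n + 1 => A.step (A.gen X n)

/-- The universe of the subalgebra generated by X. -/
def CEAlg.closure (A : CEAlg) (X : Set ℕ) : Set ℕ := ⋃ n, A.gen X n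

/-! ### Auxiliary material -/

namespace AuxNH

theorem comp_list_map {α σ : Type} [Primcodable α] [Primcodable σ] {f : α → σ}
    (hf : Computable f) : Computable fun l : List α => l.map f := by
  have h : Computable fun l : List α =>
      Nat.rec (motive := fun _ => List σ) []
        (fun y IH => IH ++ ((l[y]?).map f).toList) l.length :=
    Computable.nat_rec Computable.list_length (Computable.const [])
      ((Computable.list_append.comp (Computable.snd.comp Computable.snd)
        (Primrec.optionToList.to_comp.comp
          (Computable.option_map
            (Computable.list_getElem?.comp Computable.fst (Computable.fst.comp Computable.snd))
            (hf.comp Computable.snd).to₂))).to₂)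
  refine h.of_eq fun l => ?_
  have key : ∀ n, n ≤ l.length →
      Nat.rec (motive := fun _ => List σ) []
        (fun y IH => IH ++ ((l[y]?).map f).toList) n = (l.take n).map f := by
    intro n hn
    induction n with
    | zero => simp
    | succ n ih =>
      rw [List.take_succ, List.map_append]
      simp only [ih (Nat.le_of_succ_le hn)]
      congr 1
      cases h : l[n]? <;> simp [h]
  rw [key l.length le_rfl, List.take_length]

def natListMax (l : List ℕ) : ℕ := l.foldr max 0

theorem natListMax_primrec : Primrec natListMax :=
  Primrec.list_foldr Primrec.id (Primrec.const 0)
    ((Primrec.nat_max.comp (Primrec.fst.comp Primrec.snd)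
      (Primrec.snd.comp Primrec.snd)).to₂)

theorem le_natListMax {x : ℕ} {l : List ℕ} (h : x ∈ l) : x ≤ natListMax l := by
  induction l with
  | nil => simp at h
  | cons a t ih =>
    rcases List.mem_cons.1 h with rfl | h
    · exact le_max_left _ _
    · exact (ih h).trans (le_max_right _ _)

def allLists : ℕ → ℕ → List (List ℕ)
  | 0, _ => [[]]
  | a + 1, m => (List.range (m + 1)).flatMap fun x => (allLists a m).map (x :: ·)

theorem allLists_primrec (a : ℕ) : Primrec (allLists a) := by
  induction a with
  | zero => exact (Primrec.const [[]]).of_eq fun m => rfl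
  | succ a ih =>
    exact (Primrec.list_flatMap (Primrec.list_range.comp Primrec.succ)
      ((Primrec.list_map (ih.comp Primrec.fst)
        ((Primrec.list_cons.comp (Primrec.snd.comp Primrec.fst) Primrec.snd).to₂)).to₂)).of_eq
      fun m => rfl

theorem mem_allLists {m : ℕ} : ∀ {a : ℕ} {l : List ℕ}, l.length = a →
    (∀ x ∈ l, x ≤ m) → l ∈ allLists a m := by
  intro a
  induction a with
  | zero => intro l hl _; simp [List.length_eq_zero_iff.1 hl, allLists]
  | succ a ih =>
    intro l hl hb
    cases l with
    | nil => simp at hl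
    | cons x t =>
      simp only [List.length_cons, Nat.succ.injEq] at hl
      simp only [allLists, List.mem_flatMap, List.mem_map, List.mem_range]
      exact ⟨x, Nat.lt_succ_of_le (hb x List.mem_cons_self),
        t, ih hl (fun z hz => hb z (List.mem_cons_of_mem _ hz)), rfl⟩

/-- One computable growth step bounding the algebra operations. -/
def hstep (A : CEAlg) (m : ℕ) : ℕ :=
  max m (natListMax (List.ofFn fun i : Fin A.k =>
    natListMax ((allLists (A.arity i) m).map (A.op i))))

theorem hstep_computable (A : CEAlg) : Computable (hstep A) := by
  have inner : ∀ i : Fin A.k,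
      Computable fun m => natListMax ((allLists (A.arity i) m).map (A.op i)) := fun i =>
    natListMax_primrec.to_comp.comp
      ((comp_list_map (A.op_computable i)).comp (allLists_primrec (A.arity i)).to_comp)
  exact Primrec.nat_max.to_comp.comp Computable.id
    (natListMax_primrec.to_comp.comp (Computable.list_ofFn inner))

theorem le_hstep (A : CEAlg) (m : ℕ) : m ≤ hstep A m := le_max_left _ _

theorem op_le_hstep (A : CEAlg) {i : Fin A.k} {l : List ℕ} {m : ℕ}
    (hlen : l.length = A.arity i) (hb : ∀ x ∈ l, x ≤ m) : A.op i l ≤ hstep A m := by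
  have h1 : A.op i l ≤ natListMax ((allLists (A.arity i) m).map (A.op i)) :=
    le_natListMax (List.mem_map_of_mem (mem_allLists hlen hb))
  have h2 : natListMax ((allLists (A.arity i) m).map (A.op i)) ≤
      natListMax (List.ofFn fun j : Fin A.k =>
        natListMax ((allLists (A.arity j) m).map (A.op j))) :=
    le_natListMax (List.mem_ofFn.2 ⟨i, rfl⟩)
  exact (h1.trans h2).trans (le_max_right _ _)

/-- Computable bound on the stages of the generated subalgebra. -/
def bound (A : CEAlg) (N : ℕ) : ℕ → ℕ
  | 0 => N
  | n + 1 => hstep A (bound A N n)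

theorem bound_computable (A : CEAlg) (N : ℕ) : Computable (bound A N) := by
  have h := Computable.nat_rec Computable.id (Computable.const N)
    (((hstep_computable A).comp (Computable.snd.comp Computable.snd)).to₂)
  exact h.of_eq fun n => by
    induction n with
    | zero => rfl
    | succ n ih => exact congrArg (AuxNH.hstep A) ih

theorem bound_mono (A : CEAlg) (N : ℕ) : Monotone (bound A N) :=
  monotone_nat_of_le_succ fun n => le_hstep A _

theorem gen_mono (A : CEAlg) (X : Set ℕ) : ∀ {n m : ℕ}, n ≤ m → A.gen X n ⊆ A.gen X m := by
  intro n m h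
  induction h with
  | refl => exact fun _ h => h
  | step _ ih => exact fun x hx => Or.inl (ih hx)

theorem gen_le_bound (A : CEAlg) {X : Set ℕ} {N : ℕ} (hXN : ∀ x ∈ X, x ≤ N) :
    ∀ n, ∀ x ∈ A.gen X n, x ≤ bound A N n := by
  intro n
  induction n with
  | zero => exact hXN
  | succ n ih =>
    rintro x (hx | ⟨i, l, hlen, hml, rfl⟩)
    · exact (ih x hx).trans (le_hstep A _)
    · exact op_le_hstep A hlen fun z hz => ih z (hml z hz)

theorem exists_forall₂ {R : ℕ → ℕ → Prop} {S : Set ℕ} :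
    ∀ {l : List ℕ}, (∀ x ∈ l, ∃ y ∈ S, R x y) →
      ∃ l', List.Forall₂ R l l' ∧ ∀ y ∈ l', y ∈ S := by
  intro l
  induction l with
  | nil => exact fun _ => ⟨[], List.Forall₂.nil, by simp⟩
  | cons a t ih =>
    intro h
    obtain ⟨b, hbS, hab⟩ := h a List.mem_cons_self
    obtain ⟨t', ht', ht'S⟩ := ih fun x hx => h x (List.mem_cons_of_mem _ hx)
    refine ⟨b :: t', List.Forall₂.cons hab ht', ?_⟩
    rintro y hy
    rcases List.mem_cons.1 hy with rfl | hy
    · exact hbS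
    · exact ht'S y hy

end AuxNH

/-- if some finite nonempty set generates an infinite subalgebra
of an infinite c.e. algebra of finite type, then the word problem has an
infinite non-hyperimmune transversal; consequently it is not hyperdark. -/
theorem alg_infinite_subalg_not_hyperdark (A : CEAlg)
    (hAinf : InfiniteClasses A.R)
    (X : Set ℕ) (hXfin : X.Finite) (hXne : X.Nonempty)
    (hgen : {s : Set ℕ | ∃ x ∈ A.closure X, s = {y | A.R x y}}.Infinite) :
    (∃ T : Set ℕ, IsTransversal A.R T ∧ T.Infinite ∧ ¬ Hyperimmune T) ∧
      ¬ Hyperdark A.R := by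
  classical
  obtain ⟨E, -⟩ := id A.ceer
  obtain ⟨N, hN⟩ := hXfin.bddAbove
  have hXN : ∀ x ∈ X, x ≤ N := fun x hx => hN hx
  -- each stage meets only finitely many classes
  have fincls : ∀ n, ((fun x => {y | A.R x y}) '' (A.gen X n)).Finite := fun n =>
    (((Set.finite_Iic (AuxNH.bound A N n)).subset
      (fun x hx => AuxNH.gen_le_bound A hXN n x hx)).image _)
  -- each stage produces an element in a new class
  have key : ∀ n, ∃ z, z ∈ A.gen X (n + 1) ∧ ∀ x ∈ A.gen X n, ¬ A.R x z := by
    intro n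
    by_contra hcon
    push_neg at hcon
    have all : ∀ m, ∀ z ∈ A.gen X m, ∃ x ∈ A.gen X n, A.R x z := by
      intro m
      induction m with
      | zero =>
        exact fun z hz => ⟨z, AuxNH.gen_mono A X (Nat.zero_le n) hz, E.refl z⟩
      | succ m ih =>
        rintro z (hz | ⟨i, l, hlen, hml, rfl⟩)
        · exact ih z hz
        · obtain ⟨l', hf2, hl'⟩ := AuxNH.exists_forall₂ (R := A.R) (S := A.gen X n)
            (fun x hx => by
              obtain ⟨x', hx', hr⟩ := ih x (hml x hx)
              exact ⟨x', hx', E.symm hr⟩)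
          have hop : A.R (A.op i l) (A.op i l') := A.congr i l l' hlen hf2
          have hop' : A.op i l' ∈ A.gen X (n + 1) :=
            Or.inr ⟨i, l', by rw [← hf2.length_eq]; exact hlen, hl', rfl⟩
          obtain ⟨x, hx, hxr⟩ := hcon _ hop'
          exact ⟨x, hx, E.trans hxr (E.symm hop)⟩
    have hsub : {s : Set ℕ | ∃ x ∈ A.closure X, s = {y | A.R x y}} ⊆
        (fun x => {y | A.R x y}) '' (A.gen X n) := by
      rintro s ⟨x, hx, rfl⟩
      rcases Set.mem_iUnion.1 hx with ⟨m, hm⟩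
      obtain ⟨x', hx', hr⟩ := all m x hm
      refine ⟨x', hx', ?_⟩
      ext z
      exact ⟨fun hz => E.trans (E.symm hr) hz, fun hz => E.trans hr hz⟩
    exact hgen ((fincls n).subset hsub)
  choose y hy1 hy2 using key
  -- basic properties of the chosen sequence
  have hlt : ∀ {i j : ℕ}, i < j → ¬ A.R (y i) (y j) := by
    intro i j hij
    exact hy2 j (y i) (AuxNH.gen_mono A X hij (hy1 i))
  have hne : ∀ {i j : ℕ}, i < j → y i ≠ y j := by
    intro i j hij h
    exact hlt hij (h ▸ E.refl (y i))
  have yinj : Function.Injective y := by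
    intro i j h
    rcases lt_trichotomy i j with hij | hij | hij
    · exact absurd h (hne hij)
    · exact hij
    · exact absurd h.symm (hne hij)
  set T : Set ℕ := Set.range y with hT
  have hTrans : IsTransversal A.R T := by
    rintro a ⟨i, rfl⟩ b ⟨j, rfl⟩ hab hR
    rcases lt_trichotomy i j with hij | hij | hij
    · exact hlt hij hR
    · exact hab (congrArg y hij)
    · exact hlt hij (E.symm hR)
  have hTinf : T.Infinite := Set.infinite_range_of_injective yinj
  -- the computable majorant
  have hyle : ∀ i, y i ≤ AuxNH.bound A N (i + 1) := fun i =>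
    AuxNH.gen_le_bound A hXN (i + 1) (y i) (hy1 i)
  have hmaj : ∀ n, Nat.nth (· ∈ T) n ≤ AuxNH.bound A N (n + 1) := by
    intro n
    have hcount : n < Nat.count (· ∈ T) (AuxNH.bound A N (n + 1) + 1) := by
      rw [Nat.count_eq_card_filter_range]
      have hsub : (Finset.range (n + 1)).image y ⊆
          (Finset.range (AuxNH.bound A N (n + 1) + 1)).filter (· ∈ T) := by
        intro a ha
        obtain ⟨i, hi, rfl⟩ := Finset.mem_image.1 ha
        rw [Finset.mem_range] at hi
        refine Finset.mem_filter.2 ⟨Finset.mem_range.2 (Nat.lt_succ_of_le ?_), ⟨i, rfl⟩⟩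
        exact (hyle i).trans (AuxNH.bound_mono A N (Nat.succ_le_succ (Nat.le_of_lt_succ hi)))
      have := Finset.card_le_card hsub
      rwa [Finset.card_image_of_injective _ yinj, Finset.card_range] at this
    exact Nat.lt_succ_iff.1 (Nat.nth_lt_of_lt_count hcount)
  have hnotHyper : ¬ Hyperimmune T := by
    rintro ⟨-, hno⟩
    exact hno ⟨fun n => AuxNH.bound A N (n + 1),
      (AuxNH.bound_computable A N).comp Computable.succ, hmaj⟩
  refine ⟨⟨T, hTrans, hTinf, hnotHyper⟩, ?_⟩
  rintro ⟨-, -, hall⟩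
  exact hnotHyper (hall T hTrans hTinf)
end

section
/- No hyperdark ceer is computably bi-reducible with the word problem of an infinite finitely generated c.e. algebra of finite type. -/
namespace HD


/-- All lists of a given length with entries from `L`. -/
def listsLen : ℕ → List ℕ → List (List ℕ)
  | 0, _ => [[]]
  | a + 1, L => L.flatMap fun x => (listsLen a L).map (x :: ·)

theorem mem_listsLen : ∀ (a : ℕ) (L l : List ℕ),
    l ∈ listsLen a L ↔ l.length = a ∧ ∀ x ∈ l, x ∈ L := by
  intro a
  induction a with
  | zero =>
    intro L l
    simp only [listsLen, List.mem_singleton, List.length_eq_zero_iff]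
    constructor
    · rintro rfl; simp
    · rintro ⟨rfl, -⟩; rfl
  | succ a ih =>
    intro L l
    simp only [listsLen, List.mem_flatMap, List.mem_map]
    constructor
    · rintro ⟨x, hx, t, ht, rfl⟩
      obtain ⟨h1, h2⟩ := (ih L t).1 ht
      refine ⟨by simp [h1], ?_⟩
      intro y hy
      rcases List.mem_cons.1 hy with rfl | hy
      · exact hx
      · exact h2 y hy
    · rintro ⟨h1, h2⟩
      match l with
      | x :: t =>
        refine ⟨x, h2 x (by simp), t, (ih L t).2 ⟨by simpa using h1, fun y hy => h2 y (by simp [hy])⟩, rfl⟩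

theorem primrec_listsLen (a : ℕ) : Primrec (listsLen a) := by
  induction a with
  | zero => exact Primrec.const _
  | succ a ih =>
    have h : Primrec fun L : List ℕ => L.flatMap fun x => (listsLen a L).map (x :: ·) := by
      apply Primrec.list_flatMap Primrec.id
      apply Primrec.list_map (ih.comp Primrec.fst)
      exact (Primrec.list_cons.comp (Primrec.snd.comp Primrec.fst) Primrec.snd).to₂
    exact h.of_eq fun L => rfl

theorem primrec_foldr_max : Primrec fun L : List ℕ => L.foldr max 0 := by
  have h := Primrec.list_foldr (Primrec.id (α := List ℕ)) (Primrec.const 0)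
    ((Primrec.nat_max.comp (Primrec.fst.comp Primrec.snd) (Primrec.snd.comp Primrec.snd)).to₂)
  exact h.of_eq fun L => rfl

theorem le_foldr_max : ∀ (L : List ℕ), ∀ x ∈ L, x ≤ L.foldr max 0 := by
  intro L
  induction L with
  | nil => simp
  | cons a t ih =>
    intro x hx
    rcases List.mem_cons.1 hx with rfl | hx
    · exact le_max_left _ _
    · exact le_trans (ih x hx) (le_max_right _ _)

theorem computable_list_map {α β : Type} [Primcodable α] [Primcodable β] (d : α)
    {f : α → β} (hf : Computable f) : Computable fun L : List α => L.map f := by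
  have h : Computable fun L : List α =>
      Nat.rec (motive := fun _ => List β) []
        (fun n IH => IH ++ [f (L.getD n d)]) L.length := by
    have hcomp : Computable₂ fun (L : List α) (p : ℕ × List β) => p.2 ++ [f (L.getD p.1 d)] :=
      (Computable.list_concat.comp (Computable.snd.comp Computable.snd)
        (hf.comp ((Primrec.list_getD d).to_comp.comp Computable.fst
          (Computable.fst.comp Computable.snd)))).to₂
    have h := Computable.nat_rec (f := fun L : List α => L.length)
      (g := fun _ : List α => ([] : List β))
      (h := fun (L : List α) (p : ℕ × List β) => p.2 ++ [f (L.getD p.1 d)])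
      Computable.list_length (Computable.const []) hcomp
    exact h.of_eq fun L => rfl
  apply h.of_eq
  intro L
  have key : ∀ n, n ≤ L.length →
      Nat.rec (motive := fun _ => List β) []
        (fun n IH => IH ++ [f (L.getD n d)]) n = (L.take n).map f := by
    intro n
    induction n with
    | zero => simp
    | succ n ih =>
      intro hn
      have hn' : n < L.length := hn
      rw [List.take_succ]
      simp only [List.map_append]
      rw [ih (le_of_lt hn')]
      congr 1
      rw [List.getD_eq_getElem _ _ hn', List.getElem?_eq_getElem hn']
      simp
  rw [key L.length le_rfl, List.take_length]


variable (A : CEAlg)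

/-- Total version of the operations, indexed by `ℕ`. -/
def op' (i : ℕ) : List ℕ → ℕ := if h : i < A.k then A.op ⟨i, h⟩ else fun _ => 0

/-- Total version of the arities, indexed by `ℕ`. -/
def arity' (i : ℕ) : ℕ := if h : i < A.k then A.arity ⟨i, h⟩ else 0

theorem op'_computable (i : ℕ) : Computable (op' A i) := by
  unfold op'
  split
  · exact A.op_computable _
  · exact Computable.const 0

/-- One step of closure, on lists, using the first `j` operations. -/
def stepL (j : ℕ) (L : List ℕ) : List ℕ :=
  (List.range j).flatMap fun i => (listsLen (arity' A i) L).map (op' A i)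

theorem stepL_succ (j : ℕ) (L : List ℕ) :
    stepL A (j + 1) L = stepL A j L ++ (listsLen (arity' A j) L).map (op' A j) := by
  unfold stepL
  rw [List.range_succ, List.flatMap_append]
  simp

theorem stepL_computable (j : ℕ) : Computable (stepL A j) := by
  induction j with
  | zero => exact Computable.const []
  | succ j ih =>
    have h : Computable fun L => stepL A j L ++ (listsLen (arity' A j) L).map (op' A j) :=
      Computable.list_append.comp ih
        ((computable_list_map [] (op'_computable A j)).comp (primrec_listsLen _).to_comp)
    exact h.of_eq fun L => (stepL_succ A j L).symm

theorem mem_stepL (j : ℕ) (L : List ℕ) (y : ℕ) :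
    y ∈ stepL A j L ↔ ∃ i < j, ∃ l : List ℕ,
      l.length = arity' A i ∧ (∀ x ∈ l, x ∈ L) ∧ y = op' A i l := by
  unfold stepL
  simp only [List.mem_flatMap, List.mem_range, List.mem_map]
  constructor
  · rintro ⟨i, hi, l, hl, rfl⟩
    obtain ⟨h1, h2⟩ := (mem_listsLen _ L l).1 hl
    exact ⟨i, hi, l, h1, h2, rfl⟩
  · rintro ⟨i, hi, l, h1, h2, rfl⟩
    exact ⟨i, hi, l, (mem_listsLen _ L l).2 ⟨h1, h2⟩, rfl⟩

/-- List version of the stages of the generated subalgebra. -/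
def FL (l0 : List ℕ) : ℕ → List ℕ
  | 0 => l0
  | n + 1 => FL l0 n ++ stepL A A.k (FL l0 n)

theorem FL_computable (l0 : List ℕ) : Computable (FL A l0) := by
  have hcomp : Computable₂ fun (_ : ℕ) (p : ℕ × List ℕ) => p.2 ++ stepL A A.k p.2 :=
    (Computable.list_append.comp (Computable.snd.comp Computable.snd)
      ((stepL_computable A A.k).comp (Computable.snd.comp Computable.snd))).to₂
  have h := Computable.nat_rec (f := fun n : ℕ => n) (g := fun _ : ℕ => l0)
    (h := fun (_ : ℕ) (p : ℕ × List ℕ) => p.2 ++ stepL A A.k p.2)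
    Computable.id (Computable.const l0) hcomp
  apply h.of_eq
  intro n
  induction n with
  | zero => rfl
  | succ n ih => simp only [FL]; rw [← ih]

theorem FL_mono {l0 : List ℕ} {m n : ℕ} (h : m ≤ n) {x : ℕ}
    (hx : x ∈ FL A l0 m) : x ∈ FL A l0 n := by
  induction n with
  | zero => rwa [Nat.le_zero.1 h] at hx
  | succ n ih =>
    rcases Nat.lt_or_ge m (n + 1) with h' | h'
    · exact List.mem_append_left _ (ih (Nat.lt_succ_iff.1 h'))
    · exact (Nat.le_antisymm h h') ▸ hx

theorem mem_FL_iff_gen (l0 : List ℕ) (X : Set ℕ) (hl0 : ∀ x, x ∈ l0 ↔ x ∈ X) :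
    ∀ (n : ℕ) (x : ℕ), x ∈ FL A l0 n ↔ x ∈ A.gen X n := by
  intro n
  induction n with
  | zero => exact hl0
  | succ n ih =>
    intro x
    show x ∈ FL A l0 n ++ stepL A A.k (FL A l0 n) ↔ x ∈ A.step (A.gen X n)
    rw [List.mem_append, mem_stepL]
    constructor
    · rintro (hx | ⟨i, hi, l, h1, h2, rfl⟩)
      · exact Or.inl ((ih x).1 hx)
      · refine Or.inr ⟨⟨i, hi⟩, l, ?_, fun z hz => (ih z).1 (h2 z hz), ?_⟩
        · rw [h1]; simp [arity', hi]
        · simp [op', hi]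
    · rintro (hx | ⟨i, l, h1, h2, rfl⟩)
      · exact Or.inl ((ih x).2 hx)
      · refine Or.inr ⟨i.1, i.2, l, ?_, fun z hz => (ih z).2 (h2 z hz), ?_⟩
        · rw [h1]; simp [arity', i.2]
        · simp [op', i.2]

end HD

open HD in
/-- no hyperdark ceer is computably bi-reducible with the word
problem of an infinite finitely generated c.e. algebra of finite type. -/
theorem hyperdark_not_realized (R : ℕ → ℕ → Prop) (hR : Hyperdark R)
    (A : CEAlg) (hAinf : InfiniteClasses A.R)
    (hfg : ∃ X : Set ℕ, X.Finite ∧ X.Nonempty ∧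
      ∀ n : ℕ, ∃ m ∈ A.closure X, A.R n m) :
    ¬ (Reduces R A.R ∧ Reduces A.R R) := by
  rintro ⟨-, gr, hgr, hred⟩
  classical
  obtain ⟨X, hXfin, hXne, hXgen⟩ := hfg
  obtain ⟨EA, -⟩ := A.ceer
  obtain ⟨⟨ER, -⟩, -, hhyp⟩ := hR
  set l0 : List ℕ := hXfin.toFinset.toList with hl0def
  have hl0 : ∀ x, x ∈ l0 ↔ x ∈ X := by
    intro x; rw [hl0def, Finset.mem_toList, Set.Finite.mem_toFinset]
  have hl0ne : l0 ≠ [] := by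
    obtain ⟨x, hx⟩ := hXne
    intro h
    have := (hl0 x).2 hx
    rw [h] at this
    simp at this
  -- minimal representatives of the classes of A.R
  have hex : ∀ x : ℕ, ∃ y, A.R x y := fun x => ⟨x, EA.refl x⟩
  let mr : ℕ → ℕ := fun x => Nat.find (hex x)
  have hmrR : ∀ x, A.R x (mr x) := fun x => Nat.find_spec (hex x)
  have hmr_le : ∀ x, mr x ≤ x := fun x => Nat.find_min' (hex x) (EA.refl x)
  have hmr_eq : ∀ x y, A.R x y → mr x = mr y := by
    intro x y h
    apply le_antisymm
    · exact Nat.find_min' (hex x) (EA.trans h (hmrR y))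
    · exact Nat.find_min' (hex y) (EA.trans (EA.symm h) (hmrR x))
  have hmr_of_eq : ∀ x y, mr x = mr y → A.R x y := fun x y h =>
    EA.trans (hmrR x) (h ▸ EA.symm (hmrR y))
  have hmr_idem : ∀ x, mr (mr x) = mr x := fun x => (hmr_eq _ _ (hmrR x)).symm
  -- finsets of representatives at each stage
  let D : ℕ → Finset ℕ := fun n => ((FL A l0 n).map mr).toFinset
  have hD_mem : ∀ n a, a ∈ D n ↔ ∃ x ∈ FL A l0 n, mr x = a := by
    intro n a
    simp [D]
  -- the stages represent strictly more classes each time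
  have hgrow : ∀ n, D n ⊂ D (n + 1) := by
    intro n
    rw [Finset.ssubset_def]
    constructor
    · intro a ha
      obtain ⟨x, hx, rfl⟩ := (hD_mem n a).1 ha
      exact (hD_mem _ _).2 ⟨x, FL_mono A (Nat.le_succ n) hx, rfl⟩
    · intro hsub
      have hcollapse : ∀ y ∈ FL A l0 (n + 1), ∃ z ∈ FL A l0 n, A.R y z := by
        intro y hy
        have hmem : mr y ∈ D n := hsub ((hD_mem _ _).2 ⟨y, hy, rfl⟩)
        obtain ⟨z, hz, hzeq⟩ := (hD_mem _ _).1 hmem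
        exact ⟨z, hz, hmr_of_eq _ _ hzeq.symm⟩
      have hlist : ∀ l : List ℕ, (∀ x ∈ l, ∃ z ∈ FL A l0 n, A.R x z) →
          ∃ l' : List ℕ, List.Forall₂ A.R l l' ∧ ∀ z ∈ l', z ∈ FL A l0 n := by
        intro l
        induction l with
        | nil => exact fun _ => ⟨[], List.Forall₂.nil, by simp⟩
        | cons a t ih =>
          intro h
          obtain ⟨b, hb, hab⟩ := h a (by simp)
          obtain ⟨t', ht', ht'mem⟩ := ih (fun x hx => h x (by simp [hx]))
          refine ⟨b :: t', List.Forall₂.cons hab ht', ?_⟩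
          intro z hz
          rcases List.mem_cons.1 hz with rfl | hz
          · exact hb
          · exact ht'mem z hz
      have hall : ∀ m, ∀ y ∈ FL A l0 (n + 1 + m), ∃ z ∈ FL A l0 n, A.R y z := by
        intro m
        induction m with
        | zero => exact hcollapse
        | succ m ih =>
          intro y hy
          have hy' : y ∈ FL A l0 (n + 1 + m) ++ stepL A A.k (FL A l0 (n + 1 + m)) := hy
          rcases List.mem_append.1 hy' with hy2 | hy2
          · exact ih y hy2
          · obtain ⟨i, hi, l, h1, h2, rfl⟩ := (mem_stepL A A.k _ _).1 hy2
            obtain ⟨l', hl', hl'mem⟩ := hlist l (fun x hx => ih x (h2 x hx))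
            have harr : A.R (op' A i l) (op' A i l') := by
              simp only [op', dif_pos hi]
              refine A.congr ⟨i, hi⟩ l l' ?_ hl'
              rw [h1]; simp [arity', hi]
            have hop : op' A i l' ∈ FL A l0 (n + 1) := by
              have hst : op' A i l' ∈ stepL A A.k (FL A l0 n) := by
                refine (mem_stepL A A.k _ _).2 ⟨i, hi, l', ?_, hl'mem, rfl⟩
                rw [← hl'.length_eq, h1]
              exact List.mem_append_right _ hst
            obtain ⟨z, hz, hz'⟩ := hcollapse _ hop
            exact ⟨z, hz, EA.trans harr hz'⟩
      have hfin : ∀ w : ℕ, ∃ z ∈ FL A l0 n, A.R w z := by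
        intro w
        obtain ⟨m, hm, hwm⟩ := hXgen w
        obtain ⟨s, hs⟩ := Set.mem_iUnion.1 hm
        have hmFL : m ∈ FL A l0 s := (mem_FL_iff_gen A l0 X hl0 s m).2 hs
        rcases Nat.lt_or_ge s (n + 1) with h' | h'
        · exact ⟨m, FL_mono A (Nat.lt_succ_iff.1 h') hmFL, hwm⟩
        · obtain ⟨z, hz, hz'⟩ := hall (s - (n + 1)) m (by rwa [Nat.add_sub_cancel' h'])
          exact ⟨z, hz, EA.trans hwm hz'⟩
      refine hAinf (Set.Finite.subset
        (Set.Finite.image (fun z => {y | A.R z y}) (List.finite_toSet (FL A l0 n))) ?_)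
      rintro s ⟨x, rfl⟩
      obtain ⟨z, hz, hz'⟩ := hfin x
      refine ⟨z, hz, ?_⟩
      ext y
      exact ⟨fun h => EA.trans hz' h, fun h => EA.trans (EA.symm hz') h⟩
  have hcard : ∀ n, n < (D n).card := by
    intro n
    induction n with
    | zero =>
      obtain ⟨x, hx⟩ := List.exists_mem_of_ne_nil l0 hl0ne
      exact Finset.card_pos.2 ⟨mr x, (hD_mem 0 _).2 ⟨x, hx, rfl⟩⟩
    | succ n ih => exact lt_of_le_of_lt ih (Finset.card_lt_card (hgrow n))
  -- the transversal of R
  let T : Set ℕ := {y | ∃ x, y = gr (mr x)}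
  have hgr_inj : ∀ x1 x2, gr (mr x1) = gr (mr x2) → mr x1 = mr x2 := by
    intro x1 x2 h
    have h1 : R (gr (mr x1)) (gr (mr x2)) := h ▸ ER.refl _
    have h2 := hmr_eq _ _ ((hred _ _).2 h1)
    rwa [hmr_idem, hmr_idem] at h2
  have hT_trans : IsTransversal R T := by
    rintro y1 ⟨x1, rfl⟩ y2 ⟨x2, rfl⟩ hne hRy
    have h := hmr_eq _ _ ((hred _ _).2 hRy)
    rw [hmr_idem, hmr_idem] at h
    exact hne (congrArg gr h)
  -- the computable bound
  let hm : ℕ → ℕ := fun n => (FL A l0 n).foldr max 0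
  let g' : ℕ → ℕ := fun n => ((List.range (hm n + 1)).map gr).foldr max 0
  have hhm : Computable hm := primrec_foldr_max.to_comp.comp (FL_computable A l0)
  have hg'comp : Computable g' :=
    primrec_foldr_max.to_comp.comp ((computable_list_map 0 hgr).comp
      (Primrec.list_range.to_comp.comp (Computable.succ.comp hhm)))
  -- images of the representative finsets under gr
  let E : ℕ → Finset ℕ := fun n => (D n).image gr
  have hEcard : ∀ n, n < (E n).card := by
    intro n
    have hinj : Set.InjOn gr (D n) := by
      intro a ha b hb h
      obtain ⟨x, -, rfl⟩ := (hD_mem n a).1 ha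
      obtain ⟨y, -, rfl⟩ := (hD_mem n b).1 hb
      exact hgr_inj x y h
    show n < ((D n).image gr).card
    rw [Finset.card_image_of_injOn hinj]
    exact hcard n
  have hE_T : ∀ n, ∀ e ∈ E n, e ∈ T := by
    intro n e he
    obtain ⟨a, ha, rfl⟩ := Finset.mem_image.1 he
    obtain ⟨x, -, rfl⟩ := (hD_mem n a).1 ha
    exact ⟨x, rfl⟩
  have hE_le : ∀ n, ∀ e ∈ E n, e ≤ g' n := by
    intro n e he
    obtain ⟨a, ha, rfl⟩ := Finset.mem_image.1 he
    obtain ⟨x, hx, rfl⟩ := (hD_mem n a).1 ha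
    have h1 : mr x ≤ hm n := le_trans (hmr_le x) (le_foldr_max _ x hx)
    exact le_foldr_max _ _
      (List.mem_map.2 ⟨mr x, List.mem_range.2 (Nat.lt_succ_of_le h1), rfl⟩)
  have hTinf : T.Infinite := by
    intro hTfin
    have hsub : E hTfin.toFinset.card ⊆ hTfin.toFinset :=
      fun e he => hTfin.mem_toFinset.2 (hE_T _ e he)
    exact absurd (lt_of_lt_of_le (hEcard _) (Finset.card_le_card hsub)) (lt_irrefl _)
  obtain ⟨-, hnomaj⟩ := hhyp T hT_trans hTinf
  refine hnomaj ⟨g', hg'comp, ?_⟩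
  intro n
  have hcount : n < Nat.count (· ∈ T) (g' n + 1) := by
    rw [Nat.count_eq_card_filter_range]
    refine lt_of_lt_of_le (hEcard n) (Finset.card_le_card ?_)
    intro e he
    simp only [Finset.mem_filter, Finset.mem_range]
    exact ⟨Nat.lt_succ_of_le (hE_le n e he), hE_T n e he⟩
  have := Nat.nth_lt_of_lt_count hcount
  omega
end

section
/- There exists a ceer R all of whose equivalence classes are finite such that ∅′ (the halting set) is Turing reducible to every infinite transversal of R. -/
open Nat in
/-- Relativized partial recursiveness: `RecursiveInOracle O f` means the partial
function `f` is partial computable with oracle `O`. -/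
inductive RecursiveInOracle (O : ℕ →. ℕ) : (ℕ →. ℕ) → Prop
  | zero : RecursiveInOracle O (pure 0)
  | succ : RecursiveInOracle O Nat.succ
  | left : RecursiveInOracle O ↑fun n : ℕ => n.unpair.1
  | right : RecursiveInOracle O ↑fun n : ℕ => n.unpair.2
  | oracle : RecursiveInOracle O O
  | pair {f g} : RecursiveInOracle O f → RecursiveInOracle O g →
      RecursiveInOracle O fun n => pair <$> f n <*> g n
  | comp {f g} : RecursiveInOracle O f → RecursiveInOracle O g →
      RecursiveInOracle O fun n => g n >>= f
  | prec {f g} : RecursiveInOracle O f → RecursiveInOracle O g → RecursiveInOracle O (unpaired fun a n =>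
      n.rec (f a) fun y IH => do let i ← IH; g (pair a (pair y i)))
  | rfind {f} : RecursiveInOracle O f →
      RecursiveInOracle O fun a => rfind fun n => (fun m => m = 0) <$> f (pair a n)

/-- The characteristic function of a set, as a partial function. -/
noncomputable def chi (A : Set ℕ) : ℕ →. ℕ :=
  fun n => Part.some (@ite ℕ (n ∈ A) (Classical.propDecidable _) 1 0)

/-- Turing reducibility between sets of naturals. -/
def TuringRed (A B : Set ℕ) : Prop := RecursiveInOracle (chi B) (chi A)

/-- The halting set ∅′, via Mathlib's partial recursive codes. -/
def HaltingSet : Set ℕ :=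
  {e | ((Denumerable.ofNat Nat.Partrec.Code e).eval e).Dom}

namespace CeerCH
open Nat.Partrec (Code)
open Nat.Partrec.Code

/-- bounded any -/
def bany (f : ℕ → Bool) : ℕ → Bool := fun n =>
  Nat.rec false (fun k ih => ih || f k) n

@[simp] lemma bany_zero (f : ℕ → Bool) : bany f 0 = false := rfl
@[simp] lemma bany_succ (f : ℕ → Bool) (n : ℕ) : bany f (n+1) = (bany f n || f n) := rfl

lemma bany_iff {f : ℕ → Bool} {n : ℕ} : bany f n = true ↔ ∃ k, k < n ∧ f k = true := by
  induction n with
  | zero => simp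
  | succ n ih =>
    rw [bany_succ, Bool.or_eq_true, ih]
    constructor
    · rintro (⟨k, hk, hf⟩ | hf)
      exacts [⟨k, Nat.lt_succ_of_lt hk, hf⟩, ⟨n, Nat.lt_succ_self n, hf⟩]
    · rintro ⟨k, hk, hf⟩
      rcases Nat.lt_succ_iff_lt_or_eq.mp hk with h | rfl
      exacts [Or.inl ⟨k, h, hf⟩, Or.inr hf]

lemma bany_primrec {α} [Primcodable α] {f : α → ℕ → Bool} (hf : Primrec₂ f) :
    Primrec₂ fun a n => bany (f a) n :=
  Primrec.nat_rec (Primrec.const false)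
    ((Primrec.or.comp (Primrec.snd.comp Primrec.snd)
      (hf.comp Primrec.fst (Primrec.fst.comp Primrec.snd))).to₂)

/-- `k`'s computation halts within `s` steps -/
def halts (s k : ℕ) : Bool := ((Denumerable.ofNat Code k).evaln s k).isSome

lemma halts_mono {s s' k : ℕ} (h : s ≤ s') (hs : halts s k = true) : halts s' k = true := by
  simp only [halts, Option.isSome_iff_exists] at *
  obtain ⟨x, hx⟩ := hs
  exact ⟨x, evaln_mono h hx⟩

@[simp] lemma halts_zero (k : ℕ) : halts 0 k = false := by
  simp [halts, evaln]

lemma halts_primrec : Primrec₂ halts :=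
  Primrec.option_isSome.comp <| primrec_evaln.comp <|
    (Primrec.fst.pair ((Primrec.ofNat Code).comp Primrec.snd)).pair Primrec.snd

/-- `k` halts at exactly stage `s+1` -/
def newly (s k : ℕ) : Bool := halts (s+1) k && !(halts s k)

lemma newly_primrec : Primrec₂ newly :=
  Primrec.and.comp (halts_primrec.comp (Primrec.succ.comp Primrec.fst) Primrec.snd)
    (Primrec.not.comp (halts_primrec.comp Primrec.fst Primrec.snd))

lemma newly_unique {s s' k : ℕ} (h : newly s k = true) (h' : newly s' k = true) : s = s' := by
  have key : ∀ a b : ℕ, newly a k = true → newly b k = true → ¬ a < b := by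
    intro a b ha hb hab
    simp only [newly, Bool.and_eq_true, Bool.not_eq_true'] at ha hb
    rw [halts_mono (Nat.succ_le_of_lt hab) ha.1] at hb
    exact absurd hb.2 (by simp)
  rcases lt_trichotomy s s' with h1 | h1 | h1
  · exact absurd h1 (key _ _ h h')
  · exact h1
  · exact absurd h1 (key _ _ h' h)

/-- some `k < n` halts at exactly stage `s+1` -/
def trig (s n : ℕ) : Bool := bany (newly s) n

lemma trig_iff {s n : ℕ} : trig s n = true ↔ ∃ k, k < n ∧ newly s k = true := bany_iff

lemma trig_mono {s n n' : ℕ} (h : n ≤ n') (ht : trig s n = true) : trig s n' = true := by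
  obtain ⟨k, hk, hnew⟩ := trig_iff.mp ht
  exact trig_iff.mpr ⟨k, lt_of_lt_of_le hk h, hnew⟩

lemma trig_primrec : Primrec₂ trig := bany_primrec newly_primrec

@[simp] lemma trig_zero (s : ℕ) : trig s 0 = false := rfl

/-- position of marker `n` at stage `s` -/
def mark (n : ℕ) : ℕ → ℕ := fun s =>
  Nat.rec n (fun t ih => bif trig t n then t+1+n else ih) s

@[simp] lemma mark_zero (n : ℕ) : mark n 0 = n := rfl
lemma mark_succ (n s : ℕ) : mark n (s+1) = bif trig s n then s+1+n else mark n s := rfl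

lemma mark_primrec : Primrec₂ mark :=
  Primrec.nat_rec Primrec.id
    ((Primrec.cond (trig_primrec.comp (Primrec.fst.comp Primrec.snd) Primrec.fst)
      (Primrec.nat_add.comp (Primrec.succ.comp (Primrec.fst.comp Primrec.snd)) Primrec.fst)
      (Primrec.snd.comp Primrec.snd)).to₂)

lemma mark_le_add (n s : ℕ) : mark n s ≤ s + n := by
  induction s with
  | zero => simp
  | succ s ih =>
    rw [mark_succ]
    cases trig s n <;> simp <;> omega

lemma le_mark (n s : ℕ) : n ≤ mark n s := by
  induction s with
  | zero => simp
  | succ s ih =>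
    rw [mark_succ]
    cases trig s n <;> simp <;> omega

lemma mark_mono {n s s' : ℕ} (h : s ≤ s') : mark n s ≤ mark n s' := by
  have step : ∀ t, mark n t ≤ mark n (t+1) := by
    intro t
    rw [mark_succ]
    have := mark_le_add n t
    cases trig t n <;> simp <;> omega
  exact monotone_nat_of_le_succ step h

lemma mark_lt_mark (n s : ℕ) : mark n s < mark (n+1) s := by
  induction s with
  | zero => simp
  | succ s ih =>
    rw [mark_succ, mark_succ]
    cases h1 : trig s (n+1)
    · have h0 : trig s n = false := by
        cases h : trig s n
        · rfl
        · rw [trig_mono (Nat.le_succ n) h] at h1; cases h1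
      rw [h0]; simpa using ih
    · have h2 := mark_le_add n s
      cases trig s n <;> simp <;> omega

lemma stab (n : ℕ) : ∃ s0, ∀ s, s0 ≤ s → mark n s = mark n s0 := by
  have hfin : {t | trig t n = true}.Finite := by
    have hsub : {t | trig t n = true} ⊆ ⋃ k ∈ Finset.range n, {t | newly t k = true} := by
      intro t ht
      obtain ⟨k, hk, hnew⟩ := trig_iff.mp ht
      exact Set.mem_biUnion (Finset.mem_range.mpr hk) hnew
    refine Set.Finite.subset (Set.Finite.biUnion (Finset.range n).finite_toSet fun k _ => ?_) hsub
    exact Set.Subsingleton.finite fun a ha b hb => newly_unique ha hb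
  obtain ⟨b, hb⟩ := hfin.bddAbove
  refine ⟨b+1, fun s hs => ?_⟩
  induction s, hs using Nat.le_induction with
  | base => rfl
  | succ s hs ih =>
    have htf : trig s n = false := by
      cases h : trig s n
      · rfl
      · exact absurd (hb h) (by omega)
    rw [mark_succ, htf, cond_false, ih]

/-- stabilization stage for marker `n` -/
noncomputable def stabStage (n : ℕ) : ℕ := (stab n).choose

lemma mark_stab (n : ℕ) : ∀ s, stabStage n ≤ s → mark n s = mark n (stabStage n) :=
  (stab n).choose_spec

/-- limit position of marker `n` -/
noncomputable def mlim (n : ℕ) : ℕ := mark n (stabStage n)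

lemma mlim_stable {n s : ℕ} (h : stabStage n ≤ s) : mark n s = mlim n := mark_stab n s h

lemma mark_le_mlim (n s : ℕ) : mark n s ≤ mlim n := by
  rcases le_total s (stabStage n) with h | h
  · exact mark_mono h
  · exact le_of_eq (mlim_stable h)

lemma mlim_strictMono : StrictMono mlim := by
  apply strictMono_nat_of_lt_succ
  intro n
  have h1 : stabStage n ≤ max (stabStage n) (stabStage (n+1)) := le_max_left _ _
  have h2 : stabStage (n+1) ≤ max (stabStage n) (stabStage (n+1)) := le_max_right _ _
  rw [← mlim_stable h1, ← mlim_stable h2]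
  exact mark_lt_mark n _

lemma mlim_mono : Monotone mlim := mlim_strictMono.monotone

lemma le_mlim (n : ℕ) : n ≤ mlim n := le_trans (le_mark n _) (le_of_eq rfl)

@[simp] lemma mlim_zero : mlim 0 = 0 := by
  have : ∀ s, mark 0 s = 0 := by
    intro s
    induction s with
    | zero => simp
    | succ s ih => rw [mark_succ, trig_zero, cond_false, ih]
  exact this _

lemma halts_mlim {k n : ℕ} (hk : k < n)
    (hdom : ((Denumerable.ofNat Code k).eval k).Dom) : halts (mlim n) k = true := by
  classical
  obtain ⟨x, hx⟩ := Part.dom_iff_mem.mp hdom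
  obtain ⟨u, hu⟩ := evaln_complete.mp hx
  have hex : ∃ s, halts s k = true := ⟨u, by simp [halts, Option.isSome_iff_exists]; exact ⟨x, hu⟩⟩
  set v := Nat.find hex with hv_def
  have hv : halts v k = true := Nat.find_spec hex
  have hv0 : v ≠ 0 := by
    intro h
    rw [h, halts_zero] at hv; cases hv
  obtain ⟨t, ht⟩ : ∃ t, v = t+1 := ⟨v-1, by omega⟩
  have hnew : newly t k = true := by
    have hmin : halts t k = false := by
      cases h : halts t k
      · rfl
      · exact absurd h (Nat.find_min hex (by omega))
    rw [ht] at hv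
    simp [newly, hv, hmin]
  have htrig : trig t n = true := trig_iff.mpr ⟨k, hk, hnew⟩
  have hge : t+1 ≤ mark n (t+1) := by rw [mark_succ, htrig, cond_true]; omega
  exact halts_mono (le_trans (by omega : v ≤ t+1) (le_trans hge (mark_le_mlim n _))) hv


/-- `z` is a marker position at stage `s` -/
def isB (s z : ℕ) : Bool := bany (fun n => decide (mark n s = z)) (z+1)

lemma isB_iff {s z : ℕ} : isB s z = true ↔ ∃ n, mark n s = z := by
  rw [isB, bany_iff]
  constructor
  · rintro ⟨n, _, h⟩
    exact ⟨n, of_decide_eq_true h⟩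
  · rintro ⟨n, h⟩
    exact ⟨n, by have := le_mark n s; omega, decide_eq_true h⟩

lemma isB_primrec : Primrec₂ isB := by
  have hf : Primrec₂ fun (p : ℕ × ℕ) (n : ℕ) => decide (mark n p.1 = p.2) :=
    (Primrec.eq.comp (mark_primrec.comp Primrec.snd (Primrec.fst.comp Primrec.fst))
      (Primrec.snd.comp Primrec.fst)).decide
  exact (bany_primrec hf).comp Primrec.id (Primrec.succ.comp Primrec.snd)

/-- stage-s check for the relation -/
def Rcheck (p : ℕ × ℕ) (s : ℕ) : Bool :=
  decide (max p.1 p.2 ≤ s) &&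
    !(bany (fun w => decide (min p.1 p.2 < w) && isB s w) (max p.1 p.2 + 1))

/-- the ceer: x and y lie in the same (limit) interval of markers -/
def Rrel (x y : ℕ) : Prop := ∃ s, Rcheck (x, y) s = true

lemma Rcheck_iff {x y s : ℕ} : Rcheck (x, y) s = true ↔
    max x y ≤ s ∧ ∀ w, min x y < w → w ≤ max x y → isB s w = false := by
  rw [Rcheck, Bool.and_eq_true, decide_eq_true_eq, Bool.not_eq_true']
  apply and_congr_right
  intro _
  constructor
  · intro h w hw1 hw2
    cases hB : isB s w
    · rfl
    · exfalso
      have : bany (fun w => decide (min x y < w) && isB s w) (max x y + 1) = true :=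
        bany_iff.mpr ⟨w, by omega, by rw [hB, decide_eq_true hw1]; rfl⟩
      rw [this] at h; cases h
  · intro h
    cases hb : bany (fun w => decide (min x y < w) && isB s w) (max x y + 1)
    · rfl
    · exfalso
      obtain ⟨w, hw, hww⟩ := bany_iff.mp hb
      rw [Bool.and_eq_true, decide_eq_true_eq] at hww
      rw [h w hww.1 (by omega)] at hww
      exact absurd hww.2 (by simp)

lemma Rcheck_primrec : Primrec₂ Rcheck := by
  have hg : Primrec₂ fun (q : (ℕ × ℕ) × ℕ) (w : ℕ) => decide (min q.1.1 q.1.2 < w) && isB q.2 w :=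
    Primrec.and.comp
      (Primrec.nat_lt.comp
        (Primrec.nat_min.comp (Primrec.fst.comp (Primrec.fst.comp Primrec.fst))
          (Primrec.snd.comp (Primrec.fst.comp Primrec.fst))) Primrec.snd).decide
      (isB_primrec.comp (Primrec.snd.comp Primrec.fst) Primrec.snd)
  have hmax : Primrec fun (q : (ℕ × ℕ) × ℕ) => max q.1.1 q.1.2 :=
    Primrec.nat_max.comp (Primrec.fst.comp Primrec.fst) (Primrec.snd.comp Primrec.fst)
  exact Primrec.and.comp (Primrec.nat_le.comp hmax Primrec.snd).decide
    (Primrec.not.comp ((bany_primrec hg).comp Primrec.id (Primrec.succ.comp hmax)))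

lemma clear_succ {l u s : ℕ} (hu : u ≤ s)
    (h : ∀ w, l < w → w ≤ u → isB s w = false) :
    ∀ w, l < w → w ≤ u → isB (s+1) w = false := by
  intro w hw1 hw2
  cases hB : isB (s+1) w
  · rfl
  exfalso
  obtain ⟨n, hn⟩ := isB_iff.mp hB
  rw [mark_succ] at hn
  cases htrig : trig s n
  · rw [htrig, cond_false] at hn
    have := h w hw1 hw2
    rw [isB_iff.mpr ⟨n, hn⟩] at this; cases this
  · rw [htrig, cond_true] at hn
    omega

lemma clear_mono {l u s s' : ℕ} (hs : s ≤ s') (hu : u ≤ s)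
    (h : ∀ w, l < w → w ≤ u → isB s w = false) :
    ∀ w, l < w → w ≤ u → isB s' w = false := by
  induction s', hs using Nat.le_induction with
  | base => exact h
  | succ s' hs ih => exact clear_succ (by omega) ih

lemma Rrel_refl (x : ℕ) : Rrel x x := by
  refine ⟨x, Rcheck_iff.mpr ⟨by simp, fun w hw1 hw2 => ?_⟩⟩
  simp at hw1 hw2; omega

lemma Rrel_symm {x y : ℕ} (h : Rrel x y) : Rrel y x := by
  obtain ⟨s, hs⟩ := h
  rw [Rcheck_iff] at hs
  exact ⟨s, Rcheck_iff.mpr (by rw [max_comm y x, min_comm y x]; exact hs)⟩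

lemma Rrel_trans {x y z : ℕ} (h1 : Rrel x y) (h2 : Rrel y z) : Rrel x z := by
  obtain ⟨s1, hs1⟩ := h1
  obtain ⟨s2, hs2⟩ := h2
  rw [Rcheck_iff] at hs1 hs2
  set s := max s1 s2 with hs_def
  have c1 := clear_mono (le_max_left s1 s2) hs1.1 hs1.2
  have c2 := clear_mono (le_max_right s1 s2) hs2.1 hs2.2
  refine ⟨s, Rcheck_iff.mpr ⟨by omega, fun w hw1 hw2 => ?_⟩⟩
  by_cases hxy : min x y < w ∧ w ≤ max x y
  · exact c1 w hxy.1 hxy.2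
  · exact c2 w (by omega) (by omega)

lemma Rrel_equivalence : Equivalence Rrel :=
  ⟨Rrel_refl, Rrel_symm, Rrel_trans⟩

lemma Rrel_of_interval {j x y : ℕ} (h1 : mlim j ≤ x) (h2 : x ≤ y) (h3 : y < mlim (j+1)) :
    Rrel x y := by
  set s := max y ((Finset.range (y+1)).sup stabStage) with hs_def
  refine ⟨s, Rcheck_iff.mpr ⟨by omega, fun w hw1 hw2 => ?_⟩⟩
  rw [max_eq_right h2] at hw2
  rw [min_eq_left h2] at hw1
  cases hB : isB s w
  · rfl
  exfalso
  obtain ⟨n, hn⟩ := isB_iff.mp hB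
  have hny : n ≤ y := le_trans (le_trans (le_mark n s) (le_of_eq hn)) hw2
  have hstab : stabStage n ≤ s :=
    le_trans (Finset.le_sup (Finset.mem_range.mpr (by omega))) (le_max_right _ _)
  rw [mlim_stable hstab] at hn
  have hjn : j < n := by
    by_contra hc
    have : mlim n ≤ mlim j := mlim_mono (by omega)
    omega
  have : mlim (j+1) ≤ mlim n := mlim_mono (by omega)
  omega

lemma Rrel_lt {x y : ℕ} (h : Rrel x y) : y < mlim (x+1) := by
  by_contra hge
  push_neg at hge
  have hxp : x < mlim (x+1) := lt_of_lt_of_le (Nat.lt_succ_self x) (le_mlim (x+1))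
  have hxy : x ≤ y := le_trans (le_of_lt hxp) hge
  obtain ⟨s, hs⟩ := h
  rw [Rcheck_iff] at hs
  set s' := max s (stabStage (x+1)) with hs'_def
  have hclear := clear_mono (s' := s') (le_max_left s (stabStage (x+1))) hs.1 hs.2
  have hmark : mark (x+1) s' = mlim (x+1) := mlim_stable (le_max_right _ _)
  have hB : isB s' (mlim (x+1)) = true := isB_iff.mpr ⟨x+1, hmark⟩
  have := hclear (mlim (x+1)) (by omega) (by omega)
  rw [hB] at this; cases this

lemma Rrel_classes_finite (x : ℕ) : {y | Rrel x y}.Finite :=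
  Set.Finite.subset (Set.finite_Iio (mlim (x+1))) fun y hy => Rrel_lt hy

lemma Rrel_ce : REPred fun p : ℕ × ℕ => Rrel p.1 p.2 := by
  have hc : Computable₂ Rcheck := Rcheck_primrec.to_comp
  have hpart : Partrec fun p : ℕ × ℕ => Nat.rfind (Rcheck p : ℕ →. Bool) :=
    Partrec.rfind hc.partrec₂
  refine hpart.dom_re.of_eq fun p => ?_
  rw [Nat.rfind_dom]
  constructor
  · rintro ⟨n, hn, _⟩
    have : true = Rcheck p n := by
      simpa [PFun.coe_val, Part.mem_some_iff] using hn
    exact ⟨n, this.symm⟩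
  · rintro ⟨n, hn⟩
    refine ⟨n, ?_, fun _ => trivial⟩
    simp only [PFun.coe_val, Part.mem_some_iff]
    exact (show Rcheck p n = true from hn).symm


end CeerCH

namespace RecursiveInOracle

lemma of_eq' {O f g : ℕ →. ℕ} (h : RecursiveInOracle O f) (H : ∀ n, f n = g n) :
    RecursiveInOracle O g := (funext H : f = g) ▸ h

lemma of_partrec {O : ℕ →. ℕ} {f : ℕ →. ℕ} (h : Nat.Partrec f) : RecursiveInOracle O f := by
  induction h with
  | zero => exact .zero
  | succ => exact .succ
  | left => exact .left
  | right => exact .right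
  | pair _ _ ih1 ih2 => exact .pair ih1 ih2
  | comp _ _ ih1 ih2 => exact .comp ih1 ih2
  | prec _ _ ih1 ih2 => exact .prec ih1 ih2
  | rfind _ ih => exact .rfind ih

lemma of_primrec' {O : ℕ →. ℕ} {f : ℕ → ℕ} (h : Primrec f) : RecursiveInOracle O ↑f :=
  of_partrec (Nat.Partrec.of_primrec (Primrec.nat_iff.mp h))

lemma comp_primrec {O fp : ℕ →. ℕ} {g : ℕ → ℕ} (hf : RecursiveInOracle O fp) (hg : Primrec g) :
    RecursiveInOracle O (fun n => fp (g n)) :=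
  (RecursiveInOracle.comp hf (of_primrec' hg)).of_eq' fun n => by
    simp [PFun.coe_val, Part.bind_eq_bind, Part.bind_some]
    exact Part.bind_some (g n) fp

end RecursiveInOracle

namespace CeerCH
open Nat.Partrec (Code)
open Nat.Partrec.Code

/-- 0 iff the argument is in `T`, as a partial function. -/
noncomputable def memB (T : Set ℕ) : ℕ →. ℕ := fun m => chi T m >>= fun v => Part.some (1 - v)

/-- least element of `T` above `i + 1`, minus `i + 1` -/
noncomputable def uu (T : Set ℕ) : ℕ →. ℕ := fun i =>
  Nat.rfind fun j => (fun m => m = 0) <$> memB T (i + 1 + j)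

/-- least element of `T` -/
noncomputable def fb (T : Set ℕ) : ℕ →. ℕ := fun _ =>
  Nat.rfind fun n => (fun m => m = 0) <$> memB T n

/-- step: from `i`, the least element of `T` greater than `i` -/
noncomputable def gstep (T : Set ℕ) : ℕ →. ℕ := fun x =>
  (Nat.pair <$> Part.some x.unpair.2.unpair.2 <*> uu T x.unpair.2.unpair.2) >>=
    fun q => Part.some (q.unpair.1 + 1 + q.unpair.2)

/-- the `n`-th element of `T`, computed relative to `T` -/
noncomputable def tfun (T : Set ℕ) : ℕ →. ℕ := fun n =>
  Nat.unpaired (fun a m => Nat.rec (fb T a)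
    (fun y IH => IH >>= fun i => gstep T (Nat.pair a (Nat.pair y i))) m) (Nat.pair 0 n)

/-- the candidate characteristic function of the halting set -/
noncomputable def Ffun (T : Set ℕ) : ℕ →. ℕ := fun k =>
  (Nat.pair <$> Part.some k <*> tfun T (k+1)) >>=
    fun q => Part.some (bif halts q.unpair.2 q.unpair.1 then 1 else 0)

variable {T : Set ℕ}

lemma memB_rec : RecursiveInOracle (chi T) (memB T) :=
  (RecursiveInOracle.comp
    (RecursiveInOracle.of_primrec' (Primrec.nat_sub.comp (Primrec.const 1) Primrec.id))
    RecursiveInOracle.oracle).of_eq' fun n => rfl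

lemma memB_val (m : ℕ) :
    memB T m = Part.some (@ite ℕ (m ∈ T) (Classical.propDecidable _) 0 1) := by
  by_cases h : m ∈ T <;>
    simp [memB, chi, h, Part.bind_eq_bind, Part.bind_some]

lemma id_rec : RecursiveInOracle (chi T) (fun n : ℕ => Part.some n) :=
  (RecursiveInOracle.of_primrec' Primrec.id).of_eq' fun n => rfl

lemma fb_rec : RecursiveInOracle (chi T) (fb T) := by
  have h1 : RecursiveInOracle (chi T) (fun q : ℕ => memB T q.unpair.2) :=
    RecursiveInOracle.comp_primrec memB_rec (Primrec.snd.comp Primrec.unpair)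
  exact (RecursiveInOracle.rfind h1).of_eq' fun a => by simp [fb, Nat.unpair_pair]

lemma uu_rec : RecursiveInOracle (chi T) (uu T) := by
  have harith : Primrec fun q : ℕ => q.unpair.1 + 1 + q.unpair.2 :=
    Primrec.nat_add.comp (Primrec.succ.comp (Primrec.fst.comp Primrec.unpair))
      (Primrec.snd.comp Primrec.unpair)
  have h1 : RecursiveInOracle (chi T) (fun q : ℕ => memB T (q.unpair.1 + 1 + q.unpair.2)) :=
    RecursiveInOracle.comp_primrec memB_rec harith
  exact (RecursiveInOracle.rfind h1).of_eq' fun i => by simp [uu, Nat.unpair_pair]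

lemma gstep_rec : RecursiveInOracle (chi T) (gstep T) := by
  have harith : Primrec fun q : ℕ => q.unpair.1 + 1 + q.unpair.2 :=
    Primrec.nat_add.comp (Primrec.succ.comp (Primrec.fst.comp Primrec.unpair))
      (Primrec.snd.comp Primrec.unpair)
  have h1 : RecursiveInOracle (chi T) (fun i : ℕ => Nat.pair <$> Part.some i <*> uu T i) :=
    RecursiveInOracle.pair id_rec uu_rec
  have hproj : Primrec fun x : ℕ => x.unpair.2.unpair.2 :=
    (Primrec.snd.comp Primrec.unpair).comp (Primrec.snd.comp Primrec.unpair)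
  have h2 : RecursiveInOracle (chi T)
      (fun x : ℕ => Nat.pair <$> Part.some x.unpair.2.unpair.2 <*> uu T x.unpair.2.unpair.2) :=
    RecursiveInOracle.comp_primrec h1 hproj
  exact (RecursiveInOracle.comp (RecursiveInOracle.of_primrec' harith) h2).of_eq' fun x => rfl

lemma tfun_rec : RecursiveInOracle (chi T) (tfun T) := by
  have hpair0 : Primrec fun n : ℕ => Nat.pair 0 n :=
    Primrec₂.natPair.comp (Primrec.const 0) Primrec.id
  exact (RecursiveInOracle.comp_primrec (RecursiveInOracle.prec fb_rec gstep_rec) hpair0).of_eq'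
    fun n => rfl

lemma Ffun_rec : RecursiveInOracle (chi T) (Ffun T) := by
  have hcheck : Primrec fun q : ℕ => bif halts q.unpair.2 q.unpair.1 then 1 else 0 :=
    Primrec.cond (halts_primrec.comp (Primrec.snd.comp Primrec.unpair)
        (Primrec.fst.comp Primrec.unpair))
      (Primrec.const 1) (Primrec.const 0)
  have htshift : RecursiveInOracle (chi T) (fun k => tfun T (k+1)) :=
    RecursiveInOracle.comp_primrec tfun_rec Primrec.succ
  have hpairF : RecursiveInOracle (chi T) (fun k : ℕ => Nat.pair <$> Part.some k <*> tfun T (k+1)) :=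
    RecursiveInOracle.pair id_rec htshift
  exact (RecursiveInOracle.comp (RecursiveInOracle.of_primrec' hcheck) hpairF).of_eq' fun k => rfl

lemma tfun_zero : tfun T 0 = fb T 0 := by
  simp [tfun, Nat.unpaired, Nat.unpair_pair]

lemma tfun_succ (n : ℕ) :
    tfun T (n+1) = tfun T n >>= fun i => gstep T (Nat.pair 0 (Nat.pair n i)) := by
  simp [tfun, Nat.unpaired, Nat.unpair_pair]

theorem Rrel_reduction (hTr : IsTransversal Rrel T) (hInf : T.Infinite) :
    TuringRed HaltingSet T := by
  classical
  have hne : ∃ m, m ∈ T := hInf.nonempty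
  have hgt : ∀ a : ℕ, ∃ b, b ∈ T ∧ a < b := fun a => by
    obtain ⟨b, hb, hab⟩ := hInf.exists_gt a
    exact ⟨b, hb, hab⟩
  have main : ∀ n, ∃ v, tfun T n = Part.some v ∧ v ∈ T ∧ mlim n ≤ v := by
    intro n
    induction n with
    | zero =>
      refine ⟨Nat.find hne, ?_, Nat.find_spec hne, by simp⟩
      rw [tfun_zero]
      apply Part.eq_some_iff.mpr
      apply Nat.mem_rfind.mpr
      refine ⟨?_, fun {m} hm => ?_⟩
      · rw [memB_val (Nat.find hne)]
        simp [Nat.find_spec hne]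
      · rw [memB_val m]
        have : m ∉ T := Nat.find_min hne hm
        simp [this]
    | succ n ih =>
      obtain ⟨v, hv, hvT, hvlim⟩ := ih
      have hgt' := hgt v
      have hw := Nat.find_spec hgt'
      set w := Nat.find hgt' with hw_def
      have hj : v + 1 + (w - (v+1)) = w := by have := hw.2; omega
      have huuv : uu T v = Part.some (w - (v+1)) := by
        apply Part.eq_some_iff.mpr
        apply Nat.mem_rfind.mpr
        refine ⟨?_, fun {m} hm => ?_⟩
        · rw [show v + 1 + (w - (v+1)) = w from hj, memB_val w]
          simp [hw.1]
        · rw [memB_val (v+1+m)]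
          have hnot : v+1+m ∉ T := by
            intro hmem
            exact Nat.find_min hgt' (show v+1+m < w by omega) ⟨hmem, by omega⟩
          simp [hnot]
      have hstep : tfun T (n+1) = Part.some w := by
        rw [tfun_succ, hv, Part.bind_eq_bind, Part.bind_some]
        simp only [gstep, Nat.unpair_pair, huuv, Part.map_eq_map, Part.map_some, Seq.seq,
          Part.bind_eq_bind, Part.bind_some]
        rw [hj]
      refine ⟨w, hstep, hw.1, ?_⟩
      by_contra hlt
      push_neg at hlt
      have hR := Rrel_of_interval (j := n) hvlim (le_of_lt hw.2) (by omega)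
      exact hTr v hvT w hw.1 (by omega) hR
  have final : ∀ k, Ffun T k = chi HaltingSet k := by
    intro k
    obtain ⟨v, hv, hvT, hvlim⟩ := main (k+1)
    have hF : Ffun T k = Part.some (bif halts v k then 1 else 0) := by
      simp only [Ffun, hv, Part.map_eq_map, Part.map_some, Seq.seq, Part.bind_eq_bind,
        Part.bind_some, Nat.unpair_pair]
    rw [hF]
    by_cases hk : k ∈ HaltingSet
    · have h1 : halts v k = true := halts_mono hvlim (halts_mlim (Nat.lt_succ_self k) hk)
      simp [chi, hk, h1]
    · have h0 : halts v k = false := by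
        cases h : halts v k
        · rfl
        exfalso
        apply hk
        simp only [halts, Option.isSome_iff_exists] at h
        obtain ⟨x, hx⟩ := h
        exact Part.dom_iff_mem.mpr ⟨x, evaln_sound hx⟩
      simp [chi, hk, h0]
  exact Ffun_rec.of_eq' final

end CeerCH

/-- there is a ceer with only finite classes such that ∅′ is
Turing reducible to every infinite transversal. -/
theorem exists_ceer_finite_classes_transversals_compute_halting :
    ∃ R : ℕ → ℕ → Prop, Ceer R ∧ (∀ x : ℕ, {y | R x y}.Finite) ∧
      ∀ T : Set ℕ, IsTransversal R T → T.Infinite → TuringRed HaltingSet T :=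
  ⟨CeerCH.Rrel, ⟨CeerCH.Rrel_equivalence, CeerCH.Rrel_ce⟩, CeerCH.Rrel_classes_finite,
    fun _ hTr hInf => CeerCH.Rrel_reduction hTr hInf⟩
end

section
/- If a function g : ℕ → ℕ dominates every partial computable function (for each e there is i_e such that for all i ≥ i_e, if φ_e(i) is defined then φ_e(i) < g(i)), then ∅′ ≤_T g. -/
open Nat.Partrec (Code)
open Nat.Partrec.Code in
private lemma RecursiveInOracle.of_partrec_s11 {O : ℕ →. ℕ} {f : ℕ →. ℕ} (h : Nat.Partrec f) :
    RecursiveInOracle O f := by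
  induction h with
  | zero => exact .zero
  | succ => exact .succ
  | left => exact .left
  | right => exact .right
  | pair _ _ ih₁ ih₂ => exact .pair ih₁ ih₂
  | comp _ _ ih₁ ih₂ => exact .comp ih₁ ih₂
  | prec _ _ ih₁ ih₂ => exact .prec ih₁ ih₂
  | rfind _ ih => exact .rfind ih

private lemma patch_computable (N : ℕ) (t : ℕ → ℕ) {h : ℕ → ℕ} (hh : Computable h) :
    Computable fun p : ℕ => if p.unpair.1 < N then t p.unpair.1 else h p := by
  induction N with
  | zero => simpa using hh
  | succ N ih =>
    have heq : (fun p : ℕ => if p.unpair.1 < N + 1 then t p.unpair.1 else h p)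
        = fun p : ℕ => cond (p.unpair.1 == N) (t N)
            (if p.unpair.1 < N then t p.unpair.1 else h p) := by
      funext p
      by_cases he : p.unpair.1 = N
      · simp [he]
      · have hb : (p.unpair.1 == N) = false := by simpa using he
        by_cases hl : p.unpair.1 < N
        · simp [hb, hl, Nat.lt_succ_of_lt hl]
        · have h2 : ¬ p.unpair.1 < N + 1 := by omega
          simp [hb, hl, h2]
    rw [heq]
    have hu1 : Primrec fun p : ℕ => p.unpair.1 := Primrec.fst.comp Primrec.unpair
    exact Computable.cond
      ((Primrec.eq.comp hu1 (Primrec.const N)).decide.to_comp) (Computable.const (t N)) ih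

/-- Martin–Tennenbaum: if g dominates every partial computable
function then ∅′ ≤_T g. -/
theorem halting_le_dominating (g : ℕ → ℕ)
    (hdom : ∀ e : ℕ, ∃ N : ℕ, ∀ i ≥ N,
      ∀ y ∈ (Denumerable.ofNat Nat.Partrec.Code e).eval i, y < g i) :
    RecursiveInOracle (fun n => Part.some (g n)) (chi HaltingSet) := by
  classical
  -- the "runtime of φ_e(e)" partial function
  set θ : ℕ →. ℕ := fun e =>
    Nat.rfind fun k =>
      Part.some ((Nat.Partrec.Code.evaln k (Denumerable.ofNat Code e) e).isSome) with hθ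
  have hu1 : Primrec fun p : ℕ => p.unpair.1 := Primrec.fst.comp Primrec.unpair
  have hprim : Primrec₂ fun e k : ℕ =>
      (Nat.Partrec.Code.evaln k (Denumerable.ofNat Code e) e).isSome :=
    Primrec.option_isSome.comp
      (Nat.Partrec.Code.primrec_evaln.comp
        ((Primrec.snd.pair ((Primrec.ofNat Code).comp Primrec.fst)).pair Primrec.fst))
  have hθp : Nat.Partrec θ := by
    have : Partrec θ := Partrec.rfind (hprim.to_comp.partrec₂)
    exact Partrec.nat_iff.mp this
  obtain ⟨c, hc⟩ := Nat.Partrec.Code.exists_code.mp hθp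
  obtain ⟨N, hN⟩ := hdom (Encodable.encode c)
  rw [Denumerable.ofNat_encode, hc] at hN
  -- key equivalence for large n
  have key : ∀ n ≥ N, (n ∈ HaltingSet ↔
      (Nat.Partrec.Code.evaln (g n) (Denumerable.ofNat Code n) n).isSome = true) := by
    intro n hn
    constructor
    · intro hmem
      obtain ⟨y, hy⟩ := Part.dom_iff_mem.mp hmem
      obtain ⟨k, hk⟩ := Nat.Partrec.Code.evaln_complete.mp hy
      have hkt : (Nat.Partrec.Code.evaln k (Denumerable.ofNat Code n) n).isSome = true :=
        Option.isSome_iff_exists.mpr ⟨y, hk⟩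
      have hdomθ : (θ n).Dom := by
        rw [hθ]
        apply Nat.rfind_dom.mpr
        exact ⟨k, by simp [hkt], fun _ => trivial⟩
      obtain ⟨m, hm⟩ := Part.dom_iff_mem.mp hdomθ
      have hmlt : m < g n := hN n hn m hm
      have hms : true ∈ (fun k : ℕ => Part.some
          ((Nat.Partrec.Code.evaln k (Denumerable.ofNat Code n) n).isSome)) m :=
        Nat.rfind_spec (by rw [hθ] at hm; exact hm)
      have : (Nat.Partrec.Code.evaln m (Denumerable.ofNat Code n) n).isSome = true :=
        (Part.mem_some_iff.mp hms).symm
      obtain ⟨y', hy'⟩ := Option.isSome_iff_exists.mp this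
      exact Option.isSome_iff_exists.mpr
        ⟨y', Nat.Partrec.Code.evaln_mono (le_of_lt hmlt) hy'⟩
    · intro hsome
      obtain ⟨y, hy⟩ := Option.isSome_iff_exists.mp hsome
      exact Part.dom_iff_mem.mpr ⟨y, Nat.Partrec.Code.evaln_sound hy⟩
  -- the total function computing χ_{∅'} from g
  set t : ℕ → ℕ := fun e => @ite ℕ (e ∈ HaltingSet) (Classical.propDecidable _) 1 0 with ht
  set F : ℕ → ℕ := fun p =>
    if p.unpair.1 < N then t p.unpair.1
    else cond (Nat.Partrec.Code.evaln p.unpair.2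
        (Denumerable.ofNat Code p.unpair.1) p.unpair.1).isSome 1 0 with hFdef
  have hFc : Computable F := by
    apply patch_computable
    have hu2 : Primrec fun p : ℕ => p.unpair.2 := Primrec.snd.comp Primrec.unpair
    exact (Primrec.cond
      (Primrec.option_isSome.comp (Nat.Partrec.Code.primrec_evaln.comp
        ((hu2.pair ((Primrec.ofNat Code).comp hu1)).pair hu1)))
      (Primrec.const 1) (Primrec.const 0)).to_comp
  set O : ℕ →. ℕ := fun n => Part.some (g n) with hO
  have hFrec : RecursiveInOracle O ↑F := RecursiveInOracle.of_partrec_s11 (Partrec.nat_iff.mp hFc.partrec)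
  have hid : RecursiveInOracle O ↑(fun n : ℕ => n) :=
    RecursiveInOracle.of_partrec_s11 (Partrec.nat_iff.mp Computable.id.partrec)
  have hpairg : RecursiveInOracle O fun n => Nat.pair <$> (↑(fun n : ℕ => n) : ℕ →. ℕ) n <*> O n :=
    RecursiveInOracle.pair hid RecursiveInOracle.oracle
  have hcomp : RecursiveInOracle O fun n =>
      (Nat.pair <$> (↑(fun n : ℕ => n) : ℕ →. ℕ) n <*> O n) >>= (↑F : ℕ →. ℕ) :=
    RecursiveInOracle.comp hFrec hpairg
  have hfinal : chi HaltingSet = fun n =>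
      (Nat.pair <$> (↑(fun n : ℕ => n) : ℕ →. ℕ) n <*> O n) >>= (↑F : ℕ →. ℕ) := by
    funext n
    have hval : (Nat.pair <$> (↑(fun n : ℕ => n) : ℕ →. ℕ) n <*> O n) >>= (↑F : ℕ →. ℕ)
        = Part.some (F (Nat.pair n (g n))) := by
      simp [hO, Seq.seq, PFun.coe_val]
      exact (Part.bind_some _ _).trans (PFun.coe_val _ _)
    rw [hval]
    show Part.some _ = Part.some (F (Nat.pair n (g n)))
    congr 1
    rw [hFdef]
    simp only [Nat.unpair_pair]
    by_cases hlt : n < N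
    · simp [hlt, ht]
    · have hge : n ≥ N := le_of_not_gt hlt
      by_cases hmem : n ∈ HaltingSet
      · simp [hlt, hmem, (key n hge).mp hmem]
      · have : (Nat.Partrec.Code.evaln (g n) (Denumerable.ofNat Code n) n).isSome = false := by
          rw [← Bool.not_eq_true]
          exact fun hs => hmem ((key n hge).mpr hs)
        simp [hlt, hmem, this]
  rw [hfinal]
  exact hcomp
end

section
/- No ceer all of whose equivalence classes are finite is hyperhyperdark: if R is a ceer with infinitely many classes and every R-class is finite, then R has an infinite transversal that is not hyperhyperimmune, i.e., intersected by a weak disjoint array. -/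
/-- A weak disjoint array: a uniformly c.e. sequence of pairwise-disjoint
finite sets. -/
def WeakArray (F : ℕ → Set ℕ) : Prop :=
  REPred (fun p : ℕ × ℕ => p.2 ∈ F p.1) ∧ (∀ n, (F n).Finite) ∧
    ∀ m n, m ≠ n → Disjoint (F m) (F n)


namespace FCNH

open Nat.Partrec (Code)
open Nat.Partrec.Code

/-- Symmetrized stage-`s` decidable approximation determined by a code. -/
def AS (c : Code) (s a b : ℕ) : Bool :=
  (evaln s c (Nat.pair a b)).isSome || (evaln s c (Nat.pair b a)).isSome

def entry (c : Code) (s : ℕ) (L : List ℕ) (n : ℕ) : ℕ :=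
  L.getD n 0 + cond (((List.range n).map fun m =>
    AS c s (Nat.pair m (L.getD m 0)) (Nat.pair n (L.getD n 0))).foldr (· || ·) false) 1 0

def step (c : Code) (s : ℕ) (L : List ℕ) : List ℕ :=
  (List.range (s + 1)).map (entry c s L)

def verL (c : Code) : ℕ → List ℕ
  | 0 => []
  | s + 1 => step c s (verL c s)

def vers (c : Code) (s n : ℕ) : ℕ := (verL c s).getD n 0

def hitb (c : Code) (s n : ℕ) : Bool :=
  ((List.range n).map fun m =>
    AS c s (Nat.pair m (vers c s m)) (Nat.pair n (vers c s n))).foldr (· || ·) false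

lemma foldr_or_eq_true {α : Type*} (l : List α) (p : α → Bool) :
    ((l.map p).foldr (· || ·) false = true) ↔ ∃ a ∈ l, p a = true := by
  induction l with
  | nil => simp
  | cons b t ih => simp [ih, Bool.or_eq_true]

lemma length_verL (c : Code) (s : ℕ) : (verL c s).length = s := by
  induction s with
  | zero => rfl
  | succ s ih => simp [verL, step]

lemma vers_out (c : Code) {s n : ℕ} (h : s ≤ n) : vers c s n = 0 := by
  unfold vers
  rw [List.getD_eq_default]
  rw [length_verL]; exact h

lemma AS_lt {c : Code} {s a b : ℕ} (h : AS c s a b = true) : a < s ∧ b < s := by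
  have h2 : (evaln s c (Nat.pair a b)).isSome = true ∨ (evaln s c (Nat.pair b a)).isSome = true := by
    simpa [AS, Bool.or_eq_true] using h
  rcases h2 with h' | h' <;> obtain ⟨v, hv⟩ := Option.isSome_iff_exists.1 h' <;>
    have hb := evaln_bound hv
  · exact ⟨lt_of_le_of_lt (Nat.left_le_pair _ _) hb, lt_of_le_of_lt (Nat.right_le_pair _ _) hb⟩
  · exact ⟨lt_of_le_of_lt (Nat.right_le_pair _ _) hb, lt_of_le_of_lt (Nat.left_le_pair _ _) hb⟩


lemma getD_map_range {f : ℕ → ℕ} {n k : ℕ} (h : n < k) :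
    ((List.range k).map f).getD n 0 = f n := by
  rw [List.getD_eq_getElem _ _ (by simpa using h)]
  simp

lemma hitb_iff (c : Code) (s n : ℕ) :
    hitb c s n = true ↔
      ∃ m < n, AS c s (Nat.pair m (vers c s m)) (Nat.pair n (vers c s n)) = true := by
  rw [hitb, foldr_or_eq_true]
  simp [List.mem_range]

lemma hitb_lt {c : Code} {s n : ℕ} (h : hitb c s n = true) : n < s := by
  obtain ⟨m, _, hAS⟩ := (hitb_iff c s n).1 h
  exact lt_of_le_of_lt (Nat.left_le_pair _ _) (AS_lt hAS).2

lemma vers_succ (c : Code) (s n : ℕ) :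
    vers c (s + 1) n = vers c s n + cond (hitb c s n) 1 0 := by
  rcases lt_or_ge n (s + 1) with h | h
  · show (step c s (verL c s)).getD n 0 = _
    rw [step, getD_map_range h, entry]
    rfl
  · have h1 : vers c (s + 1) n = 0 := vers_out c h
    have h2 : vers c s n = 0 := vers_out c (le_trans (Nat.le_succ s) h)
    have h3 : hitb c s n = false := by
      rcases Bool.eq_false_or_eq_true (hitb c s n) with h' | h'
      · exact absurd (hitb_lt h') (by omega)
      · exact h'
    rw [h1, h2, h3]
    rfl

lemma vers_mono (c : Code) (n : ℕ) : Monotone fun s => vers c s n := by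
  apply monotone_nat_of_le_succ
  intro s
  rw [vers_succ]
  cases hitb c s n <;> simp

lemma vers_succ_of_hit {c : Code} {s n : ℕ} (h : hitb c s n = true) :
    vers c (s + 1) n = vers c s n + 1 := by rw [vers_succ, h]; rfl

lemma vers_succ_of_not_hit {c : Code} {s n : ℕ} (h : hitb c s n = false) :
    vers c (s + 1) n = vers c s n := by rw [vers_succ, h]; rfl


lemma AS_prim (c : Code) : Primrec fun z : ℕ × ℕ × ℕ => AS c z.1 z.2.1 z.2.2 := by
  have he : Primrec fun q : ℕ × ℕ => (evaln q.1 c q.2).isSome := by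
    have := primrec_evaln.comp
      ((Primrec.fst.pair (Primrec.const c)).pair (Primrec.snd (α := ℕ) (β := ℕ)))
    exact Primrec.option_isSome.comp this
  exact Primrec.or.comp
    (he.comp (Primrec.fst.pair
      (Primrec₂.natPair.comp (Primrec.fst.comp Primrec.snd) (Primrec.snd.comp Primrec.snd))))
    (he.comp (Primrec.fst.pair
      (Primrec₂.natPair.comp (Primrec.snd.comp Primrec.snd) (Primrec.fst.comp Primrec.snd))))

lemma step_prim (c : Code) : Primrec₂ fun (s : ℕ) (L : List ℕ) => step c s L := by
  have hgetD : Primrec₂ fun (l : List ℕ) (n : ℕ) => l.getD n 0 := Primrec.list_getD 0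
  -- fold: over (x : (ℕ × List ℕ) × ℕ), value entry c x.1.1 x.1.2 x.2
  have hfold : Primrec fun x : (ℕ × List ℕ) × ℕ =>
      ((List.range x.2).map fun m =>
        AS c x.1.1 (Nat.pair m (x.1.2.getD m 0)) (Nat.pair x.2 (x.1.2.getD x.2 0))).foldr
        (· || ·) false := by
    have h := Primrec.list_foldr
      (f := fun x : (ℕ × List ℕ) × ℕ => List.range x.2)
      (g := fun _ : (ℕ × List ℕ) × ℕ => false)
      (h := fun (x : (ℕ × List ℕ) × ℕ) (p : ℕ × Bool) =>
        (AS c x.1.1 (Nat.pair p.1 (x.1.2.getD p.1 0)) (Nat.pair x.2 (x.1.2.getD x.2 0)) || p.2))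
      (Primrec.list_range.comp Primrec.snd) (Primrec.const false)
      (Primrec.or.comp
        ((AS_prim c).comp
          (((Primrec.fst.comp Primrec.fst).comp Primrec.fst).pair
            ((Primrec₂.natPair.comp (Primrec.fst.comp Primrec.snd)
              (hgetD.comp ((Primrec.snd.comp Primrec.fst).comp Primrec.fst)
                (Primrec.fst.comp Primrec.snd))).pair
             (Primrec₂.natPair.comp (Primrec.snd.comp Primrec.fst)
              (hgetD.comp ((Primrec.snd.comp Primrec.fst).comp Primrec.fst)
                (Primrec.snd.comp Primrec.fst))))))
        (Primrec.snd.comp Primrec.snd))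
    refine h.of_eq fun x => ?_
    rw [List.foldr_map]
  have hentry : Primrec₂ fun (x : ℕ × List ℕ) (n : ℕ) => entry c x.1 x.2 n := by
    have := Primrec.nat_add.comp
      (hgetD.comp (Primrec.snd.comp (Primrec.fst (β := ℕ))) Primrec.snd)
      (Primrec.cond hfold (Primrec.const 1) (Primrec.const 0))
    exact this.to₂
  have := Primrec.list_map
    (f := fun x : ℕ × List ℕ => List.range (x.1 + 1))
    (g := fun (x : ℕ × List ℕ) (n : ℕ) => entry c x.1 x.2 n)
    (Primrec.list_range.comp (Primrec.succ.comp Primrec.fst)) hentry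
  exact this.to₂

lemma verL_prim (c : Code) : Primrec (verL c) := by
  have h := Primrec.nat_rec₁ (f := fun s ih => step c s ih) ([] : List ℕ) (step_prim c)
  refine h.of_eq fun n => ?_
  induction n with
  | zero => rfl
  | succ n ih => simp [verL, ih]

lemma vers_prim (c : Code) : Primrec fun q : ℕ × ℕ => vers c q.1 q.2 :=
  (Primrec.list_getD 0).comp ((verL_prim c).comp Primrec.fst) Primrec.snd


open Nat.Partrec.Code in
theorem finite_classes_not_hyperhyperdark' (R : ℕ → ℕ → Prop)
    (hEq : Equivalence R)
    (hce : Partrec fun p : ℕ × ℕ => Part.assert (R p.1 p.2) fun _ => Part.some ())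
    (hfin : ∀ x : ℕ, {y | R x y}.Finite) :
    ∃ (T : Set ℕ) (F : ℕ → Set ℕ),
      (∀ x ∈ T, ∀ y ∈ T, x ≠ y → ¬ R x y) ∧ T.Infinite ∧
      (REPred (fun p : ℕ × ℕ => p.2 ∈ F p.1) ∧ (∀ n, (F n).Finite) ∧
        ∀ m n, m ≠ n → Disjoint (F m) (F n)) ∧ ∀ n, (F n ∩ T).Nonempty := by
  classical
  obtain ⟨c, hc⟩ := Nat.Partrec.Code.exists_code.1 hce
  have HDom : ∀ a b : ℕ, (eval c (Nat.pair a b)).Dom ↔ R a b := by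
    intro a b
    have hab : Nat.pair a b = Encodable.encode ((a, b) : ℕ × ℕ) := rfl
    rw [hab, hc]
    simp [Encodable.encodek]
    exact ⟨fun h => h.fst, fun h => ⟨h, trivial⟩⟩
  have HA : ∀ a b : ℕ, R a b ↔ ∃ s, (evaln s c (Nat.pair a b)).isSome = true := by
    intro a b
    constructor
    · intro h
      obtain ⟨v, hv⟩ := Part.dom_iff_mem.1 ((HDom a b).2 h)
      obtain ⟨k, hk⟩ := evaln_complete.1 hv
      exact ⟨k, Option.isSome_iff_exists.2 ⟨v, hk⟩⟩
    · rintro ⟨s, hs⟩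
      obtain ⟨v, hv⟩ := Option.isSome_iff_exists.1 hs
      exact (HDom a b).1 (Part.dom_iff_mem.2 ⟨v, evaln_sound hv⟩)
  have ASR : ∀ {s a b : ℕ}, AS c s a b = true → R a b := by
    intro s a b h
    have h2 : (evaln s c (Nat.pair a b)).isSome = true ∨
        (evaln s c (Nat.pair b a)).isSome = true := by
      simpa [AS, Bool.or_eq_true] using h
    rcases h2 with h' | h'
    · exact (HA a b).2 ⟨s, h'⟩
    · exact hEq.symm ((HA b a).2 ⟨s, h'⟩)
  have RAS : ∀ {a b : ℕ}, R a b → ∃ s0, ∀ s, s0 ≤ s → AS c s a b = true := by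
    intro a b h
    obtain ⟨s0, hs0⟩ := (HA a b).1 h
    refine ⟨s0, fun s hs => ?_⟩
    obtain ⟨v, hv⟩ := Option.isSome_iff_exists.1 hs0
    have hmem : v ∈ evaln s c (Nat.pair a b) := evaln_mono hs hv
    have : (evaln s c (Nat.pair a b)).isSome = true := Option.isSome_iff_exists.2 ⟨v, hmem⟩
    simp [AS, this]
  -- stabilization of the markers
  have stab : ∀ n, ∃ t, ∀ s, t ≤ s → vers c s n = vers c t n := by
    intro n
    induction n using Nat.strong_induction_on with
    | _ n IH =>
      have hms : ∀ m, ∃ t, m < n → ∀ s, t ≤ s → vers c s m = vers c t m := by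
        intro m
        by_cases h : m < n
        · obtain ⟨t, ht⟩ := IH m h; exact ⟨t, fun _ => ht⟩
        · exact ⟨0, fun h' => absurd h' h⟩
      choose t' ht' using hms
      set t0 := (Finset.range n).sup t' with ht0def
      have ht0 : ∀ m, m < n → ∀ s, t0 ≤ s → vers c s m = vers c t0 m := by
        intro m hm s hs
        have hle : t' m ≤ t0 := Finset.le_sup (Finset.mem_range.2 hm)
        rw [ht' m hm s (le_trans hle hs), ht' m hm t0 hle]
      set C : Set ℕ := ⋃ m ∈ Finset.range n, {y | R (Nat.pair m (vers c t0 m)) y} with hCdef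
      have hCfin : C.Finite :=
        Set.Finite.biUnion (Finset.range n).finite_toSet (fun m _ => hfin _)
      set S : Set ℕ := {s | t0 ≤ s ∧ hitb c s n = true} with hSdef
      have hSfin : S.Finite := by
        by_contra hinf'
        have hSinf : S.Infinite := hinf'
        have hmaps : ∀ s ∈ S, Nat.pair n (vers c s n) ∈ C := by
          rintro s ⟨hts, hhit⟩
          obtain ⟨m, hm, hAS⟩ := (hitb_iff c s n).1 hhit
          have hvm : vers c s m = vers c t0 m := ht0 m hm s hts
          rw [hvm] at hAS
          exact Set.mem_biUnion (Finset.mem_range.2 hm) (ASR hAS)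
        have hinj : Set.InjOn (fun s => Nat.pair n (vers c s n)) S := by
          have key : ∀ u v, u ∈ S → u < v → vers c u n < vers c v n := by
            intro u v hu huv
            have h1 : vers c (u + 1) n = vers c u n + 1 := vers_succ_of_hit hu.2
            have h2 : vers c (u + 1) n ≤ vers c v n := vers_mono c n (by omega)
            omega
          intro u hu v hv heq
          have := (Nat.pair_eq_pair.1 heq).2
          rcases lt_trichotomy u v with h | h | h
          · exact absurd this (Nat.ne_of_lt (key u v hu h))
          · exact h
          · exact absurd this.symm (Nat.ne_of_lt (key v u hv h))
        have : ((fun s => Nat.pair n (vers c s n)) '' S).Infinite :=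
          (Set.infinite_image_iff hinj).2 hSinf
        exact this (hCfin.subset (by rintro y ⟨s, hs, rfl⟩; exact hmaps s hs))
      obtain ⟨B, hB⟩ := hSfin.bddAbove
      refine ⟨max t0 (B + 1), ?_⟩
      have hstep : ∀ s, max t0 (B + 1) ≤ s → hitb c s n = false := by
        intro s hs
        rcases Bool.eq_false_or_eq_true (hitb c s n) with h' | h'
        · have hmem : s ∈ S := ⟨le_trans (le_max_left _ _) hs, h'⟩
          have := hB hmem
          omega
        · exact h'
      intro s hs
      induction s, hs using Nat.le_induction with
      | base => rfl
      | succ s hs ih => rw [vers_succ_of_not_hit (hstep s hs), ih]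
  choose tN htN using stab
  have hVle : ∀ s n, vers c s n ≤ vers c (tN n) n := by
    intro s n
    calc vers c s n ≤ vers c (max s (tN n)) n := vers_mono c n (le_max_left _ _)
      _ = vers c (tN n) n := htN n _ (le_max_right _ _)
  refine ⟨Set.range (fun n => Nat.pair n (vers c (tN n) n)),
    fun n => {y | ∃ s, y = Nat.pair n (vers c s n)}, ?_, ?_, ⟨?_, ?_, ?_⟩, ?_⟩
  · -- transversal
    have main : ∀ m n, m < n →
        ¬ R (Nat.pair m (vers c (tN m) m)) (Nat.pair n (vers c (tN n) n)) := by
      intro m n hmn hRmn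
      obtain ⟨s0, hs0⟩ := RAS hRmn
      set s := max (max s0 (tN m)) (tN n) with hsdef
      have hm' : vers c s m = vers c (tN m) m :=
        htN m s (le_trans (le_max_right s0 (tN m)) (le_max_left _ _))
      have hn' : vers c s n = vers c (tN n) n := htN n s (le_max_right _ _)
      have hAS : AS c s (Nat.pair m (vers c s m)) (Nat.pair n (vers c s n)) = true := by
        rw [hm', hn']
        exact hs0 s (le_trans (le_max_left s0 (tN m)) (le_max_left _ _))
      have hhit : hitb c s n = true := (hitb_iff c s n).2 ⟨m, hmn, hAS⟩
      have h1 : vers c (s + 1) n = vers c s n + 1 := vers_succ_of_hit hhit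
      have h2 : vers c (s + 1) n = vers c (tN n) n :=
        htN n (s + 1) (le_trans (le_max_right _ _) (Nat.le_succ s))
      rw [hn'] at h1
      omega
    rintro x ⟨m, rfl⟩ y ⟨n, rfl⟩ hne hRxy
    have hmn : m ≠ n := by rintro rfl; exact hne rfl
    rcases lt_or_gt_of_ne hmn with h | h
    · exact main m n h hRxy
    · exact main n m h (hEq.symm hRxy)
  · -- infinite
    exact Set.infinite_range_of_injective (fun m n h => (Nat.pair_eq_pair.1 h).1)
  · -- RePred
    have hg : Computable fun q : (ℕ × ℕ) × ℕ =>
        decide (q.1.2 = Nat.pair q.1.1 (vers c q.2 q.1.1)) := by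
      apply Primrec.to_comp
      exact PrimrecPred.decide <| Primrec.eq.comp (Primrec.snd.comp Primrec.fst)
        (Primrec₂.natPair.comp (Primrec.fst.comp Primrec.fst)
          ((vers_prim c).comp (Primrec.snd.pair (Primrec.fst.comp Primrec.fst))))
    have hg2 : Computable₂ fun (p : ℕ × ℕ) (s : ℕ) =>
        decide (p.2 = Nat.pair p.1 (vers c s p.1)) := hg
    have hpart : Partrec fun p : ℕ × ℕ =>
        Nat.rfind fun s => (Part.some (decide (p.2 = Nat.pair p.1 (vers c s p.1))) : Part Bool) :=
      Partrec.rfind hg2.partrec₂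
    refine hpart.dom_re.of_eq fun p => ?_
    refine Nat.rfind_dom.trans ?_
    constructor
    · rintro ⟨s, h1, _⟩
      exact ⟨s, of_decide_eq_true (Part.mem_some_iff.1 h1).symm⟩
    · rintro ⟨s, h1⟩
      exact ⟨s, Part.mem_some_iff.2 (decide_eq_true h1).symm, fun {m} _ => trivial⟩
  · -- finite
    intro n
    apply Set.Finite.subset ((Set.finite_Iic (vers c (tN n) n)).image (Nat.pair n))
    rintro y ⟨s, rfl⟩
    exact ⟨vers c s n, hVle s n, rfl⟩
  · -- disjoint
    intro m n hmn
    rw [Set.disjoint_left]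
    rintro y ⟨s, rfl⟩ ⟨s', heq⟩
    exact hmn (Nat.pair_eq_pair.1 heq).1
  · -- meets T
    intro n
    exact ⟨Nat.pair n (vers c (tN n) n), ⟨tN n, rfl⟩, ⟨n, rfl⟩⟩

end FCNH


/-- a ceer with infinitely many classes, all finite, has an
infinite transversal that is not hyperhyperimmune, i.e. intersected by a weak
disjoint array. -/
theorem finite_classes_not_hyperhyperdark (R : ℕ → ℕ → Prop) (hR : Ceer R)
    (hinf : InfiniteClasses R) (hfin : ∀ x : ℕ, {y | R x y}.Finite) :
    ∃ (T : Set ℕ) (F : ℕ → Set ℕ), IsTransversal R T ∧ T.Infinite ∧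
      WeakArray F ∧ ∀ n, (F n ∩ T).Nonempty := by
  obtain ⟨T, F, h1, h2, h3, h4⟩ := FCNH.finite_classes_not_hyperhyperdark' R hR.1 hR.2 hfin
  exact ⟨T, F, h1, h2, h3, h4⟩
end

section
/- For every ceer R, the semigroup S(R) presented on generators {a, b} by the relations {a b^{i+1} a = a b^{j+1} a : i R j} ∪ {v = w : v, w both properly contain a subword of the form a b^i a with i ≥ 1} has word problem computably bi-reducible with R ⊕ Id_ω, where Id_ω is the identity relation on ℕ. -/
/-- The free semigroup on the two generators a, b, realized as nonempty words:
a first letter together with the list of remaining letters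
(`false` codes a, `true` codes b). -/
abbrev Word : Type := Bool × List Bool

instance : Mul Word := ⟨fun u v => (u.1, u.2 ++ v.1 :: v.2)⟩

instance : Semigroup Word :=
  { mul_assoc := by intro a b c; simp [HMul.hMul, Mul.mul] }

/-- The underlying list of letters of a word. -/
def wlist (u : Word) : List Bool := u.1 :: u.2

/-- `Subword y x`: y occurs as a (contiguous) subword of x. -/
def Subword (y x : Word) : Prop :=
  ∃ p s : List Bool, wlist x = p ++ wlist y ++ s

/-- The coding word a b^i a. -/
def abia (i : ℕ) : Word := (false, List.replicate i true ++ [false])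

/-- Words of the set C: coding words a b^i a, i ≠ 0. -/
def isCoding (u : Word) : Prop := ∃ i : ℕ, i ≠ 0 ∧ u = abia i

/-- Words of C₊ : words which properly contain a coding word as a subword. -/
def inCplus (u : Word) : Prop :=
  ¬ isCoding u ∧ ∃ i : ℕ, i ≠ 0 ∧ Subword (abia i) u

/-- Computable reducibility between equivalence relations on coded types. -/
def ReducesT {α β : Type} [Primcodable α] [Primcodable β]
    (R : α → α → Prop) (S : β → β → Prop) : Prop :=
  ∃ f : α → β, Computable f ∧ ∀ x y, R x y ↔ S (f x) (f y)

/-- The uniform join of two equivalence relations on ℕ (evens code the first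
relation, odds the second). -/
def rjoin (R S : ℕ → ℕ → Prop) : ℕ → ℕ → Prop := fun x y =>
  (∃ a b, x = 2 * a ∧ y = 2 * b ∧ R a b) ∨
  (∃ a b, x = 2 * a + 1 ∧ y = 2 * b + 1 ∧ S a b)

/-- The defining relations of the semigroup S(R). -/
def baseRel (R : ℕ → ℕ → Prop) : Word → Word → Prop := fun u v =>
  (∃ i j, R i j ∧ u = abia (i + 1) ∧ v = abia (j + 1)) ∨ (inCplus u ∧ inCplus v)

/-- The word problem of S(R): the semigroup congruence generated by the
defining relations. -/
def wordProblemS (R : ℕ → ℕ → Prop) : Word → Word → Prop :=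
  fun u v => conGen (baseRel R) u v


/-! ### Auxiliary development -/

section Aux

open List Primrec

/-- A word contains some coding word as a (not necessarily proper) subword. -/
def hasC (u : Word) : Prop := ∃ i : ℕ, i ≠ 0 ∧ Subword (abia i) u

lemma wlist_mul (u v : Word) : wlist (u * v) = wlist u ++ wlist v := rfl

lemma abia_wlist (i : ℕ) :
    wlist (abia i) = false :: (List.replicate i true ++ [false]) := rfl

lemma wlist_inj : Function.Injective wlist := by
  rintro ⟨a, l⟩ ⟨b, m⟩ h
  simpa [wlist, Prod.ext_iff] using h

lemma abia_inj : Function.Injective abia := by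
  intro i j h
  have := congrArg (fun u : Word => u.2.length) h
  simpa [abia] using this

lemma isCoding_abia (i : ℕ) : isCoding (abia (i + 1)) := ⟨i + 1, by omega, rfl⟩

lemma count_abia (i : ℕ) : (wlist (abia i)).count false = 2 := by
  simp [abia_wlist, List.count_cons, List.count_append, List.count_replicate]

lemma hasC_count {u : Word} (h : hasC u) : 2 ≤ (wlist u).count false := by
  obtain ⟨i, hi, p, s, hps⟩ := h
  rw [hps]
  have := count_abia i
  simp [List.count_append] at this ⊢
  omega

lemma false_mem_of_hasC {u : Word} (h : hasC u) : false ∈ wlist u := by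
  obtain ⟨i, hi, p, s, hps⟩ := h
  rw [hps]
  simp [abia_wlist]

lemma hasC_abia (i : ℕ) : hasC (abia (i + 1)) :=
  ⟨i + 1, by omega, [], [], by simp⟩

lemma hasC_of_isCoding {u : Word} (h : isCoding u) : hasC u := by
  obtain ⟨i, hi, rfl⟩ := h
  exact ⟨i, hi, [], [], by simp⟩

lemma hasC_of_inCplus {u : Word} (h : inCplus u) : hasC u := h.2

lemma getLast?_abia (i : ℕ) : (wlist (abia i)).getLast? = some false := by
  have h : wlist (abia i) = (false :: List.replicate i true) ++ [false] := by
    simp [abia_wlist]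
  rw [h, List.getLast?_concat]

lemma notCoding_mul {u v : Word} (h : hasC u ∨ hasC v) : ¬ isCoding (u * v) := by
  rintro ⟨i, hi, he⟩
  have hcnt : (wlist u).count false + (wlist v).count false = 2 := by
    have := congrArg (fun w : Word => (wlist w).count false) he
    simp only [wlist_mul, List.count_append] at this
    rw [this, count_abia]
  have h1 : 1 ≤ (wlist u).count false := by
    have hf : u.1 = false := congrArg Prod.fst he
    have : u.1 ∈ wlist u := by simp [wlist]
    rw [hf] at this
    exact List.count_pos_iff.2 this
  have h2 : 1 ≤ (wlist v).count false := by
    have hl : (wlist (u * v)).getLast? = some false := by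
      rw [he]; exact getLast?_abia i
    rw [wlist_mul, List.getLast?_append_of_ne_nil _ (by simp [wlist])] at hl
    obtain ⟨hne, hx⟩ := List.mem_getLast?_eq_getLast hl
    have : false ∈ wlist v := hx ▸ List.getLast_mem hne
    exact List.count_pos_iff.2 this
  rcases h with h | h
  · exact absurd (hasC_count h) (by omega)
  · exact absurd (hasC_count h) (by omega)

lemma hasC_mul_left {u : Word} (h : hasC u) (v : Word) : hasC (u * v) := by
  obtain ⟨i, hi, p, s, hp⟩ := h
  exact ⟨i, hi, p, s ++ wlist v, by rw [wlist_mul, hp]; simp⟩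

lemma hasC_mul_right {v : Word} (h : hasC v) (u : Word) : hasC (u * v) := by
  obtain ⟨i, hi, p, s, hp⟩ := h
  exact ⟨i, hi, wlist u ++ p, s, by rw [wlist_mul, hp]; simp⟩

lemma inCplus_mul {u v : Word} (h : hasC u ∨ hasC v) : inCplus (u * v) := by
  refine ⟨notCoding_mul h, ?_⟩
  rcases h with h | h
  · exact hasC_mul_left h v
  · exact hasC_mul_right h u

/-- The explicit description of the congruence generated by `baseRel R`. -/
def Erel (R : ℕ → ℕ → Prop) : Word → Word → Prop := fun u v =>
  (∃ i j, R i j ∧ u = abia (i + 1) ∧ v = abia (j + 1)) ∨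
    (inCplus u ∧ inCplus v) ∨ u = v

lemma Erel_hasC {R : ℕ → ℕ → Prop} {u v : Word} (h : Erel R u v) :
    u = v ∨ (hasC u ∧ hasC v) := by
  rcases h with ⟨i, j, _, rfl, rfl⟩ | ⟨h1, h2⟩ | rfl
  · exact Or.inr ⟨hasC_abia i, hasC_abia j⟩
  · exact Or.inr ⟨hasC_of_inCplus h1, hasC_of_inCplus h2⟩
  · exact Or.inl rfl

/-- `Erel R` as a congruence on `Word`. -/
def Econ (R : ℕ → ℕ → Prop) (hR : Equivalence R) : Con Word where
  r := Erel R
  iseqv := by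
    refine ⟨fun u => Or.inr (Or.inr rfl), ?_, ?_⟩
    · rintro u v (⟨i, j, hij, hu, hv⟩ | ⟨h1, h2⟩ | rfl)
      · exact Or.inl ⟨j, i, hR.symm hij, hv, hu⟩
      · exact Or.inr (Or.inl ⟨h2, h1⟩)
      · exact Or.inr (Or.inr rfl)
    · rintro u v w (⟨i, j, hij, hu, hv⟩ | ⟨h1, h2⟩ | rfl)
        (⟨i', j', hij', hv', hw⟩ | ⟨h1', h2'⟩ | heq)
      · have : j = i' := by
          have := abia_inj (hv.symm.trans hv')
          omega
        subst this
        exact Or.inl ⟨i, j', hR.trans hij hij', hu, hw⟩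
      · subst hv
        exact absurd (isCoding_abia j) h1'.1
      · subst heq
        exact Or.inl ⟨i, j, hij, hu, hv⟩
      · subst hv'
        exact absurd (isCoding_abia i') h2.1
      · exact Or.inr (Or.inl ⟨h1, h2'⟩)
      · subst heq
        exact Or.inr (Or.inl ⟨h1, h2⟩)
      · exact Or.inl ⟨i', j', hij', hv', hw⟩
      · exact Or.inr (Or.inl ⟨h1', h2'⟩)
      · subst heq
        exact Or.inr (Or.inr rfl)
  mul' := by
    intro w x y z h1 h2
    rcases Erel_hasC h1 with rfl | hc1
    · rcases Erel_hasC h2 with rfl | hc2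
      · exact Or.inr (Or.inr rfl)
      · exact Or.inr (Or.inl ⟨inCplus_mul (Or.inr hc2.1), inCplus_mul (Or.inr hc2.2)⟩)
    · exact Or.inr (Or.inl ⟨inCplus_mul (Or.inl hc1.1), inCplus_mul (Or.inl hc1.2)⟩)

lemma wp_iff {R : ℕ → ℕ → Prop} (hR : Equivalence R) (u v : Word) :
    wordProblemS R u v ↔ Erel R u v := by
  constructor
  · intro h
    refine (Con.conGen_le (c := Econ R hR)).2 (fun a b hab => ?_) h
    rcases hab with (⟨i, j, hij, ha, hb⟩ | ⟨ha, hb⟩)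
    · exact Or.inl ⟨i, j, hij, ha, hb⟩
    · exact Or.inr (Or.inl ⟨ha, hb⟩)
  · rintro (⟨i, j, hij, rfl, rfl⟩ | ⟨h1, h2⟩ | rfl)
    · exact ConGen.Rel.of _ _ (Or.inl ⟨i, j, hij, rfl, rfl⟩)
    · exact ConGen.Rel.of _ _ (Or.inr ⟨h1, h2⟩)
    · exact ConGen.Rel.refl _

/-! ### The reduction functions -/

/-- Auxiliary boolean test for containing a `false`. -/
def anyFalse : List Bool → Bool := fun l => l.foldr (fun b r => !b || r) false

lemma anyFalse_iff (l : List Bool) : anyFalse l = true ↔ false ∈ l := by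
  induction l with
  | nil => simp [anyFalse]
  | cons a l ih =>
    cases a <;> simp [anyFalse, List.foldr_cons] at ih ⊢ <;> tauto

/-- Boolean test for containing a coding subword. -/
def cchk : List Bool → Bool
  | [] => false
  | a :: l => ((!a) && l.headI && anyFalse l) || cchk l

lemma mem_false_split {l : List Bool} (h : false ∈ l) :
    ∃ k s, l = List.replicate k true ++ false :: s := by
  induction l with
  | nil => simp at h
  | cons a l ih =>
    cases a
    · exact ⟨0, l, rfl⟩
    · have : false ∈ l := by simpa using h
      obtain ⟨k, s, rfl⟩ := ih this
      exact ⟨k + 1, s, rfl⟩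

lemma cchk_iff (L : List Bool) :
    cchk L = true ↔ ∃ i : ℕ, i ≠ 0 ∧ ∃ p s, L = p ++ wlist (abia i) ++ s := by
  induction L with
  | nil =>
    constructor
    · intro h; simp [cchk] at h
    · rintro ⟨i, hi, p, s, hp⟩
      have := congrArg List.length hp
      simp [abia_wlist] at this
  | cons a L ih =>
    simp only [cchk, Bool.or_eq_true, ih]
    constructor
    · rintro (hc | ⟨i, hi, p, s, rfl⟩)
      · simp only [Bool.and_eq_true, Bool.not_eq_true'] at hc
        obtain ⟨⟨ha, hh⟩, hf⟩ := hc
        subst ha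
        rcases L with _ | ⟨b, L'⟩
        · simp [List.headI] at hh
        · have hb : b = true := by simpa using hh
          subst hb
          have hfL : false ∈ L' := by
            have := (anyFalse_iff _).1 hf
            simpa using this
          obtain ⟨k, s, rfl⟩ := mem_false_split hfL
          refine ⟨k + 1, by omega, [], s, ?_⟩
          simp [abia_wlist, List.replicate_succ]
      · exact ⟨i, hi, a :: p, s, by simp⟩
    · rintro ⟨i, hi, p, s, hp⟩
      rcases p with _ | ⟨c, p'⟩
      · left
        obtain ⟨i', rfl⟩ : ∃ i', i = i' + 1 := ⟨i - 1, by omega⟩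
        rw [abia_wlist] at hp
        simp only [List.nil_append, List.cons_append, List.cons.injEq] at hp
        obtain ⟨rfl, hL⟩ := hp
        rw [hL]
        simp [List.replicate_succ, anyFalse_iff]
      · right
        rw [List.cons_append, List.cons_append, List.cons.injEq] at hp
        exact ⟨i, hi, p', s, hp.2⟩

lemma hasC_iff_cchk (u : Word) : hasC u ↔ cchk (wlist u) = true := by
  rw [cchk_iff]
  constructor
  · rintro ⟨i, hi, p, s, hp⟩; exact ⟨i, hi, p, s, hp⟩
  · rintro ⟨i, hi, p, s, hp⟩; exact ⟨i, hi, p, s, hp⟩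

/-- The coding-word test. -/
def codingTest (u : Word) : Prop :=
  3 ≤ (wlist u).length ∧
    wlist u = false :: (List.replicate ((wlist u).length - 2) true ++ [false])

instance : DecidablePred codingTest := fun u => by unfold codingTest; infer_instance

lemma wlist_abia_length (i : ℕ) : (wlist (abia i)).length = i + 2 := by
  simp [abia_wlist]

lemma codingTest_iff (u : Word) : codingTest u ↔ ∃ i, u = abia (i + 1) := by
  constructor
  · rintro ⟨h3, he⟩
    refine ⟨(wlist u).length - 3, wlist_inj ?_⟩
    have h4 : (wlist u).length - 2 = ((wlist u).length - 3) + 1 := by omega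
    rw [abia_wlist, ← h4]
    exact he
  · rintro ⟨i, rfl⟩
    refine ⟨by rw [wlist_abia_length]; omega, ?_⟩
    rw [wlist_abia_length, Nat.add_sub_cancel]
    exact abia_wlist _

lemma codingTest_iff' (u : Word) : codingTest u ↔ isCoding u := by
  rw [codingTest_iff]
  constructor
  · rintro ⟨i, rfl⟩; exact isCoding_abia i
  · rintro ⟨i, hi, rfl⟩
    obtain ⟨i', rfl⟩ : ∃ i', i = i' + 1 := ⟨i - 1, by omega⟩
    exact ⟨i', rfl⟩

/-- The forward reduction function. -/
def fword (u : Word) : ℕ :=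
  if codingTest u then 2 * ((wlist u).length - 3)
  else if cchk (wlist u) = true then 1
  else 2 * Encodable.encode u + 3

lemma fword_abia (i : ℕ) : fword (abia (i + 1)) = 2 * i := by
  rw [fword, if_pos ((codingTest_iff _).2 ⟨i, rfl⟩), wlist_abia_length]
  omega

lemma fword_inCplus {u : Word} (h : inCplus u) : fword u = 1 := by
  rw [fword, if_neg (fun hc => h.1 ((codingTest_iff' u).1 hc)),
    if_pos ((hasC_iff_cchk u).1 h.2)]

lemma fword_rigid {u : Word} (h1 : ¬ isCoding u) (h2 : ¬ hasC u) :
    fword u = 2 * Encodable.encode u + 3 := by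
  rw [fword, if_neg (fun hc => h1 ((codingTest_iff' u).1 hc)),
    if_neg (fun hc => h2 ((hasC_iff_cchk u).2 hc))]

lemma fword_cases (u : Word) :
    (∃ i, u = abia (i + 1) ∧ fword u = 2 * i) ∨
      (inCplus u ∧ fword u = 1) ∨
      (¬ isCoding u ∧ ¬ hasC u ∧ fword u = 2 * Encodable.encode u + 3) := by
  by_cases hc : codingTest u
  · obtain ⟨i, rfl⟩ := (codingTest_iff u).1 hc
    exact Or.inl ⟨i, rfl, fword_abia i⟩
  · have hnc : ¬ isCoding u := fun h => hc ((codingTest_iff' u).2 h)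
    by_cases hh : hasC u
    · exact Or.inr (Or.inl ⟨⟨hnc, hh⟩, fword_inCplus ⟨hnc, hh⟩⟩)
    · exact Or.inr (Or.inr ⟨hnc, hh, fword_rigid hnc hh⟩)

/-- The backward reduction function. -/
def gnum (n : ℕ) : Word :=
  if n % 2 = 0 then abia (n / 2 + 1) else (true, List.replicate (n / 2) true)

lemma gnum_even (a : ℕ) : gnum (2 * a) = abia (a + 1) := by
  simp [gnum, Nat.mul_div_cancel_left]

lemma gnum_odd (a : ℕ) : gnum (2 * a + 1) = (true, List.replicate a true) := by
  have h1 : (2 * a + 1) % 2 = 1 := by omega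
  have h2 : (2 * a + 1) / 2 = a := by omega
  simp [gnum, h1, h2]

lemma rjoin_refl {R : ℕ → ℕ → Prop} (hR : Equivalence R) (n : ℕ) :
    rjoin R (· = ·) n n := by
  rcases Nat.even_or_odd n with ⟨a, ha⟩ | ⟨a, ha⟩
  · exact Or.inl ⟨a, a, by omega, by omega, hR.refl a⟩
  · exact Or.inr ⟨a, a, by omega, by omega, rfl⟩

lemma not_hasC_bword (m : ℕ) : ¬ hasC (true, List.replicate m true) := by
  intro h
  have hm := false_mem_of_hasC h
  rw [wlist] at hm
  rcases List.mem_cons.1 hm with h' | h'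
  · exact Bool.noConfusion h'
  · exact Bool.noConfusion (List.eq_of_mem_replicate h')

lemma not_inCplus_gnum (n : ℕ) : ¬ inCplus (gnum n) := by
  unfold gnum
  split
  · intro h; exact h.1 (isCoding_abia _)
  · intro h; exact not_hasC_bword _ h.2

lemma gnum_eq_abia {x i : ℕ} (h : gnum x = abia (i + 1)) : x = 2 * i := by
  unfold gnum at h
  split at h
  · have := abia_inj h
    omega
  · exact absurd (congrArg Prod.fst h) (by simp [abia])

lemma gnum_inj : Function.Injective gnum := by
  intro x y h
  unfold gnum at h
  split at h <;> split at h
  · have := abia_inj h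
    omega
  · exact absurd (congrArg Prod.fst h) (by simp [abia])
  · exact absurd (congrArg Prod.fst h) (by simp [abia])
  · have := congrArg (fun u : Word => u.2.length) h
    simp at this
    omega

/-! ### Computability -/

lemma primrec_wl : Primrec wlist :=
  (Primrec.list_cons.comp Primrec.fst Primrec.snd).of_eq fun u => rfl

lemma primrec_repTrue : Primrec (fun n : ℕ => List.replicate n true) :=
  (Primrec.list_map Primrec.list_range ((Primrec.const true).comp Primrec.fst).to₂).of_eq
    fun n => by simp [List.map_const']

lemma primrec_anyFalse : Primrec anyFalse :=
  (Primrec.list_foldr Primrec.id (Primrec.const false)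
    ((Primrec.or.comp (Primrec.not.comp (Primrec.fst.comp Primrec.snd))
      (Primrec.snd.comp Primrec.snd)).to₂)).of_eq fun l => rfl

lemma primrec_cchk : Primrec cchk := by
  have h : Primrec₂ (fun (_ : List Bool) (p : Bool × List Bool × Bool) =>
      ((!p.1) && p.2.1.headI && anyFalse p.2.1) || p.2.2) :=
    (Primrec.or.comp
      (Primrec.and.comp
        (Primrec.and.comp (Primrec.not.comp (Primrec.fst.comp Primrec.snd))
          (Primrec.list_headI.comp (Primrec.fst.comp (Primrec.snd.comp Primrec.snd))))
        (primrec_anyFalse.comp (Primrec.fst.comp (Primrec.snd.comp Primrec.snd))))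
      (Primrec.snd.comp (Primrec.snd.comp Primrec.snd))).to₂
  exact (Primrec.list_rec Primrec.id (Primrec.const false) h).of_eq fun L => by
    induction L with
    | nil => rfl
    | cons a l ih => simp only [cchk]; rw [← ih]; rfl

lemma primrec_codingTest : PrimrecPred codingTest := by
  have h1 : PrimrecPred fun u : Word => 3 ≤ (wlist u).length :=
    Primrec.nat_le.comp (Primrec.const 3) (Primrec.list_length.comp primrec_wl)
  have h2 : PrimrecPred fun u : Word =>
      wlist u = false :: (List.replicate ((wlist u).length - 2) true ++ [false]) :=
    Primrec.eq.comp primrec_wl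
      (Primrec.list_cons.comp (Primrec.const false)
        (Primrec.list_append.comp
          (primrec_repTrue.comp
            (Primrec.nat_sub.comp (Primrec.list_length.comp primrec_wl) (Primrec.const 2)))
          (Primrec.const [false])))
  exact (h1.and h2).of_eq fun u => by rfl

lemma primrec_fword : Primrec fword := by
  refine Primrec.ite primrec_codingTest
    (Primrec.nat_mul.comp (Primrec.const 2)
      (Primrec.nat_sub.comp (Primrec.list_length.comp primrec_wl) (Primrec.const 3)))
    (Primrec.ite
      (Primrec.eq.comp (primrec_cchk.comp primrec_wl) (Primrec.const true))
      (Primrec.const 1)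
      (Primrec.nat_add.comp
        (Primrec.nat_mul.comp (Primrec.const 2) Primrec.encode) (Primrec.const 3)))

lemma primrec_gnum : Primrec gnum := by
  refine Primrec.ite
    (Primrec.eq.comp (Primrec.nat_mod.comp Primrec.id (Primrec.const 2)) (Primrec.const 0))
    ((Primrec.pair (Primrec.const false)
      (Primrec.list_append.comp
        (primrec_repTrue.comp
          (Primrec.nat_add.comp (Primrec.nat_div.comp Primrec.id (Primrec.const 2))
            (Primrec.const 1)))
        (Primrec.const [false]))).of_eq fun n => rfl)
    (Primrec.pair (Primrec.const true)
      (primrec_repTrue.comp (Primrec.nat_div.comp Primrec.id (Primrec.const 2))))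

/-! ### Correctness of the reductions -/

lemma forward_iff {R : ℕ → ℕ → Prop} (hR : Equivalence R) (u v : Word) :
    Erel R u v ↔ rjoin R (· = ·) (fword u) (fword v) := by
  constructor
  · rintro (⟨i, j, hij, rfl, rfl⟩ | ⟨h1, h2⟩ | rfl)
    · exact Or.inl ⟨i, j, fword_abia i, fword_abia j, hij⟩
    · exact Or.inr ⟨0, 0, by rw [fword_inCplus h1], by rw [fword_inCplus h2], rfl⟩
    · exact rjoin_refl hR _
  · rintro (⟨a, b, ha, hb, hab⟩ | ⟨a, b, ha, hb, hab⟩)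
    · rcases fword_cases u with ⟨i, rfl, hi⟩ | ⟨_, h1⟩ | ⟨_, _, h1⟩
      · rcases fword_cases v with ⟨j, rfl, hj⟩ | ⟨_, h2⟩ | ⟨_, _, h2⟩
        · have hia : i = a := by omega
          have hjb : j = b := by omega
          exact Or.inl ⟨i, j, by rw [hia, hjb] at *; exact hab, rfl, rfl⟩
        · omega
        · omega
      · omega
      · omega
    · subst hab
      rcases fword_cases u with ⟨i, rfl, h1⟩ | ⟨hc1, h1⟩ | ⟨_, _, h1⟩ <;>
        rcases fword_cases v with ⟨j, rfl, h2⟩ | ⟨hc2, h2⟩ | ⟨_, _, h2⟩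
      · omega
      · omega
      · omega
      · omega
      · exact Or.inr (Or.inl ⟨hc1, hc2⟩)
      · omega
      · omega
      · omega
      · have : Encodable.encode u = Encodable.encode v := by omega
        exact Or.inr (Or.inr (Encodable.encode_injective this))

lemma backward_iff {R : ℕ → ℕ → Prop} (hR : Equivalence R) (x y : ℕ) :
    rjoin R (· = ·) x y ↔ Erel R (gnum x) (gnum y) := by
  constructor
  · rintro (⟨a, b, rfl, rfl, hab⟩ | ⟨a, b, rfl, rfl, rfl⟩)
    · exact Or.inl ⟨a, b, hab, gnum_even a, gnum_even b⟩
    · exact Or.inr (Or.inr rfl)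
  · rintro (⟨i, j, hij, hu, hv⟩ | ⟨h1, h2⟩ | heq)
    · exact Or.inl ⟨i, j, gnum_eq_abia hu, gnum_eq_abia hv, hij⟩
    · exact absurd h1 (not_inCplus_gnum x)
    · have := gnum_inj heq
      subst this
      exact rjoin_refl hR x

end Aux

/-- the word problem of S(R) is computably bi-reducible with
R ⊕ Id_ω. -/
theorem wordProblemS_equiv (R : ℕ → ℕ → Prop) (hR : Ceer R) :
    ReducesT (wordProblemS R) (rjoin R (· = ·)) ∧
      ReducesT (rjoin R (· = ·)) (wordProblemS R) := by
  obtain ⟨hEq, _⟩ := hR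
  constructor
  · exact ⟨fword, primrec_fword.to_comp,
      fun u v => by rw [wp_iff hEq]; exact forward_iff hEq u v⟩
  · exact ⟨gnum, primrec_gnum.to_comp,
      fun x y => by rw [wp_iff hEq (gnum x) (gnum y)]; exact backward_iff hEq x y⟩
end

section
/- If R is a ceer satisfying R ≡_c R ⊕ Id_ω, then there exists a two-generator c.e. semigroup S such that the word problem =_S is computably bi-reducible with R. -/
namespace CeerAux

open List

/-! ### Boolean recognizers -/

def afterB : List Bool → Bool
  | [] => false
  | false :: _ => true
  | true :: l => afterB l

def startsAB (l : List Bool) : Bool := l.headI && afterB l.tail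

def hasSubB : List Bool → Bool
  | [] => false
  | a :: l => hasSubB l || (!a && startsAB l)

def codB : List Bool → Bool
  | [] => false
  | false :: l => l.isEmpty
  | true :: l => codB l

def isCodingB (u : Word) : Bool := !u.1 && (u.2.headI && codB u.2.tail)

def inCplusB (u : Word) : Bool := !isCodingB u && hasSubB (wlist u)

lemma afterB_iff (l : List Bool) :
    afterB l = true ↔ ∃ k r, l = List.replicate k true ++ false :: r := by
  induction l with
  | nil =>
    simp only [afterB, Bool.false_eq_true, false_iff]
    rintro ⟨k, r, h⟩
    cases k <;> simp [List.replicate_succ] at h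
  | cons a l ih =>
    cases a with
    | false =>
      simp only [afterB, true_iff]
      exact ⟨0, l, by simp⟩
    | true =>
      simp only [afterB, ih]
      constructor
      · rintro ⟨k, r, rfl⟩
        exact ⟨k + 1, r, by simp [List.replicate_succ]⟩
      · rintro ⟨k, r, h⟩
        cases k with
        | zero => simp at h
        | succ k =>
          simp [List.replicate_succ] at h
          exact ⟨k, r, h⟩

lemma codB_iff (l : List Bool) :
    codB l = true ↔ ∃ k, l = List.replicate k true ++ [false] := by
  induction l with
  | nil =>
    simp only [codB, Bool.false_eq_true, false_iff]
    rintro ⟨k, h⟩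
    cases k <;> simp [List.replicate_succ] at h
  | cons a l ih =>
    cases a with
    | false =>
      simp only [codB, List.isEmpty_iff]
      constructor
      · rintro rfl; exact ⟨0, by simp⟩
      · rintro ⟨k, h⟩
        cases k with
        | zero => simpa using h
        | succ k => simp [List.replicate_succ] at h
    | true =>
      simp only [codB, ih]
      constructor
      · rintro ⟨k, rfl⟩
        exact ⟨k + 1, by simp [List.replicate_succ]⟩
      · rintro ⟨k, h⟩
        cases k with
        | zero => simp at h
        | succ k =>
          simp [List.replicate_succ] at h
          exact ⟨k, h⟩

lemma startsAB_iff (l : List Bool) :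
    startsAB l = true ↔ ∃ k r, k ≠ 0 ∧ l = List.replicate k true ++ false :: r := by
  cases l with
  | nil =>
    simp only [startsAB, List.headI, List.tail]
    constructor
    · intro h; simp at h
    · rintro ⟨k, r, hk, h⟩
      cases k with
      | zero => exact absurd rfl hk
      | succ k => simp [List.replicate_succ] at h
  | cons a l =>
    cases a with
    | false =>
      simp only [startsAB, List.headI, List.tail_cons]
      constructor
      · intro h; simp at h
      · rintro ⟨k, r, hk, h⟩
        cases k with
        | zero => exact absurd rfl hk
        | succ k => simp [List.replicate_succ] at h
    | true =>
      simp only [startsAB, List.headI, List.tail_cons, Bool.true_and, afterB_iff]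
      constructor
      · rintro ⟨k, r, rfl⟩
        exact ⟨k + 1, r, k.succ_ne_zero, by simp [List.replicate_succ]⟩
      · rintro ⟨k, r, hk, h⟩
        cases k with
        | zero => exact absurd rfl hk
        | succ k =>
          simp [List.replicate_succ] at h
          exact ⟨k, r, h⟩

lemma hasSubB_iff (l : List Bool) :
    hasSubB l = true ↔
      ∃ i p s, i ≠ 0 ∧ l = p ++ (false :: (List.replicate i true ++ [false])) ++ s := by
  induction l with
  | nil =>
    simp only [hasSubB, Bool.false_eq_true, false_iff]
    rintro ⟨i, p, s, hi, h⟩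
    simp at h
  | cons a l ih =>
    simp only [hasSubB, Bool.or_eq_true, ih, Bool.and_eq_true, Bool.not_eq_true',
      startsAB_iff]
    constructor
    · rintro (⟨i, p, s, hi, rfl⟩ | ⟨rfl, k, r, hk, rfl⟩)
      · exact ⟨i, a :: p, s, hi, by simp⟩
      · exact ⟨k, [], r, hk, by simp⟩
    · rintro ⟨i, p, s, hi, h⟩
      cases p with
      | nil =>
        simp only [List.nil_append, List.cons_append, List.cons.injEq] at h
        refine Or.inr ⟨h.1, i, s, hi, ?_⟩
        rw [h.2]; simp
      | cons b p' =>
        simp only [List.cons_append, List.cons.injEq] at h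
        exact Or.inl ⟨i, p', s, hi, h.2⟩

end CeerAux
namespace CeerAux

lemma wlist_abia (i : ℕ) :
    wlist (abia i) = false :: (List.replicate i true ++ [false]) := rfl

lemma wlist_mul (u v : Word) : wlist (u * v) = wlist u ++ wlist v := rfl

lemma wlist_length_pos (u : Word) : 0 < (wlist u).length := by simp [wlist]

lemma abia_inj {i j : ℕ} (h : abia i = abia j) : i = j := by
  have h2 : i + 1 = j + 1 := by
    simpa [abia] using congrArg (fun u : Word => u.2.length) h
  omega

lemma abia_snd_length (i : ℕ) : (abia i).2.length = i + 1 := by simp [abia]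

lemma hasSub_iff (u : Word) :
    (∃ i, i ≠ 0 ∧ Subword (abia i) u) ↔ hasSubB (wlist u) = true := by
  rw [hasSubB_iff]
  constructor
  · rintro ⟨i, hi, p, s, h⟩
    exact ⟨i, p, s, hi, by rw [h, wlist_abia]⟩
  · rintro ⟨i, p, s, hi, h⟩
    exact ⟨i, hi, p, s, by rw [h, wlist_abia]⟩

lemma isCoding_iff (u : Word) : isCoding u ↔ isCodingB u = true := by
  constructor
  · rintro ⟨i, hi, rfl⟩
    obtain ⟨k, rfl⟩ := Nat.exists_eq_succ_of_ne_zero hi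
    simp only [isCodingB, abia, List.replicate_succ, Bool.not_false, List.cons_append,
      List.headI, List.tail_cons, Bool.true_and, codB_iff]
    exact ⟨k, rfl⟩
  · intro h
    simp only [isCodingB, Bool.and_eq_true, Bool.not_eq_true'] at h
    obtain ⟨h1, h2, h3⟩ := h
    rw [codB_iff] at h3
    obtain ⟨k, hk⟩ := h3
    rcases u with ⟨a, l⟩
    cases l with
    | nil => simp at h2
    | cons b t =>
      simp only [List.headI] at h2
      simp only [List.tail_cons] at hk
      refine ⟨k + 1, k.succ_ne_zero, ?_⟩
      simp only at h1
      rw [abia]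
      simp [h1, h2, hk, List.replicate_succ]

lemma inCplus_iff (u : Word) : inCplus u ↔ inCplusB u = true := by
  unfold inCplus inCplusB
  rw [Bool.and_eq_true, Bool.not_eq_true', ← Bool.not_eq_true (isCodingB u), ← isCoding_iff,
    hasSub_iff]

lemma subword_self (i : ℕ) : Subword (abia i) (abia i) := ⟨[], [], by simp⟩

lemma subword_mul_left {y w v : Word} (h : Subword y v) : Subword y (w * v) := by
  obtain ⟨p, s, hp⟩ := h
  exact ⟨wlist w ++ p, s, by simp [wlist_mul, hp]⟩

lemma subword_mul_right {y w v : Word} (h : Subword y v) : Subword y (v * w) := by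
  obtain ⟨p, s, hp⟩ := h
  exact ⟨p, s ++ wlist w, by simp [wlist_mul, hp]⟩

lemma subword_length {y x : Word} (h : Subword y x) :
    (wlist y).length ≤ (wlist x).length := by
  obtain ⟨p, s, hp⟩ := h
  simp [hp]
  omega

/-- A coding word containing a coding subword is equal to it. -/
lemma coding_subword_eq {u : Word} {i : ℕ} (hu : isCoding u) (hs : Subword (abia i) u) :
    u = abia i := by
  obtain ⟨k, hk, rfl⟩ := hu
  obtain ⟨p, s, hp⟩ := hs
  rw [wlist_abia, wlist_abia] at hp
  have hcount := congrArg (List.count false) hp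
  simp [List.count_append, List.count_cons, List.count_replicate] at hcount
  have hpc : List.count false p = 0 := by
    rcases Nat.eq_zero_or_pos (List.count false p) with h | h
    · exact h
    · exfalso; omega
  have hsc : List.count false s = 0 := by
    rcases Nat.eq_zero_or_pos (List.count false s) with h | h
    · exact h
    · exfalso; omega
  have hpnotin : false ∉ p := by
    intro hmem
    have := List.count_pos_iff.mpr hmem
    omega
  have hsnotin : false ∉ s := by
    intro hmem
    have := List.count_pos_iff.mpr hmem
    omega
  have hpnil : p = [] := by
    cases p with
    | nil => rfl
    | cons b p' =>
      have hb : false = b := by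
        have := congrArg List.head? hp
        simpa using this
      exact absurd (by simp [← hb] : false ∈ b :: p') hpnotin
  subst hpnil
  have hsnil : s = [] := by
    cases s using List.reverseRecOn with
    | nil => rfl
    | append_singleton s' b =>
      have hb : false = b := by
        have := congrArg (fun l : List Bool => l.reverse.head?) hp
        simpa using this
      exact absurd (by simp [← hb] : false ∈ s' ++ [b]) hsnotin
  subst hsnil
  simp only [List.nil_append, List.append_nil, List.cons.injEq, true_and] at hp
  have : k + 1 = i + 1 := by
    have := congrArg List.length hp
    simpa using this
  have : k = i := by omega
  subst this
  rfl

lemma exists_sub_of {v : Word} (h : isCoding v ∨ inCplus v) :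
    ∃ i, i ≠ 0 ∧ Subword (abia i) v := by
  rcases h with ⟨i, hi, rfl⟩ | h
  · exact ⟨i, hi, subword_self i⟩
  · exact h.2

lemma inCplus_mul {v : Word} (h : ∃ i, i ≠ 0 ∧ Subword (abia i) v) (w : Word) :
    inCplus (w * v) ∧ inCplus (v * w) := by
  obtain ⟨i, hi, hs⟩ := h
  have hlen : (wlist (abia i)).length ≤ (wlist v).length := subword_length hs
  constructor
  · refine ⟨?_, i, hi, subword_mul_left hs⟩
    intro hc
    have heq := coding_subword_eq hc (subword_mul_left hs)
    have hl := congrArg (fun u : Word => (wlist u).length) heq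
    simp only [wlist_mul, List.length_append] at hl
    have := wlist_length_pos w
    omega
  · refine ⟨?_, i, hi, subword_mul_right hs⟩
    intro hc
    have heq := coding_subword_eq hc (subword_mul_right hs)
    have hl := congrArg (fun u : Word => (wlist u).length) heq
    simp only [wlist_mul, List.length_append] at hl
    have := wlist_length_pos w
    omega

end CeerAux
namespace CeerAux

/-- The explicit congruence used to realize `R`. -/
def Erel (R : ℕ → ℕ → Prop) (u v : Word) : Prop :=
  u = v ∨ (∃ i j, R i j ∧ u = abia (i + 1) ∧ v = abia (j + 1)) ∨ (inCplus u ∧ inCplus v)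

lemma isCoding_abia_succ (i : ℕ) : isCoding (abia (i + 1)) := ⟨i + 1, i.succ_ne_zero, rfl⟩

def Econ (R : ℕ → ℕ → Prop) (hR : Equivalence R) : Con Word where
  r := Erel R
  iseqv := by
    constructor
    · intro u; exact Or.inl rfl
    · intro u v h
      rcases h with rfl | ⟨i, j, hij, hu, hv⟩ | ⟨hu, hv⟩
      · exact Or.inl rfl
      · exact Or.inr (Or.inl ⟨j, i, hR.symm hij, hv, hu⟩)
      · exact Or.inr (Or.inr ⟨hv, hu⟩)
    · intro u v w h1 h2
      rcases h1 with rfl | ⟨i, j, hij, hu, hv⟩ | ⟨hu, hv⟩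
      · exact h2
      · rcases h2 with rfl | ⟨i', j', hij', hv', hw⟩ | ⟨hv', hw⟩
        · exact Or.inr (Or.inl ⟨i, j, hij, hu, hv⟩)
        · have : j = i' := by
            have := hv.symm.trans hv'
            have := abia_inj this
            omega
          subst this
          exact Or.inr (Or.inl ⟨i, j', hR.trans hij hij', hu, hw⟩)
        · exact absurd (hv ▸ isCoding_abia_succ j) hv'.1
      · rcases h2 with rfl | ⟨i', j', hij', hv', hw⟩ | ⟨hv', hw⟩
        · exact Or.inr (Or.inr ⟨hu, hv⟩)
        · exact absurd (hv' ▸ isCoding_abia_succ i') hv.1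
        · exact Or.inr (Or.inr ⟨hu, hw⟩)
  mul' := by
    intro w x y z h1 h2
    rcases h2 with rfl | h2 | h2
    · rcases h1 with rfl | h1 | h1
      · exact Or.inl rfl
      · have hw : ∃ i, i ≠ 0 ∧ Subword (abia i) w := by
          obtain ⟨i, j, hij, hu, hv⟩ := h1
          exact exists_sub_of (Or.inl (hu ▸ isCoding_abia_succ i))
        have hx : ∃ i, i ≠ 0 ∧ Subword (abia i) x := by
          obtain ⟨i, j, hij, hu, hv⟩ := h1
          exact exists_sub_of (Or.inl (hv ▸ isCoding_abia_succ j))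
        exact Or.inr (Or.inr ⟨(inCplus_mul hw y).2, (inCplus_mul hx y).2⟩)
      · exact Or.inr (Or.inr ⟨(inCplus_mul (exists_sub_of (Or.inr h1.1)) y).2,
          (inCplus_mul (exists_sub_of (Or.inr h1.2)) y).2⟩)
    · have hy : ∃ i, i ≠ 0 ∧ Subword (abia i) y := by
        obtain ⟨i, j, hij, hu, hv⟩ := h2
        exact exists_sub_of (Or.inl (hu ▸ isCoding_abia_succ i))
      have hz : ∃ i, i ≠ 0 ∧ Subword (abia i) z := by
        obtain ⟨i, j, hij, hu, hv⟩ := h2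
        exact exists_sub_of (Or.inl (hv ▸ isCoding_abia_succ j))
      exact Or.inr (Or.inr ⟨(inCplus_mul hy w).1, (inCplus_mul hz x).1⟩)
    · exact Or.inr (Or.inr ⟨(inCplus_mul (exists_sub_of (Or.inr h2.1)) w).1,
        (inCplus_mul (exists_sub_of (Or.inr h2.2)) x).1⟩)

lemma Econ_apply (R : ℕ → ℕ → Prop) (hR : Equivalence R) (u v : Word) :
    Econ R hR u v ↔ Erel R u v := Iff.rfl

/-- The decoder of coding words. -/
def dec (u : Word) : Option ℕ :=
  if isCodingB u = true then some (u.2.length - 2) else none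

lemma dec_eq_some {u : Word} {i : ℕ} : dec u = some i ↔ u = abia (i + 1) := by
  unfold dec
  split_ifs with h
  · have hc : isCoding u := (isCoding_iff u).2 h
    obtain ⟨k, hk, rfl⟩ := hc
    obtain ⟨k', rfl⟩ := Nat.exists_eq_succ_of_ne_zero hk
    rw [abia_snd_length]
    simp only [Option.some.injEq]
    constructor
    · intro h'; rw [← h']; congr 1
    · intro h'
      have := abia_inj h'
      omega
  · simp only [reduceCtorEq, false_iff]
    intro h'
    exact h ((isCoding_iff u).1 (h' ▸ isCoding_abia_succ i))

lemma dec_abia_succ (i : ℕ) : dec (abia (i + 1)) = some i := dec_eq_some.mpr rfl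

/-- The forward reduction map. -/
def fmap (g : ℕ → ℕ) (u : Word) : ℕ :=
  g (if isCodingB u = true then 2 * (u.2.length - 2)
     else if hasSubB (wlist u) = true then 1
     else 2 * Encodable.encode u + 3)

lemma fmap_correct {R : ℕ → ℕ → Prop} (hR : Equivalence R) {g : ℕ → ℕ}
    (hg : ∀ x y, rjoin R (· = ·) x y ↔ R (g x) (g y)) (u v : Word) :
    Erel R u v ↔ R (fmap g u) (fmap g v) := by
  constructor
  · rintro (rfl | ⟨i, j, hij, rfl, rfl⟩ | ⟨hu, hv⟩)
    · exact hR.refl _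
    · have hu' : isCodingB (abia (i + 1)) = true := (isCoding_iff _).1 (isCoding_abia_succ i)
      have hv' : isCodingB (abia (j + 1)) = true := (isCoding_iff _).1 (isCoding_abia_succ j)
      rw [fmap, fmap, if_pos hu', if_pos hv', abia_snd_length, abia_snd_length]
      have e1 : i + 1 + 1 - 2 = i := by omega
      have e2 : j + 1 + 1 - 2 = j := by omega
      rw [e1, e2, ← hg]
      exact Or.inl ⟨i, j, rfl, rfl, hij⟩
    · have hu1 : isCodingB u ≠ true := fun h => hu.1 ((isCoding_iff u).2 h)
      have hv1 : isCodingB v ≠ true := fun h => hv.1 ((isCoding_iff v).2 h)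
      have hu2 : hasSubB (wlist u) = true := (hasSub_iff u).1 hu.2
      have hv2 : hasSubB (wlist v) = true := (hasSub_iff v).1 hv.2
      rw [fmap, fmap, if_neg hu1, if_neg hv1, if_pos hu2, if_pos hv2]
      exact hR.refl _
  · intro h
    rw [fmap, fmap, ← hg] at h
    by_cases hcu : isCodingB u = true
    · obtain ⟨ku, hku, hu⟩ := (isCoding_iff u).2 hcu
      obtain ⟨ku', rfl⟩ := Nat.exists_eq_succ_of_ne_zero hku
      rw [if_pos hcu, hu, abia_snd_length] at h
      have e1 : ku' + 1 + 1 - 2 = ku' := by omega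
      rw [e1] at h
      by_cases hcv : isCodingB v = true
      · obtain ⟨kv, hkv, hv⟩ := (isCoding_iff v).2 hcv
        obtain ⟨kv', rfl⟩ := Nat.exists_eq_succ_of_ne_zero hkv
        rw [if_pos hcv, hv, abia_snd_length] at h
        have e2 : kv' + 1 + 1 - 2 = kv' := by omega
        rw [e2] at h
        rcases h with ⟨a, b, ha, hb, hab⟩ | ⟨a, b, ha, hb, _⟩
        · obtain rfl : a = ku' := by omega
          obtain rfl : b = kv' := by omega
          exact Or.inr (Or.inl ⟨_, _, hab, hu, hv⟩)
        · omega
      · rw [if_neg hcv] at h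
        by_cases hsv : hasSubB (wlist v) = true
        · rw [if_pos hsv] at h
          rcases h with ⟨a, b, ha, hb, _⟩ | ⟨a, b, ha, hb, _⟩ <;> omega
        · rw [if_neg hsv] at h
          rcases h with ⟨a, b, ha, hb, _⟩ | ⟨a, b, ha, hb, _⟩ <;> omega
    · rw [if_neg hcu] at h
      by_cases hsu : hasSubB (wlist u) = true
      · rw [if_pos hsu] at h
        by_cases hcv : isCodingB v = true
        · obtain ⟨kv, hkv, hv⟩ := (isCoding_iff v).2 hcv
          rw [if_pos hcv] at h
          rcases h with ⟨a, b, ha, hb, _⟩ | ⟨a, b, ha, hb, _⟩ <;> omega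
        · rw [if_neg hcv] at h
          by_cases hsv : hasSubB (wlist v) = true
          · rw [if_pos hsv] at h
            refine Or.inr (Or.inr ⟨⟨fun hc => hcu ((isCoding_iff u).1 hc), (hasSub_iff u).2 hsu⟩,
              ⟨fun hc => hcv ((isCoding_iff v).1 hc), (hasSub_iff v).2 hsv⟩⟩)
          · rw [if_neg hsv] at h
            rcases h with ⟨a, b, ha, hb, _⟩ | ⟨a, b, ha, hb, hab⟩ <;> omega
      · rw [if_neg hsu] at h
        by_cases hcv : isCodingB v = true
        · rw [if_pos hcv] at h
          rcases h with ⟨a, b, ha, hb, _⟩ | ⟨a, b, ha, hb, _⟩ <;> omega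
        · rw [if_neg hcv] at h
          by_cases hsv : hasSubB (wlist v) = true
          · rw [if_pos hsv] at h
            rcases h with ⟨a, b, ha, hb, _⟩ | ⟨a, b, ha, hb, hab⟩ <;> omega
          · rw [if_neg hsv] at h
            rcases h with ⟨a, b, ha, hb, _⟩ | ⟨a, b, ha, hb, hab⟩
            · omega
            · have : Encodable.encode u = Encodable.encode v := by omega
              exact Or.inl (Encodable.encode_injective this)

/-- Correctness of the backward reduction. -/
lemma back_correct {R : ℕ → ℕ → Prop} (hR : Equivalence R) (n m : ℕ) :
    R n m ↔ Erel R (abia (n + 1)) (abia (m + 1)) := by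
  constructor
  · intro h
    exact Or.inr (Or.inl ⟨n, m, h, rfl, rfl⟩)
  · rintro (h | ⟨i, j, hij, hu, hv⟩ | ⟨hu, _⟩)
    · have : n = m := by have := abia_inj h; omega
      exact this ▸ hR.refl n
    · have hn : n = i := by have := abia_inj hu; omega
      have hm : m = j := by have := abia_inj hv; omega
      rw [hn, hm]; exact hij
    · exact absurd (isCoding_abia_succ n) hu.1

end CeerAux
namespace CeerAux

lemma primrec_afterB : Primrec afterB := by
  have hh : Primrec₂ (fun (_ : List Bool) (x : Bool × List Bool × Bool) =>
      cond x.1 x.2.2 true) :=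
    (Primrec.cond (Primrec.fst.comp Primrec.snd)
      ((Primrec.snd.comp Primrec.snd).comp Primrec.snd) (Primrec.const true)).to₂
  have h := Primrec.list_rec (α := List Bool) (β := Bool) (σ := Bool) (f := id)
    (g := fun _ => false) (h := fun _ x => cond x.1 x.2.2 true)
    Primrec.id (Primrec.const false) hh
  refine h.of_eq fun l => ?_
  induction l with
  | nil => rfl
  | cons b l ih =>
    cases b
    · rfl
    · exact ih

lemma primrec_startsAB : Primrec startsAB := by
  have h : Primrec fun l : List Bool => l.headI && afterB l.tail :=
    Primrec.and.comp Primrec.list_headI (primrec_afterB.comp Primrec.list_tail)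
  exact h.of_eq fun l => rfl

lemma primrec_hasSubB : Primrec hasSubB := by
  have hh : Primrec₂ (fun (_ : List Bool) (x : Bool × List Bool × Bool) =>
      x.2.2 || (!x.1 && startsAB x.2.1)) := by
    have hp : Primrec fun p : List Bool × (Bool × List Bool × Bool) =>
        p.2.2.2 || (!p.2.1 && startsAB p.2.2.1) :=
      Primrec.or.comp (Primrec.snd.comp (Primrec.snd.comp Primrec.snd))
        (Primrec.and.comp (Primrec.not.comp (Primrec.fst.comp Primrec.snd))
          (primrec_startsAB.comp (Primrec.fst.comp (Primrec.snd.comp Primrec.snd))))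
    exact hp.to₂
  have h := Primrec.list_rec (α := List Bool) (β := Bool) (σ := Bool) (f := id)
    (g := fun _ => false) (h := fun _ x => x.2.2 || (!x.1 && startsAB x.2.1))
    Primrec.id (Primrec.const false) hh
  refine h.of_eq fun l => ?_
  induction l with
  | nil => rfl
  | cons b l ih =>
    simp only [hasSubB]
    rw [← ih]
    rfl

lemma primrec_isEmpty : Primrec fun l : List Bool => l.isEmpty := by
  have : Primrec fun l : List Bool => decide (l = []) :=
    (PrimrecRel.comp Primrec.eq Primrec.id (Primrec.const [])).decide
  exact this.of_eq fun l => by cases l <;> rfl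

lemma primrec_codB : Primrec codB := by
  have hh : Primrec₂ (fun (_ : List Bool) (x : Bool × List Bool × Bool) =>
      cond x.1 x.2.2 x.2.1.isEmpty) := by
    have hp : Primrec fun p : List Bool × (Bool × List Bool × Bool) =>
        cond p.2.1 p.2.2.2 p.2.2.1.isEmpty :=
      Primrec.cond (Primrec.fst.comp Primrec.snd)
        (Primrec.snd.comp (Primrec.snd.comp Primrec.snd))
        (primrec_isEmpty.comp (Primrec.fst.comp (Primrec.snd.comp Primrec.snd)))
    exact hp.to₂
  have h := Primrec.list_rec (α := List Bool) (β := Bool) (σ := Bool) (f := id)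
    (g := fun _ => false) (h := fun _ x => cond x.1 x.2.2 x.2.1.isEmpty)
    Primrec.id (Primrec.const false) hh
  refine h.of_eq fun l => ?_
  induction l with
  | nil => rfl
  | cons b l ih =>
    cases b
    · rfl
    · exact ih

lemma primrec_isCodingB : Primrec isCodingB := by
  have h : Primrec fun u : Word => !u.1 && (u.2.headI && codB u.2.tail) := by
    refine Primrec.and.comp (Primrec.not.comp Primrec.fst) ?_
    exact Primrec.and.comp (Primrec.list_headI.comp Primrec.snd)
      (primrec_codB.comp (Primrec.list_tail.comp Primrec.snd))
  exact h.of_eq fun u => rfl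

lemma primrec_wlist : Primrec wlist :=
  Primrec.list_cons.comp Primrec.fst Primrec.snd

lemma primrec_hasSub_wlist : Primrec fun u : Word => hasSubB (wlist u) :=
  primrec_hasSubB.comp primrec_wlist

lemma primrecPred_isCoding : PrimrecPred fun u : Word => isCodingB u = true :=
  PrimrecRel.comp Primrec.eq primrec_isCodingB (Primrec.const true)

lemma primrecPred_hasSub : PrimrecPred fun u : Word => hasSubB (wlist u) = true :=
  PrimrecRel.comp Primrec.eq primrec_hasSub_wlist (Primrec.const true)

lemma primrec_dec : Primrec dec := by
  unfold dec
  exact Primrec.ite primrecPred_isCoding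
    (Primrec.option_some.comp
      (Primrec.nat_sub.comp (Primrec.list_length.comp Primrec.snd) (Primrec.const 2)))
    (Primrec.const none)

lemma computable_fmap {g : ℕ → ℕ} (hg : Computable g) : Computable (fmap g) := by
  have hc : Primrec fun u : Word =>
      (if isCodingB u = true then 2 * (u.2.length - 2)
       else if hasSubB (wlist u) = true then 1
       else 2 * Encodable.encode u + 3) := by
    refine Primrec.ite primrecPred_isCoding ?_ ?_
    · exact Primrec.nat_mul.comp (Primrec.const 2)
        (Primrec.nat_sub.comp (Primrec.list_length.comp Primrec.snd) (Primrec.const 2))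
    · refine Primrec.ite primrecPred_hasSub (Primrec.const 1) ?_
      exact Primrec.nat_add.comp
        (Primrec.nat_mul.comp (Primrec.const 2) Primrec.encode) (Primrec.const 3)
  exact hg.comp hc.to_comp

lemma primrec_replicate_true : Primrec fun n : ℕ => List.replicate n true := by
  have h : Primrec (Nat.rec ([] : List Bool) (fun _ IH => true :: IH)) :=
    Primrec.nat_rec₁ ([] : List Bool)
      (Primrec.list_cons.comp (Primrec.const true) Primrec.snd).to₂
  refine h.of_eq fun n => ?_
  induction n with
  | zero => rfl
  | succ n ih => simp only [List.replicate_succ, ← ih]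

lemma computable_abia_succ : Computable fun n : ℕ => abia (n + 1) := by
  have h : Primrec fun n : ℕ => abia (n + 1) := by
    unfold abia
    exact Primrec.pair (Primrec.const false)
      (Primrec.list_append.comp (primrec_replicate_true.comp Primrec.succ)
        (Primrec.const [false]))
  exact h.to_comp

end CeerAux
namespace CeerAux

lemma rePred_or {α} [Primcodable α] {p q : α → Prop} (hp : REPred p) (hq : REPred q) :
    REPred fun a => p a ∨ q a := by
  obtain ⟨k, pk, hk⟩ := Partrec.merge' hp hq
  have hdom : ∀ P : Prop, (Part.assert P fun _ => Part.some ()).Dom ↔ P :=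
    fun P => ⟨fun h => h.1, fun h => ⟨h, trivial⟩⟩
  refine pk.dom_re.of_eq fun a => ?_
  rw [(hk a).2, hdom, hdom]

def CP (R : ℕ → ℕ → Prop) (p : Word × Word) : Prop :=
  ∃ i j, R i j ∧ p.1 = abia (i + 1) ∧ p.2 = abia (j + 1)

set_option maxHeartbeats 1000000 in
lemma rePred_CP {R : ℕ → ℕ → Prop} (hRe : REPred fun q : ℕ × ℕ => R q.1 q.2) :
    REPred (CP R) := by
  classical
  let k : Word × Word →. Unit := fun p =>
    (Part.ofOption (dec p.1)).bind fun i =>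
      (Part.ofOption (dec p.2)).bind fun j =>
        Part.assert (R i j) fun _ => Part.some ()
  have pk : Partrec k := by
    have ha : Partrec fun p : Word × Word => Part.ofOption (dec p.1) :=
      Computable.ofOption (primrec_dec.to_comp.comp Computable.fst)
    have hb : Partrec fun x : (Word × Word) × ℕ => Part.ofOption (dec x.1.2) :=
      Computable.ofOption (primrec_dec.to_comp.comp (Computable.snd.comp Computable.fst))
    have hc : Partrec fun y : ((Word × Word) × ℕ) × ℕ =>
        Part.assert (R y.1.2 y.2) fun _ => Part.some () := by
      have h := Partrec.comp (g := fun y : ((Word × Word) × ℕ) × ℕ => (y.1.2, y.2)) hRe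
        (Computable.pair (Computable.snd.comp Computable.fst) Computable.snd)
      exact h
    exact ha.bind (hb.bind hc.to₂).to₂
  refine pk.dom_re.of_eq fun p => ?_
  constructor
  · intro h
    have hmem : () ∈ k p := ⟨h, rfl⟩
    simp only [k, Part.mem_bind_iff, Part.mem_ofOption, Option.mem_def,
      Part.mem_assert_iff, Part.mem_some_iff] at hmem
    obtain ⟨i, hi, j, hj, hR, -⟩ := hmem
    exact ⟨i, j, hR, dec_eq_some.mp hi, dec_eq_some.mp hj⟩
  · rintro ⟨i, j, hRij, h1, h2⟩
    have hmem : () ∈ k p := by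
      simp only [k, Part.mem_bind_iff, Part.mem_ofOption, Option.mem_def,
        Part.mem_assert_iff, Part.mem_some_iff]
      exact ⟨i, dec_eq_some.mpr h1, j, dec_eq_some.mpr h2, hRij, trivial⟩
    exact hmem.1

lemma computablePred_triv {R : ℕ → ℕ → Prop} :
    ComputablePred fun p : Word × Word => p.1 = p.2 ∨ (inCplus p.1 ∧ inCplus p.2) := by
  classical
  refine ComputablePred.computable_iff.2
    ⟨fun p => decide (p.1 = p.2) || (inCplusB p.1 && inCplusB p.2), ?_, ?_⟩
  · have hB : Primrec inCplusB :=
      Primrec.and.comp (Primrec.not.comp primrec_isCodingB) primrec_hasSub_wlist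
    have h : Primrec fun p : Word × Word =>
        decide (p.1 = p.2) || (inCplusB p.1 && inCplusB p.2) :=
      Primrec.or.comp (PrimrecRel.comp Primrec.eq Primrec.fst Primrec.snd).decide
        (Primrec.and.comp (hB.comp Primrec.fst) (hB.comp Primrec.snd))
    exact h.to_comp
  · funext p
    apply propext
    simp only [Bool.or_eq_true, Bool.and_eq_true, decide_eq_true_eq, ← inCplus_iff]

lemma rePred_Erel {R : ℕ → ℕ → Prop} (hRe : REPred fun q : ℕ × ℕ => R q.1 q.2) :
    REPred fun p : Word × Word => Erel R p.1 p.2 := by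
  have h := rePred_or (computablePred_triv (R := R)).to_re (rePred_CP hRe)
  refine h.of_eq fun p => ?_
  unfold Erel CP
  constructor
  · rintro (h | h)
    · rcases h with h | h
      · exact Or.inl h
      · exact Or.inr (Or.inr h)
    · exact Or.inr (Or.inl h)
  · rintro (h | h | h)
    · exact Or.inl (Or.inl h)
    · exact Or.inr h
    · exact Or.inl (Or.inr h)

end CeerAux

/-- if R ≡_c R ⊕ Id_ω then R is c-realized by a two-generator
c.e. semigroup, i.e. by a congruence on the free semigroup on two generators
whose graph is c.e. -/
theorem realized_by_two_generator_semigroup (R : ℕ → ℕ → Prop) (hR : Ceer R)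
    (h1 : Reduces R (rjoin R (· = ·))) (h2 : Reduces (rjoin R (· = ·)) R) :
    ∃ c : Con Word, REPred (fun p : Word × Word => c p.1 p.2) ∧
      ReducesT (fun u v : Word => c u v) R ∧
      ReducesT R (fun u v : Word => c u v) := by
  obtain ⟨hEq, hCe⟩ := hR
  obtain ⟨g, hgc, hgiff⟩ := h2
  refine ⟨CeerAux.Econ R hEq, ?_, ?_, ?_⟩
  · exact CeerAux.rePred_Erel hCe
  · exact ⟨CeerAux.fmap g, CeerAux.computable_fmap hgc,
      fun u v => CeerAux.fmap_correct hEq hgiff u v⟩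
  · exact ⟨fun n => abia (n + 1), CeerAux.computable_abia_succ,
      fun n m => CeerAux.back_correct hEq n m⟩
end

section
/- There exists a simple set Z of nonempty words over the alphabet {a,b} such that for every k, Z contains at most k words of length ≤ k+4; consequently the upward closure Z̄ = {u : u contains some word of Z as a subword} is coinfinite, and the unidimensional ceer R_{Z̄} is dark. -/
/-- A c.e. set of words is simple if its complement is infinite and meets
every infinite c.e. set. -/
def SimpleSetW (Z : Set Word) : Prop :=
  REPred (· ∈ Z) ∧ Zᶜ.Infinite ∧
    ∀ Y : Set Word, REPred (· ∈ Y) → Y.Infinite → (Y ∩ Z).Nonempty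

/-- The unidimensional equivalence relation determined by a set of words. -/
def uniRel (X : Set Word) : Word → Word → Prop :=
  fun u v => u = v ∨ (u ∈ X ∧ v ∈ X)

/-- A transversal of a relation on words. -/
def IsTransversalW (R : Word → Word → Prop) (T : Set Word) : Prop :=
  ∀ x ∈ T, ∀ y ∈ T, x ≠ y → ¬ R x y

/-- Infinitely many equivalence classes, for a relation on words. -/
def InfiniteClassesW (R : Word → Word → Prop) : Prop :=
  {s : Set Word | ∃ x, s = {y | R x y}}.Infinite

/-- Darkness: infinitely many classes and no infinite c.e. transversal. -/
def DarkW (R : Word → Word → Prop) : Prop :=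
  InfiniteClassesW R ∧
    ∀ T : Set Word, REPred (· ∈ T) → IsTransversalW R T → T.Finite


/-! ### Auxiliary development: a simple set of words via Post's construction -/

open Nat.Partrec (Code)
open Nat.Partrec.Code

section PartA

lemma part_unit_ext {o₁ o₂ : Part Unit} (h : o₁.Dom ↔ o₂.Dom) : o₁ = o₂ := by
  apply Part.ext fun u => ?_
  obtain ⟨⟩ := u
  constructor
  · rintro ⟨hd, -⟩; exact ⟨h.1 hd, rfl⟩
  · rintro ⟨hd, -⟩; exact ⟨h.2 hd, rfl⟩

lemma primrec_list_all {α β} [Primcodable α] [Primcodable β]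
    {f : α → List β} {p : α → β → Bool} (hf : Primrec f) (hp : Primrec₂ p) :
    Primrec fun a => (f a).all (p a) := by
  have h := Primrec.list_foldr (g := fun _ : α => true)
    (h := fun a (q : β × Bool) => p a q.1 && q.2) hf (Primrec.const true)
    (Primrec.and.comp (hp.comp Primrec.fst (Primrec.fst.comp Primrec.snd))
      (Primrec.snd.comp Primrec.snd))
  apply h.of_eq fun a => ?_
  induction (f a) with
  | nil => rfl
  | cons b l ih => simp [List.all_cons, ih]

lemma re_exists_bool {α} [Primcodable α] {f : α → ℕ → Bool} (hf : Computable₂ f) :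
    REPred fun a => ∃ n, f a n = true := by
  have h1 : Partrec fun a => (Nat.rfind fun n => (f a n : Part Bool)).map fun _ => () :=
    (Partrec.rfind hf.partrec₂).map ((Computable.const ()).to₂)
  apply h1.of_eq fun a => ?_
  apply part_unit_ext
  simp [Part.dom_iff_mem, Nat.rfind_dom, Part.assert]
  rw [← Part.dom_iff_mem]; refine Nat.rfind_dom.trans ?_
  simp

def Dfun (e t : ℕ) : Bool :=
  (Encodable.decode (α := Word) t.unpair.2).elim false fun w =>
    ((Nat.Partrec.Code.evaln t.unpair.1 (Denumerable.ofNat Code e) t.unpair.2).isSome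
      && decide (2 * e + 5 ≤ (wlist w).length))

def Bfun (z : Word) (n : ℕ) : Bool :=
  Dfun n.unpair.1 n.unpair.2
    && (List.range n.unpair.2).all (fun t' => !(Dfun n.unpair.1 t'))
    && decide (Encodable.decode (α := Word) n.unpair.2.unpair.2 = some z)

def Zset : Set Word := { z | ∃ n, Bfun z n = true }

lemma Dfun_iff {e t : ℕ} : Dfun e t = true ↔
    ∃ w : Word, Encodable.decode t.unpair.2 = some w ∧
      (evaln t.unpair.1 (Denumerable.ofNat Code e) t.unpair.2).isSome ∧
      2 * e + 5 ≤ (wlist w).length := by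
  unfold Dfun
  cases h : (Encodable.decode (α := Word) t.unpair.2) <;> simp [h]

def Se (e : ℕ) : Prop := ∃ t, Dfun e t = true

open Classical in
noncomputable def zsel (e : ℕ) : Option Word :=
  if h : Se e then Encodable.decode ((Nat.find h).unpair.2) else none

lemma mem_Zset_iff {z : Word} : z ∈ Zset ↔ ∃ e, zsel e = some z := by
  constructor
  · rintro ⟨n, hB⟩
    simp only [Bfun, Bool.and_eq_true, List.all_eq_true, List.mem_range,
      Bool.not_eq_true', decide_eq_true_eq] at hB
    obtain ⟨⟨hD, hmin⟩, hdec⟩ := hB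
    have hS : Se n.unpair.1 := ⟨n.unpair.2, hD⟩
    refine ⟨n.unpair.1, ?_⟩
    have hfind : Nat.find hS = n.unpair.2 := by
      exact (Nat.find_eq_iff hS).2 ⟨hD, fun m hm => by simp [hmin m hm]⟩
    simp [zsel, dif_pos hS, hfind, hdec]
  · rintro ⟨e, hz⟩
    rw [zsel] at hz
    split_ifs at hz with h
    refine ⟨Nat.pair e (Nat.find h), ?_⟩
    simp only [Bfun, Nat.unpair_pair, Bool.and_eq_true, List.all_eq_true, List.mem_range,
      Bool.not_eq_true', decide_eq_true_eq]
    exact ⟨⟨Nat.find_spec h, fun m hm => by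
      have := Nat.find_min h hm; simpa using this⟩, hz⟩

lemma zsel_len {e : ℕ} {z : Word} (h : zsel e = some z) :
    2 * e + 5 ≤ (wlist z).length := by
  rw [zsel] at h
  split_ifs at h with hS
  obtain ⟨w, hw, _, hlen⟩ := Dfun_iff.1 (Nat.find_spec hS)
  rw [h] at hw; cases hw; exact hlen

lemma primrec_Dfun : Primrec₂ Dfun := by
  have hdec : Primrec fun p : ℕ × ℕ => (Encodable.decode p.2.unpair.2 : Option Word) :=
    Primrec.decode.comp (Primrec.snd.comp (Primrec.unpair.comp Primrec.snd))
  have hev : Primrec fun p : ℕ × ℕ =>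
      (evaln p.2.unpair.1 (Denumerable.ofNat Code p.1) p.2.unpair.2).isSome :=
    Primrec.option_isSome.comp <| primrec_evaln.comp <|
      (((Primrec.fst.comp (Primrec.unpair.comp Primrec.snd)).pair
        ((Primrec.ofNat Code).comp Primrec.fst)).pair
        (Primrec.snd.comp (Primrec.unpair.comp Primrec.snd)))
  have hlen : Primrec fun w : Word => (wlist w).length :=
    Primrec.succ.comp (Primrec.list_length.comp Primrec.snd)
  have hle : Primrec₂ fun (p : ℕ × ℕ) (w : Word) =>
      decide (2 * p.1 + 5 ≤ (wlist w).length) := by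
    have h2e5 : Primrec fun q : (ℕ × ℕ) × Word => 2 * q.1.1 + 5 :=
      Primrec.nat_add.comp
        (Primrec.nat_mul.comp (Primrec.const 2) (Primrec.fst.comp Primrec.fst))
        (Primrec.const 5)
    exact (Primrec.nat_le.comp h2e5 (hlen.comp Primrec.snd)).decide
  have hg : Primrec₂ fun (p : ℕ × ℕ) (w : Word) =>
      (evaln p.2.unpair.1 (Denumerable.ofNat Code p.1) p.2.unpair.2).isSome
        && decide (2 * p.1 + 5 ≤ (wlist w).length) :=
    Primrec.and.comp (hev.comp Primrec.fst) hle
  have := Primrec.option_casesOn hdec (Primrec.const false) hg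
  apply this.of_eq fun p => ?_
  rcases h : (Encodable.decode p.2.unpair.2 : Option Word) with _ | w <;> simp [Dfun, h]

lemma primrec_Bfun : Primrec₂ Bfun := by
  have u1 : Primrec fun a : Word × ℕ => a.2.unpair.1 :=
    Primrec.fst.comp (Primrec.unpair.comp Primrec.snd)
  have u2 : Primrec fun a : Word × ℕ => a.2.unpair.2 :=
    Primrec.snd.comp (Primrec.unpair.comp Primrec.snd)
  have h1 : Primrec fun a : Word × ℕ => Dfun a.2.unpair.1 a.2.unpair.2 :=
    primrec_Dfun.comp u1 u2
  have h2 : Primrec fun a : Word × ℕ =>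
      (List.range a.2.unpair.2).all fun t' => !(Dfun a.2.unpair.1 t') :=
    primrec_list_all (Primrec.list_range.comp u2)
      (Primrec.not.comp (primrec_Dfun.comp (u1.comp Primrec.fst) Primrec.snd))
  have h3 : Primrec fun a : Word × ℕ =>
      decide (Encodable.decode (α := Word) a.2.unpair.2.unpair.2 = some a.1) :=
    (Primrec.eq.comp
      (Primrec.decode.comp (Primrec.snd.comp (Primrec.unpair.comp u2)))
      (Primrec.option_some.comp Primrec.fst)).decide
  exact (Primrec.and.comp (Primrec.and.comp h1 h2) h3)

lemma Zset_re : REPred (· ∈ Zset) :=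
  re_exists_bool (primrec_Bfun.to_comp)

lemma words_length_le_finite (L : ℕ) : {w : Word | (wlist w).length ≤ L}.Finite := by
  have h : {w : Word | (wlist w).length ≤ L} ⊆
      (fun l : List Bool => ((l.headI, l.tail) : Word)) '' {l | l.length ≤ L} := by
    rintro ⟨b, l⟩ h
    exact ⟨b :: l, by simpa [wlist] using h, rfl⟩
  exact ((List.finite_length_le Bool L).image _).subset h

lemma infinite_exists_long {Y : Set Word} (hY : Y.Infinite) (L : ℕ) :
    ∃ w ∈ Y, L ≤ (wlist w).length := by
  by_contra h
  push_neg at h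
  exact hY ((words_length_le_finite L).subset fun w hw => le_of_lt (h w hw))

lemma re_code {Y : Set Word} (hY : REPred (· ∈ Y)) :
    ∃ c : Code, ∀ m : ℕ, (eval c m).Dom ↔ ∃ w : Word, Encodable.decode m = some w ∧ w ∈ Y := by
  unfold REPred Partrec at hY
  obtain ⟨c, hc⟩ := exists_code.1 hY
  refine ⟨c, fun m => ?_⟩
  rw [hc]
  constructor
  · intro hd
    obtain ⟨x, hx⟩ := Part.dom_iff_mem.1 hd
    obtain ⟨w, hw, hx2⟩ := Part.mem_bind_iff.1 hx
    obtain ⟨u, hu, -⟩ := (Part.mem_map_iff _).1 hx2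
    obtain ⟨hyp, -⟩ := Part.mem_assert_iff.1 hu
    exact ⟨w, by simpa using hw, hyp⟩
  · rintro ⟨w, hw, hwY⟩
    apply Part.dom_iff_mem.2
    refine ⟨Encodable.encode (), Part.mem_bind_iff.2 ⟨w, by simpa using hw, ?_⟩⟩
    exact (Part.mem_map_iff _).2 ⟨(), Part.mem_assert_iff.2 ⟨hwY, Part.mem_some _⟩, rfl⟩

lemma Zset_meets {Y : Set Word} (hre : REPred (· ∈ Y)) (hinf : Y.Infinite) :
    (Y ∩ Zset).Nonempty := by
  obtain ⟨c, hc⟩ := re_code hre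
  set e := Encodable.encode c with he
  have hcc : Denumerable.ofNat Code e = c := Denumerable.ofNat_encode c
  obtain ⟨w, hwY, hwlen⟩ := infinite_exists_long hinf (2 * e + 5)
  have hdom : (eval c (Encodable.encode w)).Dom :=
    (hc _).2 ⟨w, Encodable.encodek w, hwY⟩
  obtain ⟨x, hx⟩ := Part.dom_iff_mem.1 hdom
  obtain ⟨k, hk⟩ := evaln_complete.1 hx
  have hSe : Se e := by
    refine ⟨Nat.pair k (Encodable.encode w), Dfun_iff.2 ⟨w, ?_, ?_, hwlen⟩⟩
    · simp [Nat.unpair_pair, Encodable.encodek]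
    · simp only [Nat.unpair_pair, hcc]
      exact Option.isSome_iff_exists.2 ⟨x, hk⟩
  obtain ⟨w0, hdec0, hsome0, _⟩ := Dfun_iff.1 (Nat.find_spec hSe)
  have hzsel : zsel e = some w0 := by
    rw [zsel, dif_pos hSe]; exact hdec0
  have hw0Z : w0 ∈ Zset := mem_Zset_iff.2 ⟨e, hzsel⟩
  have hw0Y : w0 ∈ Y := by
    obtain ⟨x0, hx0⟩ := Option.isSome_iff_exists.1 hsome0
    have hmem : x0 ∈ eval c ((Nat.find hSe).unpair.2) := by
      have hs := evaln_sound (Option.mem_def.2 hx0)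
      rwa [hcc] at hs
    obtain ⟨w', hw', hw'Y⟩ := (hc _).1 (Part.dom_iff_mem.2 ⟨x0, hmem⟩)
    rw [hdec0] at hw'; cases hw'; exact hw'Y
  exact ⟨w0, hw0Y, hw0Z⟩

end PartA


/-! ### Counting and avoidance -/

lemma Zset_count (k : ℕ) :
    {u ∈ Zset | (wlist u).length ≤ k + 4}.Finite ∧
    {u ∈ Zset | (wlist u).length ≤ k + 4}.ncard ≤ k := by
  have hsub : {u ∈ Zset | (wlist u).length ≤ k + 4} ⊆
      (fun e => (zsel e).getD default) '' (Set.Iio k) := by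
    rintro u ⟨huZ, hlen⟩
    obtain ⟨e, he⟩ := mem_Zset_iff.1 huZ
    have h5 := zsel_len he
    have hek : e < k := by omega
    exact ⟨e, hek, by simp [he]⟩
  have hfin : ((fun e => (zsel e).getD default) '' (Set.Iio k)).Finite :=
    (Set.finite_Iio k).image _
  refine ⟨hfin.subset hsub, ?_⟩
  calc {u ∈ Zset | (wlist u).length ≤ k + 4}.ncard
      ≤ ((fun e => (zsel e).getD default) '' (Set.Iio k)).ncard :=
        Set.ncard_le_ncard hsub hfin
    _ ≤ (Set.Iio k).ncard := Set.ncard_image_le (Set.finite_Iio k)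
    _ = k := by
        rw [show (Set.Iio k) = ↑(Finset.range k) by ext; simp, Set.ncard_coe_finset,
          Finset.card_range]

def AvoidL (l : List Bool) : Prop := ∀ z ∈ Zset, ¬ (wlist z <:+: l)

open Classical in
noncomputable def Afin (n : ℕ) : Finset (List Bool) :=
  ((Finset.univ : Finset (Fin n → Bool)).image List.ofFn).filter AvoidL

noncomputable def fA (n : ℕ) : ℕ := (Afin n).card

lemma mem_Afin {n : ℕ} {l : List Bool} : l ∈ Afin n ↔ l.length = n ∧ AvoidL l := by
  classical
  simp only [Afin, Finset.mem_filter, Finset.mem_image, Finset.mem_univ, true_and]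
  constructor
  · rintro ⟨⟨v, rfl⟩, h⟩; exact ⟨List.length_ofFn, by convert h⟩
  · rintro ⟨hl, h⟩
    subst hl
    exact ⟨⟨l.get, List.ofFn_get l⟩, by convert h⟩

lemma avoid_of_infix {l l' : List Bool} (h : AvoidL l) (hl : l' <:+: l) : AvoidL l' :=
  fun z hz hinf => h z hz (hinf.trans hl)

lemma fA_zero : fA 0 = 1 := by
  have : Afin 0 = {([] : List Bool)} := by
    ext l
    simp only [mem_Afin, Finset.mem_singleton, List.length_eq_zero_iff]
    constructor
    · rintro ⟨rfl, -⟩; rfl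
    · rintro rfl
      refine ⟨rfl, fun z hz hinf => ?_⟩
      have := List.eq_nil_of_infix_nil hinf
      simp [wlist] at this
  rw [fA, this, Finset.card_singleton]

open Finset in
lemma fA_step : ∀ n, 3 * fA n ≤ 2 * fA (n + 1) := by
  intro n
  induction n using Nat.strong_induction_on with
  | _ n IH =>
  classical
  -- gap bound
  have hgap : ∀ d m, m + d = n → fA m * 3 ^ d ≤ fA n * 2 ^ d := by
    intro d
    induction d with
    | zero => intro m hm; simp [← hm]
    | succ d ihd =>
      intro m hm
      have h1 : 3 * fA m ≤ 2 * fA (m + 1) := IH m (by omega)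
      have h2 := ihd (m + 1) (by omega)
      calc fA m * 3 ^ (d + 1) = 3 * fA m * 3 ^ d := by ring
        _ ≤ 2 * fA (m + 1) * 3 ^ d := Nat.mul_le_mul_right _ h1
        _ = 2 * (fA (m + 1) * 3 ^ d) := by ring
        _ ≤ 2 * (fA n * 2 ^ d) := Nat.mul_le_mul_left _ h2
        _ = fA n * 2 ^ (d + 1) := by ring
  set E : Finset (List Bool) :=
    (Afin n ×ˢ (Finset.univ : Finset Bool)).image (fun p => p.1 ++ [p.2]) with hE
  have hinj0 : Function.Injective (fun p : List Bool × Bool => p.1 ++ [p.2]) := by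
    rintro ⟨l1, c1⟩ ⟨l2, c2⟩ h
    obtain ⟨h1, h2⟩ := List.append_inj' h rfl
    simp_all
  have hEcard : E.card = 2 * fA n := by
    rw [hE, Finset.card_image_of_injective _ hinj0, Finset.card_product,
      Finset.card_univ, Fintype.card_bool, fA]
    ring
  have hE_decomp : ∀ b ∈ E, ∃ w c, w ∈ Afin n ∧ b = w ++ [c] := by
    intro b hb
    obtain ⟨⟨w, c⟩, hwc, rfl⟩ := Finset.mem_image.1 hb
    exact ⟨w, c, (Finset.mem_product.1 hwc).1, rfl⟩
  have hE_len : ∀ b ∈ E, b.length = n + 1 := by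
    intro b hb
    obtain ⟨w, c, hw, rfl⟩ := hE_decomp b hb
    simp [(mem_Afin.1 hw).1]
  set good := E.filter AvoidL with hgooddef
  set bad := E.filter (fun l => ¬ AvoidL l) with hbaddef
  have hsplit : good.card + bad.card = E.card :=
    Finset.card_filter_add_card_filter_not _
  have hgood : good ⊆ Afin (n + 1) := by
    intro b hb
    obtain ⟨hbE, hav⟩ := Finset.mem_filter.1 hb
    exact mem_Afin.2 ⟨hE_len b hbE, hav⟩
  -- suffix decomposition for bad elements
  have hbadQ : ∀ b ∈ bad, ∃ e z, zsel e = some z ∧ wlist z <:+ b := by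
    intro b hb
    obtain ⟨hbE, hnav⟩ := Finset.mem_filter.1 hb
    obtain ⟨w, c, hw, rfl⟩ := hE_decomp _ hbE
    obtain ⟨hwlen, hwav⟩ := mem_Afin.1 hw
    simp only [AvoidL, not_forall] at hnav
    obtain ⟨z, hzZ, hzinf⟩ := hnav
    rw [not_not] at hzinf
    obtain ⟨p, s, hps⟩ := hzinf
    rcases s.eq_nil_or_concat with rfl | ⟨s', d, rfl⟩
    · obtain ⟨e, he⟩ := mem_Zset_iff.1 hzZ
      exact ⟨e, z, he, ⟨p, by simpa using hps⟩⟩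
    · exfalso
      have hps' : (p ++ wlist z ++ s') ++ [d] = w ++ [c] := by
        simpa [List.append_assoc] using hps
      obtain ⟨h1, -⟩ := List.append_inj' hps' rfl
      exact hwav z hzZ ⟨p, s', by simpa [List.append_assoc] using h1⟩
  set lz : ℕ → ℕ := fun e => (wlist ((zsel e).getD default)).length with hlz
  set ebf : List Bool → ℕ :=
    fun b => if h : ∃ e, ∃ z, zsel e = some z ∧ wlist z <:+ b then Nat.find h else 0 with hebf
  set tgt : ℕ → Finset (List Bool) := fun e =>
    (zsel e).elim ∅ (fun z =>
      if (wlist z).length ≤ n + 1 then Afin (n + 1 - (wlist z).length) else ∅) with htgt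
  have hebf_spec : ∀ b ∈ bad, ∃ z, zsel (ebf b) = some z ∧ wlist z <:+ b := by
    intro b hb
    have h := hbadQ b hb
    rw [hebf]
    simp only [dif_pos h]
    exact Nat.find_spec h
  have hmap : ∀ b ∈ bad,
      (⟨ebf b, b.take (n + 1 - lz (ebf b))⟩ : Σ _ : ℕ, List Bool) ∈
        (Finset.range (n + 1)).sigma fun e => tgt e := by
    intro b hb
    obtain ⟨z, hz, hsuf⟩ := hebf_spec b hb
    obtain ⟨hbE, -⟩ := Finset.mem_filter.1 hb
    have hblen : b.length = n + 1 := hE_len b hbE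
    have hlzz : lz (ebf b) = (wlist z).length := by rw [hlz]; simp [hz]
    have hlen5 : 2 * ebf b + 5 ≤ (wlist z).length := zsel_len hz
    have hzle : (wlist z).length ≤ n + 1 := by
      have := hsuf.length_le; omega
    rw [Finset.mem_sigma]
    constructor
    · show ebf b ∈ Finset.range (n + 1)
      rw [Finset.mem_range]; omega
    · show b.take (n + 1 - lz (ebf b)) ∈ tgt (ebf b)
      rw [htgt]
      simp only [hz, Option.elim_some, if_pos hzle]
      rw [hlzz]
      obtain ⟨w, c, hw, hbwc⟩ := hE_decomp _ hbE
      obtain ⟨hwlen, hwav⟩ := mem_Afin.1 hw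
      refine mem_Afin.2 ⟨by rw [List.length_take, hblen]; omega, ?_⟩
      have htake : b.take (n + 1 - (wlist z).length) = w.take (n + 1 - (wlist z).length) := by
        rw [hbwc, List.take_append_of_le_length (by omega)]
      rw [htake]
      exact avoid_of_infix hwav (w.take_prefix _).isInfix
  have hinjbad : Set.InjOn
      (fun b => (⟨ebf b, b.take (n + 1 - lz (ebf b))⟩ : Σ _ : ℕ, List Bool)) ↑bad := by
    intro b hb b' hb' heq
    obtain ⟨z, hz, hsuf⟩ := hebf_spec b (Finset.mem_coe.1 hb)
    obtain ⟨z2, hz2, hsuf2⟩ := hebf_spec b' (Finset.mem_coe.1 hb')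
    have he : ebf b = ebf b' := congrArg Sigma.fst heq
    have htk : b.take (n + 1 - lz (ebf b)) = b'.take (n + 1 - lz (ebf b')) := by
      have := congrArg Sigma.snd heq
      simpa using this
    rw [he] at hz
    have hzz : z = z2 := by
      rw [hz2] at hz; exact (Option.some.inj hz).symm
    subst hzz
    obtain ⟨q, hq⟩ := hsuf
    obtain ⟨q2, hq2⟩ := hsuf2
    have hlb : b.length = n + 1 := hE_len b (Finset.mem_filter.1 (Finset.mem_coe.1 hb)).1
    have hlb2 : b'.length = n + 1 := hE_len b' (Finset.mem_filter.1 (Finset.mem_coe.1 hb')).1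
    have hqlen : q.length = n + 1 - (wlist z).length := by
      have := congrArg List.length hq
      simp only [List.length_append] at this
      have hle := List.IsSuffix.length_le ⟨q, hq⟩
      omega
    have hq2len : q2.length = n + 1 - (wlist z).length := by
      have := congrArg List.length hq2
      simp only [List.length_append] at this
      omega
    have hlzz : lz (ebf b') = (wlist z).length := by rw [hlz]; simp [hz2]
    have t1 : b.take (n + 1 - lz (ebf b)) = q := by
      rw [he, hlzz, ← hqlen, ← hq, List.take_left]
    have t2 : b'.take (n + 1 - lz (ebf b')) = q2 := by
      rw [hlzz, ← hq2len, ← hq2, List.take_left]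
    have hqq : q = q2 := by rw [← t1, ← t2, htk]
    rw [← hq, ← hq2, hqq]
  have hbadcard : bad.card ≤ ∑ e ∈ Finset.range (n + 1), (tgt e).card := by
    have h := Finset.card_le_card_of_injOn _ hmap hinjbad
    rwa [Finset.card_sigma] at h
  -- rational estimates
  have hFnn : (0:ℚ) ≤ (fA n : ℚ) := by positivity
  have hkey : ∀ e, ((tgt e).card : ℚ) ≤ (fA n : ℚ) * (2/3 : ℚ) ^ (2*e+4) := by
    intro e
    rcases hz : zsel e with _ | z
    · have htz : tgt e = ∅ := by rw [htgt]; simp [hz]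
      rw [htz]
      simp only [Finset.card_empty, Nat.cast_zero]
      positivity
    · by_cases hle : (wlist z).length ≤ n + 1
      · have htz : tgt e = Afin (n + 1 - (wlist z).length) := by rw [htgt]; simp [hz, hle]
        rw [htz]
        have h5 := zsel_len hz
        set L := (wlist z).length with hL
        have hgap' := hgap (L - 1) (n + 1 - L) (by omega)
        have hcast : (fA (n+1-L) : ℚ) * 3 ^ (L-1) ≤ (fA n : ℚ) * 2 ^ (L-1) := by
          exact_mod_cast hgap'
        have h3pos : (0:ℚ) < 3 ^ (L-1) := by positivity
        have hstep1 : (fA (n+1-L) : ℚ) ≤ (fA n : ℚ) * (2/3) ^ (L-1) := by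
          rw [div_pow, ← mul_div_assoc, le_div_iff₀ h3pos]
          exact hcast
        have hstep2 : ((2:ℚ)/3) ^ (L-1) ≤ (2/3 : ℚ) ^ (2*e+4) :=
          pow_le_pow_of_le_one (by norm_num) (by norm_num) (by omega)
        calc ((Afin (n+1-L)).card : ℚ) ≤ (fA n : ℚ) * (2/3)^(L-1) := hstep1
          _ ≤ _ := mul_le_mul_of_nonneg_left hstep2 hFnn
      · have htz : tgt e = ∅ := by rw [htgt]; simp [hz, hle]
        rw [htz]
        simp only [Finset.card_empty, Nat.cast_zero]; positivity
  have hgeo : ∀ N, (∑ e ∈ Finset.range N, ((4:ℚ)/9) ^ e) ≤ 9/5 := by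
    intro N
    induction N with
    | zero => norm_num
    | succ N ihN =>
      rw [geom_sum_succ]
      have h := mul_le_mul_of_nonneg_left ihN (by norm_num : (0:ℚ) ≤ 4/9)
      linarith
  have hsum : (∑ e ∈ Finset.range (n+1), ((tgt e).card : ℚ)) ≤ (1/2 : ℚ) * fA n := by
    have hrw : ∀ e : ℕ, (fA n : ℚ) * (2/3)^(2*e+4) = (fA n : ℚ) * (2/3:ℚ)^4 * ((4:ℚ)/9)^e := by
      intro e
      have : ((2:ℚ)/3) ^ (2*e+4) = ((2/3:ℚ)^2)^e * (2/3:ℚ)^4 := by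
        rw [← pow_mul, ← pow_add]
      rw [this]
      norm_num
      ring
    calc ∑ e ∈ Finset.range (n+1), ((tgt e).card : ℚ)
        ≤ ∑ e ∈ Finset.range (n+1), (fA n : ℚ) * (2/3)^(2*e+4) :=
          Finset.sum_le_sum fun e _ => hkey e
      _ = (fA n : ℚ) * (2/3:ℚ)^4 * ∑ e ∈ Finset.range (n+1), ((4:ℚ)/9)^e := by
          rw [Finset.mul_sum]
          exact Finset.sum_congr rfl fun e _ => hrw e
      _ ≤ (fA n : ℚ) * (2/3:ℚ)^4 * (9/5) := by
          apply mul_le_mul_of_nonneg_left (hgeo _) (by positivity)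
      _ ≤ (1/2 : ℚ) * fA n := by nlinarith [hFnn]
  have h2q : (good.card : ℚ) ≤ (fA (n+1) : ℚ) := by
    exact_mod_cast Finset.card_le_card hgood
  have h3q : (bad.card : ℚ) ≤ ∑ e ∈ Finset.range (n+1), ((tgt e).card : ℚ) := by
    have := hbadcard

    exact_mod_cast this
  have h0q : (good.card : ℚ) + (bad.card : ℚ) = 2 * (fA n : ℚ) := by
    have h1 : good.card + bad.card = 2 * fA n := by rw [hsplit, hEcard]
    exact_mod_cast h1
  have hfin : (3:ℚ) * (fA n : ℚ) ≤ 2 * (fA (n+1) : ℚ) := by linarith [hsum, h2q, h3q, h0q]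
  exact_mod_cast hfin

lemma fA_pos : ∀ n, 1 ≤ fA n := by
  intro n
  induction n with
  | zero => rw [fA_zero]
  | succ n ih => have := fA_step n; omega

lemma Subword_iff_infix {y x : Word} : Subword y x ↔ wlist y <:+: wlist x := by
  constructor <;> rintro ⟨p, s, h⟩ <;> exact ⟨p, s, h.symm⟩

/-- The upward closure of `Zset` under the subword relation. -/
def Xup : Set Word := {u : Word | ∃ z ∈ Zset, Subword z u}

lemma exists_avoider (n : ℕ) : ∃ u : Word, (wlist u).length = n + 1 ∧ u ∈ Xupᶜ := by
  have hpos : 0 < (Afin (n + 1)).card := fA_pos (n + 1)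
  obtain ⟨l, hl⟩ := Finset.card_pos.1 hpos
  obtain ⟨hlen, hav⟩ := mem_Afin.1 hl
  rcases l with _ | ⟨a, t⟩
  · simp at hlen
  · refine ⟨(a, t), by simpa [wlist] using hlen, ?_⟩
    rintro ⟨z, hzZ, hsub⟩
    exact hav z hzZ (by simpa [wlist] using Subword_iff_infix.1 hsub)

noncomputable def avoider (n : ℕ) : Word := (exists_avoider n).choose

lemma avoider_spec (n : ℕ) : (wlist (avoider n)).length = n + 1 ∧ avoider n ∈ Xupᶜ :=
  (exists_avoider n).choose_spec

lemma Xup_compl_infinite : Xupᶜ.Infinite := by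
  have hinj : Function.Injective avoider := by
    intro m n hmn
    have h1 := (avoider_spec m).1
    have h2 := (avoider_spec n).1
    rw [hmn] at h1
    omega
  exact Set.infinite_of_injective_forall_mem hinj fun n => (avoider_spec n).2

lemma Zset_subset_Xup : Zset ⊆ Xup :=
  fun z hz => ⟨z, hz, ⟨[], [], by simp⟩⟩

lemma Zset_compl_infinite : Zsetᶜ.Infinite :=
  Xup_compl_infinite.mono (Set.compl_subset_compl.2 Zset_subset_Xup)

lemma uniRel_class_eq {u : Word} (hu : u ∈ Xupᶜ) :
    {y | uniRel Xup u y} = {u} := by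
  ext v
  simp only [uniRel, Set.mem_setOf_eq, Set.mem_singleton_iff]
  constructor
  · rintro (rfl | ⟨huX, -⟩)
    · rfl
    · exact absurd huX hu
  · rintro rfl; exact Or.inl rfl

lemma infClasses : InfiniteClassesW (uniRel Xup) := by
  have hsub : (fun u => {y | uniRel Xup u y}) '' Xupᶜ ⊆
      {s : Set Word | ∃ x, s = {y | uniRel Xup x y}} := by
    rintro s ⟨u, -, rfl⟩
    exact ⟨u, rfl⟩
  have hinj : Set.InjOn (fun u => {y | uniRel Xup u y}) Xupᶜ := by
    intro u hu u' hu' h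
    have h1 := uniRel_class_eq hu
    have h2 := uniRel_class_eq hu'
    simp only [h1, h2] at h
    exact Set.singleton_eq_singleton_iff.1 h
  exact (Xup_compl_infinite.image hinj).mono hsub

lemma re_and_ne {p : Word → Prop} (hp : REPred p) (t1 : Word) :
    REPred fun a => p a ∧ a ≠ t1 := by
  have hq : ComputablePred fun a : Word => a ≠ t1 := by
    refine ⟨inferInstance, ?_⟩
    have h1 : Primrec fun a : Word => !(decide (a = t1)) :=
      Primrec.not.comp (Primrec.eq.comp Primrec.id (Primrec.const t1)).decide
    exact (h1.of_eq fun a => by simp).to_comp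
  have hq' : REPred fun a : Word => a ≠ t1 := hq.to_re
  unfold REPred at hp hq' ⊢
  have comp2 : Partrec fun pr : Word × Unit =>
      Part.assert (pr.1 ≠ t1) fun _ => Part.some () := hq'.comp Computable.fst
  have hb := hp.bind (g := fun a (_ : Unit) => Part.assert (a ≠ t1) fun _ => Part.some ()) comp2
  apply hb.of_eq fun a => ?_
  apply part_unit_ext
  constructor
  · intro hd
    obtain ⟨x, hx⟩ := Part.dom_iff_mem.1 hd
    obtain ⟨u, hu, hx2⟩ := Part.mem_bind_iff.1 hx
    obtain ⟨hpa, -⟩ := Part.mem_assert_iff.1 hu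
    obtain ⟨hne, -⟩ := Part.mem_assert_iff.1 hx2
    exact Part.dom_iff_mem.2 ⟨(), Part.mem_assert_iff.2 ⟨⟨hpa, hne⟩, Part.mem_some _⟩⟩
  · intro hd
    obtain ⟨x, hx⟩ := Part.dom_iff_mem.1 hd
    obtain ⟨⟨hpa, hne⟩, -⟩ := Part.mem_assert_iff.1 hx
    exact Part.dom_iff_mem.2 ⟨(), Part.mem_bind_iff.2 ⟨(),
      Part.mem_assert_iff.2 ⟨hpa, Part.mem_some _⟩,
      Part.mem_assert_iff.2 ⟨hne, Part.mem_some _⟩⟩⟩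

lemma dark_transversal : ∀ T : Set Word, REPred (· ∈ T) →
    IsTransversalW (uniRel Xup) T → T.Finite := by
  intro T hre htr
  by_contra hfin
  have hTinf : T.Infinite := hfin
  obtain ⟨t1, ht1T, ht1Z⟩ := Zset_meets hre hTinf
  have hre2 : REPred (· ∈ {a : Word | a ∈ T ∧ a ≠ t1}) := re_and_ne hre t1
  have heq : {a : Word | a ∈ T ∧ a ≠ t1} = T \ {t1} := by
    ext a; simp [Set.mem_diff]
  have hinf2 : {a : Word | a ∈ T ∧ a ≠ t1}.Infinite := by
    rw [heq]; exact hTinf.diff (Set.finite_singleton t1)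
  obtain ⟨t2, ht2m, ht2Z⟩ := Zset_meets hre2 hinf2
  obtain ⟨ht2T, ht2ne⟩ := ht2m
  exact htr t1 ht1T t2 ht2T (Ne.symm ht2ne)
    (Or.inr ⟨Zset_subset_Xup ht1Z, Zset_subset_Xup ht2Z⟩)

/-- there is a simple set Z of words with at most k words of
length ≤ k+4 for each k; its upward closure Z̄ (under the subword relation) is
coinfinite, and the unidimensional ceer R_{Z̄} is dark. -/
theorem exists_simple_set_with_dark_upward_closure :
    ∃ Z : Set Word, SimpleSetW Z ∧
      (∀ k : ℕ, {u ∈ Z | (wlist u).length ≤ k + 4}.Finite ∧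
        {u ∈ Z | (wlist u).length ≤ k + 4}.ncard ≤ k) ∧
      ({u : Word | ∃ z ∈ Z, Subword z u}ᶜ.Infinite ∧
        DarkW (uniRel {u : Word | ∃ z ∈ Z, Subword z u})) := by
  refine ⟨Zset, ⟨Zset_re, Zset_compl_infinite, fun Y hY hYinf => Zset_meets hY hYinf⟩,
    fun k => Zset_count k, ?_, ?_, ?_⟩
  · exact Xup_compl_infinite
  · exact infClasses
  · exact dark_transversal
end
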